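/- arXiv:1204.1687 — 3 statements merged into one kernel-verified Lean document; each statement's English description precedes it below -/
import Mathlib

section
/- Suppose M_d(β) is positive semidefinite, recursively generated, and its column relations are generated entirely by X^n = p(X,Y) and Y^m = q(X,Y) via recursiveness and linearity, and let B(d+1) be the unique block such that (M_d B(d+1)) has moment-matrix block structure (entries of total index degree ≤ 2d equal the corresponding β_{ij}, and the degree-d row block is Hankel) and is recursively generated with column space of B(d+1) contained in that of M_d. Then there exists a unique symmetric Hankel matrix C(d+1) indexed by the monomials of degree d+1 (entries depending only on the sums of the two bi-indices) such that M_{d+1} := [[M_d, B(d+1)], [B(d+1)^T, C(d+1)]] is the moment matrix M_{d+1}(β') of an extension β' of β and is an RG extension of M_d(β). -/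
open Finset Matrix

noncomputable section

/-- Monomial indices of degree at most `d` (the monomial `x^i y^j` is the pair `(i,j)`). -/
abbrev Idx (d : ℕ) : Type := {ij : ℕ × ℕ // ij.1 + ij.2 ≤ d}

/-- Monomial indices of degree exactly `e`. -/
abbrev Jdx (e : ℕ) : Type := {ij : ℕ × ℕ // ij.1 + ij.2 = e}

instance (d : ℕ) : Fintype (Idx d) :=
  Fintype.subtype
    ((Finset.range (d + 1) ×ˢ Finset.range (d + 1)).filter fun ij => ij.1 + ij.2 ≤ d)
    (by
      rintro ⟨a, b⟩
      simp only [Finset.mem_filter, Finset.mem_product, Finset.mem_range]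
      omega)

instance (e : ℕ) : Fintype (Jdx e) :=
  Fintype.subtype
    ((Finset.range (e + 1) ×ˢ Finset.range (e + 1)).filter fun ij => ij.1 + ij.2 = e)
    (by
      rintro ⟨a, b⟩
      simp only [Finset.mem_filter, Finset.mem_product, Finset.mem_range]
      omega)

/-- The moment matrix `M_d(β)`: rows and columns are indexed by monomials of degree ≤ d,
with entry in row `(i,j)`, column `(k,l)` equal to `β (i+k) (j+l)`. -/
def momentMatrix (d : ℕ) (β : ℕ → ℕ → ℝ) : Matrix (Idx d) (Idx d) ℝ :=
  Matrix.of fun r c => β (r.1.1 + c.1.1) (r.1.2 + c.1.2)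

/-- The coefficient vector (truncated to degree ≤ d) of the polynomial with
coefficient function `a`. -/
def coeffVec (d : ℕ) (a : ℕ → ℕ → ℝ) : Idx d → ℝ := fun c => a c.1.1 c.1.2

/-- `p(X,Y)`: the linear combination of the columns of `M_d(β)` given by the
coefficient function `a` of `p`. -/
def polyCol (d : ℕ) (β : ℕ → ℕ → ℝ) (a : ℕ → ℕ → ℝ) : Idx d → ℝ :=
  momentMatrix d β *ᵥ coeffVec d a

/-- Coefficient function of the monomial `x^u y^v`. -/
def monoC (u v : ℕ) : ℕ → ℕ → ℝ := fun k l => if k = u ∧ l = v then 1 else 0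

/-- Coefficient function of `x^u y^v * p`, where `p` has coefficient function `a`. -/
def shiftC (u v : ℕ) (a : ℕ → ℕ → ℝ) : ℕ → ℕ → ℝ :=
  fun k l => if u ≤ k ∧ v ≤ l then a (k - u) (l - v) else 0

/-- The polynomial with coefficient function `a` has (total) degree at most `D`. -/
def DegLE (a : ℕ → ℕ → ℝ) (D : ℕ) : Prop := ∀ k l : ℕ, D < k + l → a k l = 0

/-- Coefficient function of the product of two polynomials. -/
def cMul (a b : ℕ → ℕ → ℝ) : ℕ → ℕ → ℝ := fun k l =>
  ∑ i ∈ Finset.range (k + 1), ∑ j ∈ Finset.range (l + 1), a i j * b (k - i) (l - j)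

/-- `M_d(β)` is recursively generated: whenever `p, q, pq` all have degree ≤ d and
`p(X,Y) = 0`, also `(pq)(X,Y) = 0`. -/
def RecursivelyGenerated (d : ℕ) (β : ℕ → ℕ → ℝ) : Prop :=
  ∀ a b : ℕ → ℕ → ℝ, DegLE a d → DegLE b d → DegLE (cMul a b) d →
    polyCol d β a = 0 → polyCol d β (cMul a b) = 0

/-- The column relations of `M_d(β)` are generated entirely by `X^n = p(X,Y)` and
`Y^m = q(X,Y)` via recursiveness and linearity. -/
def GeneratedBy (d n m : ℕ) (β p q : ℕ → ℕ → ℝ) : Prop :=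
  1 ≤ n ∧ n ≤ d ∧ 1 ≤ m ∧ m ≤ d ∧
  DegLE p (n - 1) ∧ DegLE q m ∧ q 0 m = 0 ∧
  polyCol d β (monoC n 0 - p) = 0 ∧
  polyCol d β (monoC 0 m - q) = 0 ∧
  ∀ v : Idx d → ℝ,
    momentMatrix d β *ᵥ v = 0 ↔
      v ∈ Submodule.span ℝ
        {w : Idx d → ℝ |
          (∃ i j : ℕ, n + i + j ≤ d ∧ w = coeffVec d (shiftC i j (monoC n 0 - p))) ∨
          (∃ k l : ℕ, m + k + l ≤ d ∧ w = coeffVec d (shiftC k l (monoC 0 m - q)))}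

/-- `β'` (a multisequence of degree `2d+2` extending `β`) gives an RG extension
`M_{d+1}(β')` of `M_d(β)`: the column space of `B(d+1)` is contained in that of `M_d`,
every column relation of `M_d` extends to `M_{d+1}`, and `M_{d+1}` is recursively
generated. -/
def RGExtension (d : ℕ) (β β' : ℕ → ℕ → ℝ) : Prop :=
  (∀ i j : ℕ, i + j ≤ 2 * d → β' i j = β i j) ∧
  (∀ c : Jdx (d + 1), ∃ v : Idx d → ℝ,
      (fun r : Idx d => β' (r.1.1 + c.1.1) (r.1.2 + c.1.2)) = momentMatrix d β *ᵥ v) ∧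
  (∀ a : ℕ → ℕ → ℝ, DegLE a d → polyCol d β a = 0 → polyCol (d + 1) β' a = 0) ∧
  RecursivelyGenerated (d + 1) β'

/-- The `(row (k,l), column (i,j))` entry of the augmented matrix `(M_d  B(d+1))`,
where rows have degree ≤ d and columns degree ≤ d+1 (value 0 outside this range). -/
def augEntry (d : ℕ) (β : ℕ → ℕ → ℝ) (B : Matrix (Idx d) (Jdx (d + 1)) ℝ)
    (k l i j : ℕ) : ℝ :=
  if hr : k + l ≤ d then
    if i + j ≤ d then β (k + i) (l + j)
    else if hc : i + j = d + 1 then B ⟨(k, l), hr⟩ ⟨(i, j), hc⟩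
    else 0
  else 0

/-- The column relation `w(X,Y) = 0` holds among the columns of `(M_d  B(d+1))`. -/
def AugRel (d : ℕ) (β : ℕ → ℕ → ℝ) (B : Matrix (Idx d) (Jdx (d + 1)) ℝ)
    (w : ℕ → ℕ → ℝ) : Prop :=
  ∀ k l : ℕ, k + l ≤ d →
    ∑ c : Idx (d + 1), w c.1.1 c.1.2 * augEntry d β B k l c.1.1 c.1.2 = 0

/-- `(M_d  B(d+1))` is recursively generated for polynomials of degree ≤ d+1. -/
def AugRecGen (d : ℕ) (β : ℕ → ℕ → ℝ) (B : Matrix (Idx d) (Jdx (d + 1)) ℝ) : Prop :=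
  ∀ a b : ℕ → ℕ → ℝ, DegLE a (d + 1) → DegLE b (d + 1) → DegLE (cMul a b) (d + 1) →
    AugRel d β B a → AugRel d β B (cMul a b)


-- ===================== auxiliary development =====================

private lemma meas1 (E e' j j' : ℕ) (h1 : e' < E) (h2 : j' ≤ e') :
    e' * e' + j' < E * E + j := by
  have ha : e' * e' + j' < (e' + 1) * (e' + 1) := by nlinarith
  have hb : (e' + 1) * (e' + 1) ≤ E * E := Nat.mul_le_mul h1 h1
  omega

private lemma meas2 (E e' j j' : ℕ) (h1 : e' ≤ E) (h2 : j' < j) :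
    e' * e' + j' < E * E + j := by
  have : e' * e' ≤ E * E := Nat.mul_le_mul h1 h1
  omega

/-- The canonical extension of the Riesz functional, at the monomial `x^i y^j`. -/
def sfun (n m : ℕ) (β p q : ℕ → ℕ → ℝ) : ℕ → ℕ → ℝ := fun i j =>
  if h1 : n ≤ i then
    ∑ b ∈ (Finset.range n).attach, ∑ a ∈ (Finset.range (n - b.1)).attach,
      p a.1 b.1 * sfun n m β p q (i - n + a.1) (j + b.1)
  else if h2 : m ≤ j then
    ∑ b ∈ (Finset.range m).attach, ∑ a ∈ (Finset.range (m + 1 - b.1)).attach,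
      q a.1 b.1 * sfun n m β p q (i + a.1) (j - m + b.1)
  else β i j
termination_by i j => (i + j) * (i + j) + j
decreasing_by
  · have hb := b.2; have ha := a.2
    simp only [Finset.mem_range] at hb ha
    apply meas1 <;> omega
  · have hb := b.2; have ha := a.2
    simp only [Finset.mem_range] at hb ha
    apply meas2 <;> omega

section Toolkit

/-- Sum of a polynomial coefficient function against values `g`, over a square window. -/
def lamB (g f : ℕ → ℕ → ℝ) (A : ℕ) : ℝ :=
  ∑ k ∈ Finset.range A, ∑ l ∈ Finset.range A, f k l * g k l

lemma sum_range_shrink (X : ℕ → ℝ) {B W : ℕ} (h : B ≤ W)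
    (h0 : ∀ i, B ≤ i → X i = 0) :
    ∑ i ∈ Finset.range W, X i = ∑ i ∈ Finset.range B, X i :=
  (Finset.sum_subset (Finset.range_subset_range.mpr h)
    (fun i _ hni => h0 i (by simpa using hni))).symm

lemma sum_range_ext (X : ℕ → ℝ) {B W : ℕ} (h : B ≤ W) :
    ∑ i ∈ Finset.range B, X i = ∑ i ∈ Finset.range W, (if i < B then X i else 0) := by
  calc ∑ i ∈ Finset.range B, X i
      = ∑ i ∈ Finset.range B, (if i < B then X i else 0) :=
        Finset.sum_congr rfl fun i hi => by
          simp only [Finset.mem_range] at hi; rw [if_pos hi]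
    _ = ∑ i ∈ Finset.range W, (if i < B then X i else 0) :=
        Finset.sum_subset (Finset.range_subset_range.mpr h) fun i _ hni => by
          simp only [Finset.mem_range] at hni; rw [if_neg hni]

lemma lamB_window {g f : ℕ → ℕ → ℝ} {A B : ℕ}
    (hf : ∀ k l, f k l ≠ 0 → k < A ∧ l < A) (hAB : A ≤ B) :
    lamB g f B = lamB g f A := by
  unfold lamB
  rw [sum_range_shrink _ hAB]
  · refine Finset.sum_congr rfl fun k _ => ?_
    refine sum_range_shrink _ hAB fun l hl => ?_
    by_cases h : f k l = 0
    · rw [h, zero_mul]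
    · exact absurd (hf k l h).2 (by omega)
  · intro k hk
    refine Finset.sum_eq_zero fun l _ => ?_
    by_cases h : f k l = 0
    · rw [h, zero_mul]
    · exact absurd (hf k l h).1 (by omega)

lemma lamB_sub (g f₁ f₂ : ℕ → ℕ → ℝ) (A : ℕ) :
    lamB g (f₁ - f₂) A = lamB g f₁ A - lamB g f₂ A := by
  simp [lamB, sub_mul, Finset.sum_sub_distrib]

lemma lamB_add (g f₁ f₂ : ℕ → ℕ → ℝ) (A : ℕ) :
    lamB g (f₁ + f₂) A = lamB g f₁ A + lamB g f₂ A := by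
  simp [lamB, add_mul, Finset.sum_add_distrib]

lemma lamB_smul (g f : ℕ → ℕ → ℝ) (c : ℝ) (A : ℕ) :
    lamB g (c • f) A = c * lamB g f A := by
  simp [lamB, Finset.mul_sum, mul_assoc]

lemma lamB_zero (g : ℕ → ℕ → ℝ) (A : ℕ) : lamB g (0 : ℕ → ℕ → ℝ) A = 0 := by
  simp [lamB]

lemma lamB_monoC (g : ℕ → ℕ → ℝ) {u v A : ℕ} (hu : u < A) (hv : v < A) :
    lamB g (monoC u v) A = g u v := by
  unfold lamB monoC
  have : ∀ k l : ℕ, (if k = u ∧ l = v then (1:ℝ) else 0) * g k l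
      = if l = v then (if k = u then g u v else 0) else 0 := by
    intro k l
    by_cases h1 : k = u <;> by_cases h2 : l = v <;> simp [h1, h2]
  simp_rw [this]
  rw [Finset.sum_congr rfl (fun k _ => Finset.sum_ite_eq' (Finset.range A) v
    (fun _ => if k = u then g u v else 0))]
  simp only [Finset.mem_range, hv, if_true]
  rw [Finset.sum_ite_eq' (Finset.range A) u (fun _ => g u v)]
  simp [hu]

lemma sum_shift_one (Ψ : ℕ → ℝ) (u A : ℕ) (hΨ : ∀ j, Ψ j ≠ 0 → u + j < A) :
    ∑ k ∈ Finset.range A, (if u ≤ k then Ψ (k - u) else 0)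
      = ∑ j ∈ Finset.range A, Ψ j := by
  rw [← Finset.sum_filter]
  have hfil : (Finset.range A).filter (fun k => u ≤ k) = Finset.Ico u A := by
    ext k; simp [Finset.mem_Ico, Finset.mem_filter, Finset.mem_range]; omega
  rw [hfil, Finset.sum_Ico_eq_sum_range]
  have h1 : ∀ i, Ψ (u + i - u) = Ψ i := fun i => by congr 1; omega
  simp_rw [h1]
  refine Finset.sum_subset (Finset.range_subset_range.mpr (by omega)) fun j _ hnj => ?_
  by_contra h0
  have := hΨ j h0
  simp only [Finset.mem_range] at hnj
  omega

lemma lamB_shift (g f : ℕ → ℕ → ℝ) {u v A : ℕ}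
    (hf : ∀ k l, f k l ≠ 0 → u + k < A ∧ v + l < A) :
    lamB g (shiftC u v f) A = lamB (fun k l => g (u + k) (v + l)) f A := by
  unfold lamB shiftC
  have key : ∀ k l : ℕ, (if u ≤ k ∧ v ≤ l then f (k - u) (l - v) else 0) * g k l
      = if u ≤ k then (if v ≤ l then f (k - u) (l - v) * g (u + (k - u)) (v + (l - v)) else 0)
        else 0 := by
    intro k l
    by_cases h1 : u ≤ k <;> by_cases h2 : v ≤ l
    · rw [Nat.add_sub_cancel' h1, Nat.add_sub_cancel' h2]; simp [h1, h2]
    · simp [h1, h2]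
    · simp [h1, h2]
    · simp [h1, h2]
  simp_rw [key]
  have inner : ∀ k : ℕ, u ≤ k →
      (∑ l ∈ Finset.range A, if v ≤ l then f (k - u) (l - v) * g (u + (k - u)) (v + (l - v)) else 0)
      = ∑ l ∈ Finset.range A, f (k - u) l * g (u + (k - u)) (v + l) := by
    intro k _
    exact sum_shift_one (fun j => f (k - u) j * g (u + (k - u)) (v + j)) v A
      (fun j hj => (hf (k - u) j (fun h => hj (by simp [h]))).2)
  calc ∑ k ∈ Finset.range A, ∑ l ∈ Finset.range A,
        (if u ≤ k then (if v ≤ l then f (k - u) (l - v) * g (u + (k - u)) (v + (l - v)) else 0) else 0)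
      = ∑ k ∈ Finset.range A,
        (if u ≤ k then (∑ l ∈ Finset.range A, f (k - u) l * g (u + (k - u)) (v + l)) else 0) := by
        refine Finset.sum_congr rfl fun k _ => ?_
        by_cases hk : u ≤ k
        · simp only [hk, if_true]; exact inner k hk
        · simp [hk]
    _ = ∑ k ∈ Finset.range A, ∑ l ∈ Finset.range A, f k l * g (u + k) (v + l) := by
        exact sum_shift_one (fun i => ∑ l ∈ Finset.range A, f i l * g (u + i) (v + l)) u A
          (fun i hi => by
            obtain ⟨l, _, hl⟩ := Finset.exists_ne_zero_of_sum_ne_zero hi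
            exact (hf i l (fun h => hl (by simp [h]))).1)

end Toolkit

section Toolkit2

lemma sum4_swap (F : ℕ → ℕ → ℕ → ℕ → ℝ) (s t : Finset ℕ) :
    ∑ K ∈ s, ∑ L ∈ s, ∑ k ∈ t, ∑ l ∈ t, F K L k l
      = ∑ k ∈ t, ∑ l ∈ t, ∑ K ∈ s, ∑ L ∈ s, F K L k l := by
  calc ∑ K ∈ s, ∑ L ∈ s, ∑ k ∈ t, ∑ l ∈ t, F K L k l
      = ∑ K ∈ s, ∑ k ∈ t, ∑ L ∈ s, ∑ l ∈ t, F K L k l :=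
        Finset.sum_congr rfl fun K _ => Finset.sum_comm
    _ = ∑ k ∈ t, ∑ K ∈ s, ∑ L ∈ s, ∑ l ∈ t, F K L k l := Finset.sum_comm
    _ = ∑ k ∈ t, ∑ K ∈ s, ∑ l ∈ t, ∑ L ∈ s, F K L k l :=
        Finset.sum_congr rfl fun k _ => Finset.sum_congr rfl fun K _ => Finset.sum_comm
    _ = ∑ k ∈ t, ∑ l ∈ t, ∑ K ∈ s, ∑ L ∈ s, F K L k l :=
        Finset.sum_congr rfl fun k _ => Finset.sum_comm

lemma cMul_monoC_right (f : ℕ → ℕ → ℝ) (u v : ℕ) :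
    cMul f (monoC u v) = shiftC u v f := by
  funext K L
  unfold cMul shiftC monoC
  rw [← Finset.sum_product']
  by_cases h : u ≤ K ∧ v ≤ L
  · rw [if_pos h]
    rw [Finset.sum_eq_single (K - u, L - v)]
    · rw [if_pos ⟨by omega, by omega⟩, mul_one]
    · rintro ⟨x1, x2⟩ hx hne
      simp only [Finset.mem_product, Finset.mem_range] at hx
      rw [if_neg, mul_zero]
      rintro ⟨h1, h2⟩
      exact hne (by simp only [Prod.mk.injEq]; omega)
    · intro hx
      exact absurd (by simp only [Finset.mem_product, Finset.mem_range]; omega) hx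
  · rw [if_neg h]
    refine Finset.sum_eq_zero fun x hx => ?_
    simp only [Finset.mem_product, Finset.mem_range] at hx
    rw [if_neg, mul_zero]
    rintro ⟨h1, h2⟩
    exact h ⟨by omega, by omega⟩

lemma cMul_const (a b : ℕ → ℕ → ℝ) (hb : ∀ k l, 1 ≤ k + l → b k l = 0) :
    cMul a b = fun K L => a K L * b 0 0 := by
  funext K L
  unfold cMul
  rw [← Finset.sum_product']
  rw [Finset.sum_eq_single (K, L)]
  · rw [Nat.sub_self, Nat.sub_self]
  · rintro ⟨x1, x2⟩ hx hne
    simp only [Finset.mem_product, Finset.mem_range] at hx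
    have hne' : ¬(x1 = K ∧ x2 = L) := by
      intro hc; exact hne (by simp [Prod.mk.injEq, hc.1, hc.2])
    rw [hb (K - x1) (L - x2) (by omega), mul_zero]
  · intro hx
    exact absurd (by simp only [Finset.mem_product, Finset.mem_range]; omega) hx

lemma cMul_decomp (f h : ℕ → ℕ → ℝ) {A : ℕ}
    (hh : ∀ k l, h k l ≠ 0 → k < A ∧ l < A) :
    cMul f h = fun K L => ∑ k ∈ Finset.range A, ∑ l ∈ Finset.range A,
      h k l * shiftC k l f K L := by
  funext K L
  unfold cMul shiftC
  rw [← Finset.sum_product', ← Finset.sum_product']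
  set W : ℕ := max A (max (K + 1) (L + 1)) with hWdef
  have hsub1 : Finset.range (K+1) ×ˢ Finset.range (L+1) ⊆ Finset.range W ×ˢ Finset.range W :=
    Finset.product_subset_product (Finset.range_subset_range.mpr (by omega))
      (Finset.range_subset_range.mpr (by omega))
  have hsub2 : Finset.range A ×ˢ Finset.range A ⊆ Finset.range W ×ˢ Finset.range W :=
    Finset.product_subset_product (Finset.range_subset_range.mpr (by omega))
      (Finset.range_subset_range.mpr (by omega))
  set G : ℕ × ℕ → ℝ :=
    fun x => h x.1 x.2 * (if x.1 ≤ K ∧ x.2 ≤ L then f (K - x.1) (L - x.2) else 0) with hGdef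
  have lhs_eq : ∑ x ∈ Finset.range (K+1) ×ˢ Finset.range (L+1), f x.1 x.2 * h (K - x.1) (L - x.2)
      = ∑ x ∈ Finset.range (K+1) ×ˢ Finset.range (L+1), f (K - x.1) (L - x.2) * h x.1 x.2 := by
    refine Finset.sum_nbij' (fun x => (K - x.1, L - x.2)) (fun x => (K - x.1, L - x.2))
      ?_ ?_ ?_ ?_ ?_
    · rintro ⟨x1, x2⟩ hx
      simp only [Finset.mem_product, Finset.mem_range] at hx ⊢
      omega
    · rintro ⟨x1, x2⟩ hx
      simp only [Finset.mem_product, Finset.mem_range] at hx ⊢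
      omega
    · rintro ⟨x1, x2⟩ hx
      simp only [Finset.mem_product, Finset.mem_range] at hx
      simp only [Prod.mk.injEq]
      omega
    · rintro ⟨x1, x2⟩ hx
      simp only [Finset.mem_product, Finset.mem_range] at hx
      simp only [Prod.mk.injEq]
      omega
    · rintro ⟨x1, x2⟩ hx
      simp only [Finset.mem_product, Finset.mem_range] at hx
      simp only
      congr 2 <;> omega
  have lhs_ext : ∑ x ∈ Finset.range (K+1) ×ˢ Finset.range (L+1), f (K - x.1) (L - x.2) * h x.1 x.2
      = ∑ x ∈ Finset.range W ×ˢ Finset.range W, G x := by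
    calc ∑ x ∈ Finset.range (K+1) ×ˢ Finset.range (L+1), f (K - x.1) (L - x.2) * h x.1 x.2
        = ∑ x ∈ Finset.range (K+1) ×ˢ Finset.range (L+1), G x := by
          refine Finset.sum_congr rfl fun x hx => ?_
          simp only [Finset.mem_product, Finset.mem_range] at hx
          rw [hGdef]
          simp only
          rw [if_pos ⟨by omega, by omega⟩, mul_comm]
      _ = ∑ x ∈ Finset.range W ×ˢ Finset.range W, G x := by
          refine Finset.sum_subset hsub1 fun x _ hnx => ?_
          simp only [Finset.mem_product, Finset.mem_range] at hnx
          rw [hGdef]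
          simp only
          rw [if_neg (by omega), mul_zero]
  have rhs_ext : ∑ x ∈ Finset.range A ×ˢ Finset.range A,
        h x.1 x.2 * (if x.1 ≤ K ∧ x.2 ≤ L then f (K - x.1) (L - x.2) else 0)
      = ∑ x ∈ Finset.range W ×ˢ Finset.range W, G x := by
    refine Finset.sum_subset hsub2 fun x _ hnx => ?_
    simp only [Finset.mem_product, Finset.mem_range] at hnx
    have h0 : h x.1 x.2 = 0 := by
      by_contra hc
      have := hh x.1 x.2 hc
      omega
    show h x.1 x.2 * _ = 0
    rw [h0, zero_mul]
  rw [lhs_eq, lhs_ext, ← rhs_ext]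

lemma lamB_cMul (g f h : ℕ → ℕ → ℝ) {A : ℕ}
    (hf : ∀ k l, f k l ≠ 0 → k < A ∧ l < A)
    (hh : ∀ k l, h k l ≠ 0 → k < A ∧ l < A) :
    lamB g (cMul f h) (2 * A) = ∑ k ∈ Finset.range A, ∑ l ∈ Finset.range A,
      h k l * lamB (fun a b => g (k + a) (l + b)) f A := by
  rw [cMul_decomp f h hh]
  unfold lamB
  simp_rw [Finset.sum_mul]
  rw [sum4_swap (fun K L k l => h k l * shiftC k l f K L * g K L)]
  refine Finset.sum_congr rfl fun k hk => Finset.sum_congr rfl fun l hl => ?_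
  simp only [Finset.mem_range] at hk hl
  have step : ∑ K ∈ Finset.range (2*A), ∑ L ∈ Finset.range (2*A),
      h k l * shiftC k l f K L * g K L
      = h k l * lamB g (shiftC k l f) (2*A) := by
    unfold lamB
    rw [Finset.mul_sum]
    refine Finset.sum_congr rfl fun K _ => ?_
    rw [Finset.mul_sum]
    refine Finset.sum_congr rfl fun L _ => by ring
  rw [step, lamB_shift g f (fun a b hab => ⟨by have := (hf a b hab).1; omega,
    by have := (hf a b hab).2; omega⟩)]
  rw [lamB_window (A := A) (fun a b hab => hf a b hab) (by omega)]
  rfl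

end Toolkit2

section SfunLemmas

variable {n m : ℕ} {β p q : ℕ → ℕ → ℝ}

lemma sfun_eq_x {i j : ℕ} (h : n ≤ i) :
    sfun n m β p q i j = ∑ b ∈ Finset.range n, ∑ a ∈ Finset.range (n - b),
      p a b * sfun n m β p q (i - n + a) (j + b) := by
  rw [sfun, dif_pos h]
  rw [← Finset.sum_attach (Finset.range n)
    (fun b => ∑ a ∈ Finset.range (n - b), p a b * sfun n m β p q (i - n + a) (j + b))]
  exact Finset.sum_congr rfl fun b _ => Finset.sum_attach (Finset.range (n - b.1))
    (fun a => p a b.1 * sfun n m β p q (i - n + a) (j + b.1))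

lemma sfun_eq_y {i j : ℕ} (h1 : ¬ n ≤ i) (h2 : m ≤ j) :
    sfun n m β p q i j = ∑ b ∈ Finset.range m, ∑ a ∈ Finset.range (m + 1 - b),
      q a b * sfun n m β p q (i + a) (j - m + b) := by
  rw [sfun, dif_neg h1, dif_pos h2]
  rw [← Finset.sum_attach (Finset.range m)
    (fun b => ∑ a ∈ Finset.range (m + 1 - b), q a b * sfun n m β p q (i + a) (j - m + b))]
  exact Finset.sum_congr rfl fun b _ => Finset.sum_attach (Finset.range (m + 1 - b.1))
    (fun a => q a b.1 * sfun n m β p q (i + a) (j - m + b.1))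

lemma sfun_eq_base {i j : ℕ} (h1 : ¬ n ≤ i) (h2 : ¬ m ≤ j) :
    sfun n m β p q i j = β i j := by
  rw [sfun, dif_neg h1, dif_neg h2]

end SfunLemmas

/-- Square-window weighted sum. -/
def sqSum (c g : ℕ → ℕ → ℝ) (W u v : ℕ) : ℝ :=
  ∑ a ∈ Finset.range W, ∑ b ∈ Finset.range W, c a b * g (u + a) (v + b)

section Tri2Sq

lemma tri2sq_p {n W : ℕ} {p : ℕ → ℕ → ℝ} (hp : DegLE p (n - 1)) (hn : 1 ≤ n) (hW : n ≤ W)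
    (φ : ℕ → ℕ → ℝ) :
    ∑ b ∈ Finset.range n, ∑ a ∈ Finset.range (n - b), p a b * φ a b
      = ∑ a ∈ Finset.range W, ∑ b ∈ Finset.range W, p a b * φ a b := by
  have step1 : ∑ b ∈ Finset.range n, ∑ a ∈ Finset.range (n - b), p a b * φ a b
      = ∑ b ∈ Finset.range W, ∑ a ∈ Finset.range W, p a b * φ a b := by
    rw [Finset.sum_subset (Finset.range_subset_range.mpr hW)]
    · refine Finset.sum_congr rfl fun b hb => ?_
      simp only [Finset.mem_range] at hb
      refine Finset.sum_subset (Finset.range_subset_range.mpr (by omega)) fun a _ hna => ?_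
      simp only [Finset.mem_range] at hna
      rw [hp a b (by omega), zero_mul]
    · intro b _ hnb
      simp only [Finset.mem_range] at hnb
      exact Finset.sum_eq_zero fun a _ => by rw [hp a b (by omega), zero_mul]
  rw [step1, Finset.sum_comm]

lemma tri2sq_q {m W : ℕ} {q : ℕ → ℕ → ℝ} (hq : DegLE q m) (hq0 : q 0 m = 0) (hm : 1 ≤ m)
    (hW : m + 1 ≤ W) (φ : ℕ → ℕ → ℝ) :
    ∑ b ∈ Finset.range m, ∑ a ∈ Finset.range (m + 1 - b), q a b * φ a b
      = ∑ a ∈ Finset.range W, ∑ b ∈ Finset.range W, q a b * φ a b := by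
  have step1 : ∑ b ∈ Finset.range m, ∑ a ∈ Finset.range (m + 1 - b), q a b * φ a b
      = ∑ b ∈ Finset.range W, ∑ a ∈ Finset.range W, q a b * φ a b := by
    rw [Finset.sum_subset (Finset.range_subset_range.mpr (show m ≤ W by omega))]
    · refine Finset.sum_congr rfl fun b hb => ?_
      simp only [Finset.mem_range] at hb
      refine Finset.sum_subset (Finset.range_subset_range.mpr (show m + 1 - b ≤ W by omega))
        fun a _ hna => ?_
      simp only [Finset.mem_range] at hna
      rw [hq a b (by omega), zero_mul]
    · intro b _ hnb
      simp only [Finset.mem_range] at hnb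
      refine Finset.sum_eq_zero fun a _ => ?_
      rcases Nat.lt_or_ge m b with hc | hc
      · rw [hq a b (by omega), zero_mul]
      · have hbm : b = m := by omega
        rcases Nat.eq_zero_or_pos a with ha | ha
        · rw [ha, hbm, hq0, zero_mul]
        · rw [hq a b (by omega), zero_mul]
  rw [step1, Finset.sum_comm]

end Tri2Sq

section Recursions

variable {n m W : ℕ} {β p q : ℕ → ℕ → ℝ}

lemma sfun_x (hp : DegLE p (n - 1)) (hn : 1 ≤ n) (hW : n ≤ W) {i j : ℕ} (h : n ≤ i) :
    sfun n m β p q i j = sqSum p (sfun n m β p q) W (i - n) j := by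
  rw [sfun_eq_x h, tri2sq_p hp hn hW]
  rfl

lemma sfun_y (hq : DegLE q m) (hq0 : q 0 m = 0) (hm : 1 ≤ m) (hW : m + 1 ≤ W)
    {i j : ℕ} (h1 : ¬ n ≤ i) (h2 : m ≤ j) :
    sfun n m β p q i j = sqSum q (sfun n m β p q) W i (j - m) := by
  rw [sfun_eq_y h1 h2, tri2sq_q hq hq0 hm hW]
  rfl

/-- Relation E1: the x-relation holds for `sfun` everywhere. -/
lemma sfun_E1 (hp : DegLE p (n - 1)) (hn : 1 ≤ n) (hW : n ≤ W) (u v : ℕ) :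
    sfun n m β p q (u + n) v = sqSum p (sfun n m β p q) W u v := by
  rw [sfun_x hp hn hW (by omega)]
  congr 1
  omega

/-- Relation E2: the y-relation holds for `sfun` everywhere. -/
lemma sfun_E2 (hp : DegLE p (n - 1)) (hq : DegLE q m) (hq0 : q 0 m = 0)
    (hn : 1 ≤ n) (hm : 1 ≤ m) (hW : n ≤ W) (hW2 : m + 1 ≤ W) (u v : ℕ) :
    sfun n m β p q u (v + m) = sqSum q (sfun n m β p q) W u v := by
  induction u using Nat.strong_induction_on generalizing v with
  | _ u IH =>
    rcases Nat.lt_or_ge u n with hu | hu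
    · rw [sfun_y hq hq0 hm hW2 (by omega) (by omega)]
      congr 1
      omega
    · -- u ≥ n
      have hu' : u - n + n = u := by omega
      rw [show u = u - n + n by omega, sfun_E1 hp hn hW (u - n) (v + m)]
      unfold sqSum
      have inner : ∀ a b : ℕ, p a b * sfun n m β p q (u - n + a) (v + m + b)
          = p a b * sqSum q (sfun n m β p q) W (u - n + a) (v + b) := by
        intro a b
        by_cases hp0 : p a b = 0
        · rw [hp0, zero_mul, zero_mul]
        · have hab : a + b ≤ n - 1 := by
            by_contra hc
            exact hp0 (hp a b (by omega))
          have : v + m + b = v + b + m := by omega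
          rw [this, IH (u - n + a) (by omega) (v + b)]
      simp_rw [inner]
      unfold sqSum
      simp_rw [Finset.mul_sum]
      rw [sum4_swap (fun a b a' b' => p a b * (q a' b' *
        sfun n m β p q (u - n + a + a') (v + b + b')))]
      refine Finset.sum_congr rfl fun a' _ => Finset.sum_congr rfl fun b' _ => ?_
      rw [show u - n + n + a' = u - n + a' + n by omega,
        sfun_E1 hp hn hW (u - n + a') (v + b')]
      unfold sqSum
      rw [Finset.mul_sum]
      refine Finset.sum_congr rfl fun a _ => ?_
      rw [Finset.mul_sum]
      refine Finset.sum_congr rfl fun b _ => ?_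
      rw [show u - n + a' + a = u - n + a + a' by omega,
        show v + b' + b = v + b + b' by omega]
      ring

end Recursions

section Conversions

lemma lamB_congr (g₁ g₂ f : ℕ → ℕ → ℝ) (A : ℕ)
    (h : ∀ k l, k < A → l < A → g₁ k l = g₂ k l) :
    lamB g₁ f A = lamB g₂ f A := by
  unfold lamB
  refine Finset.sum_congr rfl fun k hk => Finset.sum_congr rfl fun l hl => ?_
  simp only [Finset.mem_range] at hk hl
  rw [h k l hk hl]

lemma sum_idx (D : ℕ) (F : ℕ → ℕ → ℝ) :
    ∑ c : Idx D, F c.1.1 c.1.2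
      = ∑ k ∈ Finset.range (D+1), ∑ l ∈ Finset.range (D+1),
          if k + l ≤ D then F k l else 0 := by
  rw [← Finset.sum_subtype (F := inferInstance)
    ((Finset.range (D+1) ×ˢ Finset.range (D+1)).filter (fun ij => ij.1 + ij.2 ≤ D))
    (fun x => by
      simp only [Finset.mem_filter, Finset.mem_product, Finset.mem_range]
      omega)
    (fun x : ℕ × ℕ => F x.1 x.2)]
  rw [Finset.sum_filter, Finset.sum_product]

lemma polyCol_row (D : ℕ) (g w : ℕ → ℕ → ℝ) (hw : DegLE w D) (K L : ℕ) (h : K + L ≤ D) :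
    polyCol D g w ⟨(K, L), h⟩ = lamB (fun a b => g (K + a) (L + b)) w (D + 1) := by
  unfold polyCol momentMatrix coeffVec
  simp only [Matrix.mulVec, dotProduct, Matrix.of_apply]
  rw [sum_idx D (fun a b => g (K + a) (L + b) * w a b)]
  unfold lamB
  refine Finset.sum_congr rfl fun a _ => Finset.sum_congr rfl fun b _ => ?_
  by_cases hab : a + b ≤ D
  · rw [if_pos hab, mul_comm]
  · rw [if_neg hab, hw a b (by omega), zero_mul]

lemma genx_support {n : ℕ} {p : ℕ → ℕ → ℝ} (hp : DegLE p (n - 1)) (hn : 1 ≤ n) :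
    ∀ k l, (monoC n 0 - p) k l ≠ 0 → k + l ≤ n := by
  intro k l hkl
  by_contra hc
  apply hkl
  have h1 : monoC n 0 k l = 0 := by
    unfold monoC
    rw [if_neg]
    rintro ⟨rfl, rfl⟩
    omega
  have h2 : p k l = 0 := hp k l (by omega)
  simp [h1, h2]

lemma geny_support {m : ℕ} {q : ℕ → ℕ → ℝ} (hq : DegLE q m) (hm : 1 ≤ m) :
    ∀ k l, (monoC 0 m - q) k l ≠ 0 → k + l ≤ m := by
  intro k l hkl
  by_contra hc
  apply hkl
  have h1 : monoC 0 m k l = 0 := by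
    unfold monoC
    rw [if_neg]
    rintro ⟨rfl, rfl⟩
    omega
  have h2 : q k l = 0 := hq k l (by omega)
  simp [h1, h2]

lemma degle_of_support {f : ℕ → ℕ → ℝ} {D : ℕ} (h : ∀ k l, f k l ≠ 0 → k + l ≤ D) :
    DegLE f D := by
  intro k l hkl
  by_contra hc
  exact absurd (h k l hc) (by omega)

lemma degle_monoC {u v D : ℕ} (h : u + v ≤ D) : DegLE (monoC u v) D := by
  intro k l hkl
  unfold monoC
  rw [if_neg]
  rintro ⟨rfl, rfl⟩
  omega

lemma degle_shiftC {f : ℕ → ℕ → ℝ} {Df : ℕ} (hf : DegLE f Df) (u v : ℕ) :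
    DegLE (shiftC u v f) (u + v + Df) := by
  intro k l hkl
  unfold shiftC
  by_cases h : u ≤ k ∧ v ≤ l
  · rw [if_pos h]
    exact hf _ _ (by omega)
  · rw [if_neg h]

lemma lamB_genx {n : ℕ} {p : ℕ → ℕ → ℝ} (g : ℕ → ℕ → ℝ) {A : ℕ} (hA : n < A) :
    lamB g (monoC n 0 - p) A = g n 0 - lamB g p A := by
  rw [lamB_sub, lamB_monoC g hA (by omega)]

lemma lamB_geny {m : ℕ} {q : ℕ → ℕ → ℝ} (g : ℕ → ℕ → ℝ) {A : ℕ} (hA : m < A) :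
    lamB g (monoC 0 m - q) A = g 0 m - lamB g q A := by
  rw [lamB_sub, lamB_monoC g (by omega) hA]

lemma sqSum_eq_lamB (c g : ℕ → ℕ → ℝ) (W u v : ℕ) :
    sqSum c g W u v = lamB (fun a b => g (u + a) (v + b)) c W := rfl

lemma p_support {n : ℕ} {p : ℕ → ℕ → ℝ} (hp : DegLE p (n - 1)) :
    ∀ k l, p k l ≠ 0 → k + l ≤ n - 1 := by
  intro k l hkl
  by_contra hc
  exact hkl (hp k l (by omega))

lemma q_support {m : ℕ} {q : ℕ → ℕ → ℝ} (hq : DegLE q m) :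
    ∀ k l, q k l ≠ 0 → k + l ≤ m := by
  intro k l hkl
  by_contra hc
  exact hkl (hq k l (by omega))

end Conversions

section BetaRelations

variable {d n m : ℕ} {β p q : ℕ → ℕ → ℝ}

/-- Relation K: the x-relation holds for β up to degree 2d. -/
lemma betaK (hn1 : 1 ≤ n) (hnd : n ≤ d) (hp : DegLE p (n - 1))
    (hrg : RecursivelyGenerated d β) (hrelx : polyCol d β (monoC n 0 - p) = 0)
    {u v : ℕ} (h2d : u + v + n ≤ 2 * d) :
    β (u + n) v = sqSum p β (d + 2) u v := by
  obtain ⟨u₁, u₂, v₁, v₂, hu, hv, hlow, hhigh⟩ :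
      ∃ u₁ u₂ v₁ v₂ : ℕ, u = u₁ + u₂ ∧ v = v₁ + v₂ ∧ u₂ + v₂ + n ≤ d ∧ u₁ + v₁ ≤ d := by
    by_cases hsm : u + v + n ≤ d
    · exact ⟨0, u, 0, v, by omega, by omega, by omega, by omega⟩
    · exact ⟨u - min u (d - n), min u (d - n), v - ((d - n) - min u (d - n)),
        (d - n) - min u (d - n), by omega, by omega, by omega, by omega⟩
  have hgsupp := genx_support hp hn1
  have hshift := hrg (monoC n 0 - p) (monoC u₂ v₂)
    (degle_of_support (fun k l hk => le_trans (hgsupp k l hk) hnd))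
    (degle_monoC (by omega))
    (by
      rw [cMul_monoC_right]
      exact fun k l hkl => degle_shiftC (degle_of_support hgsupp) u₂ v₂ k l (by omega))
    hrelx
  rw [cMul_monoC_right] at hshift
  have hrow := congrFun hshift ⟨(u₁, v₁), hhigh⟩
  rw [polyCol_row d β _ (fun k l hkl =>
      degle_shiftC (degle_of_support hgsupp) u₂ v₂ k l (by omega)) u₁ v₁ hhigh] at hrow
  rw [lamB_shift _ _ (fun k l hkl => by
      have := hgsupp k l hkl
      constructor <;> omega)] at hrow
  rw [lamB_genx _ (by omega)] at hrow
  simp only [Pi.zero_apply] at hrow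
  have hz : β (u₁ + (u₂ + n)) (v₁ + (v₂ + 0))
      = lamB (fun k l => β (u₁ + (u₂ + k)) (v₁ + (v₂ + l))) p (d + 1) := by
    linarith [hrow]
  rw [sqSum_eq_lamB]
  rw [lamB_window (g := fun a b => β (u + a) (v + b)) (f := p)
    (fun k l hkl => by
      have := p_support hp k l hkl
      constructor <;> omega) (show d + 1 ≤ d + 2 by omega)]
  have e1 : u + n = u₁ + (u₂ + n) := by omega
  have e2 : v = v₁ + (v₂ + 0) := by omega
  rw [e1, e2, hz]
  exact lamB_congr _ _ _ _ (fun k l _ _ =>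
    congrArg₂ β (by omega) (by omega))

/-- Relation K': the y-relation holds for β up to degree 2d. -/
lemma betaK' (hm1 : 1 ≤ m) (hmd : m ≤ d) (hq : DegLE q m)
    (hrg : RecursivelyGenerated d β) (hrely : polyCol d β (monoC 0 m - q) = 0)
    {u v : ℕ} (h2d : u + v + m ≤ 2 * d) :
    β u (v + m) = sqSum q β (d + 2) u v := by
  obtain ⟨u₁, u₂, v₁, v₂, hu, hv, hlow, hhigh⟩ :
      ∃ u₁ u₂ v₁ v₂ : ℕ, u = u₁ + u₂ ∧ v = v₁ + v₂ ∧ u₂ + v₂ + m ≤ d ∧ u₁ + v₁ ≤ d := by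
    by_cases hsm : u + v + m ≤ d
    · exact ⟨0, u, 0, v, by omega, by omega, by omega, by omega⟩
    · exact ⟨u - min u (d - m), min u (d - m), v - ((d - m) - min u (d - m)),
        (d - m) - min u (d - m), by omega, by omega, by omega, by omega⟩
  have hgsupp := geny_support hq hm1
  have hshift := hrg (monoC 0 m - q) (monoC u₂ v₂)
    (degle_of_support (fun k l hk => le_trans (hgsupp k l hk) hmd))
    (degle_monoC (by omega))
    (by
      rw [cMul_monoC_right]
      exact fun k l hkl => degle_shiftC (degle_of_support hgsupp) u₂ v₂ k l (by omega))
    hrely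
  rw [cMul_monoC_right] at hshift
  have hrow := congrFun hshift ⟨(u₁, v₁), hhigh⟩
  rw [polyCol_row d β _ (fun k l hkl =>
      degle_shiftC (degle_of_support hgsupp) u₂ v₂ k l (by omega)) u₁ v₁ hhigh] at hrow
  rw [lamB_shift _ _ (fun k l hkl => by
      have := hgsupp k l hkl
      constructor <;> omega)] at hrow
  rw [lamB_geny _ (by omega)] at hrow
  simp only [Pi.zero_apply] at hrow
  have hz : β (u₁ + (u₂ + 0)) (v₁ + (v₂ + m))
      = lamB (fun k l => β (u₁ + (u₂ + k)) (v₁ + (v₂ + l))) q (d + 1) := by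
    linarith [hrow]
  rw [sqSum_eq_lamB]
  rw [lamB_window (g := fun a b => β (u + a) (v + b)) (f := q)
    (fun k l hkl => by
      have := q_support hq k l hkl
      constructor <;> omega) (show d + 1 ≤ d + 2 by omega)]
  have e1 : u = u₁ + (u₂ + 0) := by omega
  have e2 : v + m = v₁ + (v₂ + m) := by omega
  rw [e1, e2, hz]
  exact lamB_congr _ _ _ _ (fun k l _ _ =>
    congrArg₂ β (by omega) (by omega))

end BetaRelations

section SfunBeta

variable {d n m : ℕ} {β p q : ℕ → ℕ → ℝ}

lemma q_support' (hq : DegLE q m) (hq0 : q 0 m = 0) :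
    ∀ a b, q a b ≠ 0 → a + b ≤ m ∧ b + 1 ≤ m := by
  intro a b h0
  have h1 := q_support hq a b h0
  refine ⟨h1, ?_⟩
  by_contra hc
  have hb : b = m := by omega
  have ha : a = 0 := by omega
  rw [ha, hb] at h0
  exact h0 hq0

lemma sqSum_congr_support (c g₁ g₂ : ℕ → ℕ → ℝ) (W u v : ℕ)
    (h : ∀ a b, a < W → b < W → c a b ≠ 0 → g₁ (u + a) (v + b) = g₂ (u + a) (v + b)) :
    sqSum c g₁ W u v = sqSum c g₂ W u v := by
  unfold sqSum
  refine Finset.sum_congr rfl fun a ha => Finset.sum_congr rfl fun b hb => ?_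
  simp only [Finset.mem_range] at ha hb
  by_cases hc : c a b = 0
  · rw [hc, zero_mul, zero_mul]
  · rw [h a b ha hb hc]

/-- (A): `sfun` agrees with `β` up to total degree 2d. -/
lemma sfun_eq_beta (hn1 : 1 ≤ n) (hnd : n ≤ d) (hm1 : 1 ≤ m) (hmd : m ≤ d)
    (hp : DegLE p (n - 1)) (hq : DegLE q m) (hq0 : q 0 m = 0)
    (hrg : RecursivelyGenerated d β)
    (hrelx : polyCol d β (monoC n 0 - p) = 0)
    (hrely : polyCol d β (monoC 0 m - q) = 0) :
    ∀ i j, i + j ≤ 2 * d → sfun n m β p q i j = β i j := by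
  suffices H : ∀ M i j, (i + j) * (i + j) + j < M → i + j ≤ 2 * d →
      sfun n m β p q i j = β i j by
    exact fun i j h => H ((i + j) * (i + j) + j + 1) i j (by omega) h
  intro M
  induction M with
  | zero => exact fun i j h _ => absurd h (by omega)
  | succ M IH =>
    intro i j hM h2d
    rcases le_or_gt n i with hi | hi
    · rw [sfun_x hp hn1 (show n ≤ d + 2 by omega) hi]
      have hK := betaK hn1 hnd hp hrg hrelx (u := i - n) (v := j) (by omega)
      rw [show i - n + n = i by omega] at hK
      rw [hK]
      refine sqSum_congr_support p _ _ (d+2) (i - n) j fun a b _ _ hp0 => ?_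
      have hab := p_support hp a b hp0
      refine IH (i - n + a) (j + b) ?_ (by omega)
      exact lt_of_lt_of_le (meas1 (i + j) (i - n + a + (j + b)) j (j + b)
        (by omega) (by omega)) (by omega)
    · rcases le_or_gt m j with hj | hj
      · rw [sfun_y hq hq0 hm1 (show m + 1 ≤ d + 2 by omega) (by omega) hj]
        have hK := betaK' hm1 hmd hq hrg hrely (u := i) (v := j - m) (by omega)
        rw [show j - m + m = j by omega] at hK
        rw [hK]
        refine sqSum_congr_support q _ _ (d+2) i (j - m) fun a b _ _ hq' => ?_
        have hab := q_support' hq hq0 a b hq'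
        refine IH (i + a) (j - m + b) ?_ (by omega)
        exact lt_of_lt_of_le (meas2 (i + j) (i + a + (j - m + b)) j (j - m + b)
          (by omega) (by omega)) (by omega)
      · exact sfun_eq_base (by omega) (by omega)

end SfunBeta

section Bblock

variable {d n m : ℕ} {β p q : ℕ → ℕ → ℝ} {B : Matrix (Idx d) (Jdx (d + 1)) ℝ}

/-- The common value of `B` along an antidiagonal of total degree `2d+1`. -/
def bval (d : ℕ) (B : Matrix (Idx d) (Jdx (d + 1)) ℝ) (σ τ : ℕ) : ℝ :=
  if h : σ + τ = 2 * d + 1 then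
    B ⟨(min σ d, d - min σ d), by omega⟩ ⟨(σ - min σ d, τ - (d - min σ d)), by omega⟩
  else 0

lemma bval_eq
    (hBhankel : ∀ (r r' : Idx d) (c c' : Jdx (d + 1)),
      r.1.1 + r.1.2 = d → r'.1.1 + r'.1.2 = d →
      r.1.1 + c.1.1 = r'.1.1 + c'.1.1 → r.1.2 + c.1.2 = r'.1.2 + c'.1.2 →
      B r c = B r' c')
    {σ τ : ℕ} (h : σ + τ = 2 * d + 1) (r : Idx d) (c : Jdx (d + 1))
    (h1 : r.1.1 + c.1.1 = σ) (h2 : r.1.2 + c.1.2 = τ) :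
    B r c = bval d B σ τ := by
  unfold bval
  rw [dif_pos h]
  have hr := r.2
  have hc := c.2
  refine hBhankel r _ c _ (by omega) ?_ ?_ ?_ <;> simp only <;> omega

/-- The moment values of total degree at most `2d+1` determined by `β` and `B`. -/
def gOne (d : ℕ) (β : ℕ → ℕ → ℝ) (B : Matrix (Idx d) (Jdx (d + 1)) ℝ) : ℕ → ℕ → ℝ :=
  fun σ τ => if σ + τ ≤ 2 * d then β σ τ else bval d B σ τ

lemma augEntry_beta {K L a b : ℕ} (hKL : K + L ≤ d) (hab : a + b ≤ d) :
    augEntry d β B K L a b = β (K + a) (L + b) := by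
  unfold augEntry
  rw [dif_pos hKL, if_pos hab]

lemma augEntry_B {K L a b : ℕ} (hKL : K + L ≤ d) (hab : a + b = d + 1) :
    augEntry d β B K L a b = B ⟨(K, L), hKL⟩ ⟨(a, b), hab⟩ := by
  unfold augEntry
  rw [dif_pos hKL, if_neg (by omega), dif_pos hab]

lemma aug_of_polyCol (w : ℕ → ℕ → ℝ) (hw : DegLE w d) (hcol : polyCol d β w = 0) :
    AugRel d β B w := by
  intro K L hKL
  rw [sum_idx (d+1) (fun a b => w a b * augEntry d β B K L a b)]
  have step : ∀ a b : ℕ, a < d + 2 → b < d + 2 →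
      (if a + b ≤ d + 1 then w a b * augEntry d β B K L a b else 0)
        = w a b * β (K + a) (L + b) := by
    intro a b _ _
    by_cases h1 : a + b ≤ d
    · rw [if_pos (by omega), augEntry_beta hKL h1]
    · by_cases h2 : a + b ≤ d + 1
      · rw [if_pos h2, hw a b (by omega), zero_mul, zero_mul]
      · rw [if_neg h2, hw a b (by omega), zero_mul]
  rw [Finset.sum_congr rfl fun a ha => Finset.sum_congr rfl fun b hb => step a b
    (Finset.mem_range.mp ha) (Finset.mem_range.mp hb)]
  have hlam : ∑ a ∈ Finset.range (d+2), ∑ b ∈ Finset.range (d+2),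
      w a b * β (K + a) (L + b) = lamB (fun a b => β (K + a) (L + b)) w (d + 2) := rfl
  rw [hlam, lamB_window (fun k l hkl => by
    have : k + l ≤ d := by
      by_contra hc
      exact hkl (hw k l (by omega))
    constructor <;> omega) (show d + 1 ≤ d + 2 by omega)]
  rw [← polyCol_row d β w hw K L hKL, hcol]
  rfl

lemma augrel_to_lamB (w : ℕ → ℕ → ℝ) (hw : DegLE w (d+1)) (haug : AugRel d β B w)
    {K L : ℕ} (h : K + L ≤ d) :
    lamB (fun a b => augEntry d β B K L a b) w (d + 2) = 0 := by
  have h0 := haug K L h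
  rw [sum_idx (d+1) (fun a b => w a b * augEntry d β B K L a b)] at h0
  rw [← h0]
  unfold lamB
  refine Finset.sum_congr rfl fun a _ => Finset.sum_congr rfl fun b _ => ?_
  by_cases hab : a + b ≤ d + 1
  · rw [if_pos hab]
  · rw [if_neg hab, hw a b (by omega), zero_mul]

/-- BRX: reduction of a column of B with first index at least n. -/
lemma BRX (hn1 : 1 ≤ n) (hnd : n ≤ d) (hp : DegLE p (n - 1))
    (hrelx : polyCol d β (monoC n 0 - p) = 0)
    (hBrg : AugRecGen d β B)
    {r1 r2 c1 c2 : ℕ} (hr2 : r1 + r2 ≤ d) (hc2 : c1 + c2 = d + 1) (hc : n ≤ c1) :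
    B ⟨(r1, r2), hr2⟩ ⟨(c1, c2), hc2⟩ = sqSum p β (d + 2) (r1 + c1 - n) (r2 + c2) := by
  set u : ℕ := c1 - n with hu
  set v : ℕ := c2 with hv
  have huv : u + v + n = d + 1 := by omega
  have hgsupp := genx_support hp hn1
  have haug0 : AugRel d β B (monoC n 0 - p) :=
    aug_of_polyCol _ (degle_of_support (fun k l hk => le_trans (hgsupp k l hk) hnd)) hrelx
  have haug : AugRel d β B (shiftC u v (monoC n 0 - p)) := by
    have := hBrg (monoC n 0 - p) (monoC u v)
      (degle_of_support (fun k l hk => by have := hgsupp k l hk; omega))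
      (degle_monoC (by omega))
      (by
        rw [cMul_monoC_right]
        exact fun k l hkl => degle_shiftC (degle_of_support hgsupp) u v k l (by omega))
      haug0
    rwa [cMul_monoC_right] at this
  have hlam := augrel_to_lamB (shiftC u v (monoC n 0 - p))
    (fun k l hkl => degle_shiftC (degle_of_support hgsupp) u v k l (by omega))
    haug (K := r1) (L := r2) hr2
  rw [lamB_shift _ _ (fun k l hkl => by
      have := hgsupp k l hkl
      constructor <;> omega)] at hlam
  rw [lamB_genx _ (show n < d + 2 by omega)] at hlam
  have hBeq : augEntry d β B r1 r2 (u + n) (v + 0) = B ⟨(r1, r2), hr2⟩ ⟨(c1, c2), hc2⟩ := by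
    rw [augEntry_B hr2 (by omega)]
    congr 1
    exact Subtype.ext (by simp only [Prod.mk.injEq]; omega)
  rw [hBeq] at hlam
  have hqlam : lamB (fun k l => augEntry d β B r1 r2 (u + k) (v + l)) p (d + 2)
      = sqSum p β (d + 2) (r1 + c1 - n) (r2 + c2) := by
    rw [sqSum_eq_lamB]
    refine Finset.sum_congr rfl fun a ha => Finset.sum_congr rfl fun b hb => ?_
    by_cases hp0 : p a b = 0
    · rw [hp0, zero_mul, zero_mul]
    · have hab := p_support hp a b hp0
      show p a b * augEntry d β B r1 r2 (u + a) (v + b)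
        = p a b * β (r1 + c1 - n + a) (r2 + c2 + b)
      rw [augEntry_beta hr2 (by omega)]
      congr 1
      exact congrArg₂ β (by omega) (by omega)
  rw [hqlam] at hlam
  linarith [hlam]

/-- BRY: reduction of a column of B with second index at least m, along a degree-d row. -/
lemma BRY (hm1 : 1 ≤ m) (hmd : m ≤ d) (hq : DegLE q m) (hq0 : q 0 m = 0)
    (hrely : polyCol d β (monoC 0 m - q) = 0)
    (hBrg : AugRecGen d β B)
    (hBhankel : ∀ (r r' : Idx d) (c c' : Jdx (d + 1)),
      r.1.1 + r.1.2 = d → r'.1.1 + r'.1.2 = d →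
      r.1.1 + c.1.1 = r'.1.1 + c'.1.1 → r.1.2 + c.1.2 = r'.1.2 + c'.1.2 →
      B r c = B r' c')
    {r1 r2 c1 c2 : ℕ} (hr2 : r1 + r2 ≤ d) (hc2 : c1 + c2 = d + 1)
    (hrdeg : r1 + r2 = d) (hc : m ≤ c2) :
    B ⟨(r1, r2), hr2⟩ ⟨(c1, c2), hc2⟩ = sqSum q (gOne d β B) (d + 2) (r1 + c1) (r2 + c2 - m) := by
  set u : ℕ := c1 with hu
  set v : ℕ := c2 - m with hv
  have huv : u + v + m = d + 1 := by omega
  have hgsupp := geny_support hq hm1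
  have haug0 : AugRel d β B (monoC 0 m - q) :=
    aug_of_polyCol _ (degle_of_support (fun k l hk => le_trans (hgsupp k l hk) hmd)) hrely
  have haug : AugRel d β B (shiftC u v (monoC 0 m - q)) := by
    have := hBrg (monoC 0 m - q) (monoC u v)
      (degle_of_support (fun k l hk => by have := hgsupp k l hk; omega))
      (degle_monoC (by omega))
      (by
        rw [cMul_monoC_right]
        exact fun k l hkl => degle_shiftC (degle_of_support hgsupp) u v k l (by omega))
      haug0
    rwa [cMul_monoC_right] at this
  have hlam := augrel_to_lamB (shiftC u v (monoC 0 m - q))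
    (fun k l hkl => degle_shiftC (degle_of_support hgsupp) u v k l (by omega))
    haug (K := r1) (L := r2) hr2
  rw [lamB_shift _ _ (fun k l hkl => by
      have := hgsupp k l hkl
      constructor <;> omega)] at hlam
  rw [lamB_geny _ (show m < d + 2 by omega)] at hlam
  have hBeq : augEntry d β B r1 r2 (u + 0) (v + m) = B ⟨(r1, r2), hr2⟩ ⟨(c1, c2), hc2⟩ := by
    rw [augEntry_B hr2 (by omega)]
    congr 1
    exact Subtype.ext (by simp only [Prod.mk.injEq]; omega)
  rw [hBeq] at hlam
  have hqlam : lamB (fun k l => augEntry d β B r1 r2 (u + k) (v + l)) q (d + 2)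
      = sqSum q (gOne d β B) (d + 2) (r1 + c1) (r2 + c2 - m) := by
    rw [sqSum_eq_lamB]
    refine Finset.sum_congr rfl fun a ha => Finset.sum_congr rfl fun b hb => ?_
    by_cases hq' : q a b = 0
    · rw [hq', zero_mul, zero_mul]
    · have hab := q_support' hq hq0 a b hq'
      show q a b * augEntry d β B r1 r2 (u + a) (v + b)
        = q a b * gOne d β B (r1 + c1 + a) (r2 + c2 - m + b)
      by_cases hd : a + b = m
      · rw [augEntry_B hr2 (by omega)]
        have hgone : gOne d β B (r1 + c1 + a) (r2 + c2 - m + b)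
            = bval d B (r1 + c1 + a) (r2 + c2 - m + b) := by
          unfold gOne
          rw [if_neg (by omega)]
        rw [hgone]
        congr 1
        exact bval_eq hBhankel (by omega) _ _ (by simp only; omega) (by simp only; omega)
      · rw [augEntry_beta hr2 (by omega)]
        have hgone : gOne d β B (r1 + c1 + a) (r2 + c2 - m + b)
            = β (r1 + c1 + a) (r2 + c2 - m + b) := by
          unfold gOne
          rw [if_pos (by omega)]
        rw [hgone]
        congr 1
        exact congrArg₂ β (by omega) (by omega)
  rw [hqlam] at hlam
  linarith [hlam]

end Bblock

section SfunBval

variable {d n m : ℕ} {β p q : ℕ → ℕ → ℝ} {B : Matrix (Idx d) (Jdx (d + 1)) ℝ}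

/-- (B): `sfun` agrees with the Hankel B-values on total degree 2d+1. -/
lemma sfun_eq_bval (hn1 : 1 ≤ n) (hnd : n ≤ d) (hm1 : 1 ≤ m) (hmd : m ≤ d)
    (hp : DegLE p (n - 1)) (hq : DegLE q m) (hq0 : q 0 m = 0)
    (hrg : RecursivelyGenerated d β)
    (hrelx : polyCol d β (monoC n 0 - p) = 0)
    (hrely : polyCol d β (monoC 0 m - q) = 0)
    (hBrg : AugRecGen d β B)
    (hBhankel : ∀ (r r' : Idx d) (c c' : Jdx (d + 1)),
      r.1.1 + r.1.2 = d → r'.1.1 + r'.1.2 = d →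
      r.1.1 + c.1.1 = r'.1.1 + c'.1.1 → r.1.2 + c.1.2 = r'.1.2 + c'.1.2 →
      B r c = B r' c') :
    ∀ τ σ, σ + τ = 2 * d + 1 → sfun n m β p q σ τ = bval d B σ τ := by
  intro τ
  induction τ using Nat.strong_induction_on with
  | _ τ IH =>
    intro σ hστ
    rcases le_or_gt n σ with hσ | hσ
    · -- x-reduction
      rw [sfun_x hp hn1 (show n ≤ d + 2 by omega) hσ]
      have hstep1 : sqSum p (sfun n m β p q) (d+2) (σ - n) τ = sqSum p β (d+2) (σ - n) τ :=
        sqSum_congr_support _ _ _ _ _ _ (fun a b _ _ hp0 => by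
          have hab := p_support hp a b hp0
          exact sfun_eq_beta hn1 hnd hm1 hmd hp hq hq0 hrg hrelx hrely _ _ (by omega))
      rw [hstep1]
      by_cases hσd : σ ≤ d
      · have hBRX := BRX hn1 hnd hp hrelx hBrg (r1 := 0) (r2 := d) (c1 := σ)
          (c2 := d + 1 - σ) (by omega) (by omega) (by omega)
        have hbv := bval_eq hBhankel hστ ⟨(0, d), by omega⟩ ⟨(σ, d + 1 - σ), by omega⟩
          (by simp only; omega) (by simp only; omega)
        rw [← hbv, hBRX]
        exact congrArg₂ (sqSum p β (d+2)) (by omega) (by omega)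
      · have hBRX := BRX hn1 hnd hp hrelx hBrg (r1 := σ - (d+1)) (r2 := τ) (c1 := d + 1)
          (c2 := 0) (by omega) (by omega) (by omega)
        have hbv := bval_eq hBhankel hστ ⟨(σ - (d+1), τ), by omega⟩ ⟨(d + 1, 0), by omega⟩
          (by simp only; omega) (by simp only; omega)
        rw [← hbv, hBRX]
        exact congrArg₂ (sqSum p β (d+2)) (by omega) (by omega)
    · -- y-reduction
      have hτ : d + 1 ≤ τ := by omega
      rw [sfun_y hq hq0 hm1 (show m + 1 ≤ d + 2 by omega) (by omega) (show m ≤ τ by omega)]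
      have hstep1 : sqSum q (sfun n m β p q) (d+2) σ (τ - m)
          = sqSum q (gOne d β B) (d+2) σ (τ - m) :=
        sqSum_congr_support _ _ _ _ _ _ (fun a b _ _ hq' => by
          have hab := q_support' hq hq0 a b hq'
          by_cases hdm : a + b = m
          · have hdeg : σ + a + (τ - m + b) = 2 * d + 1 := by omega
            rw [IH (τ - m + b) (by omega) (σ + a) hdeg]
            unfold gOne
            rw [if_neg (by omega)]
          · rw [sfun_eq_beta hn1 hnd hm1 hmd hp hq hq0 hrg hrelx hrely _ _ (by omega)]
            unfold gOne
            rw [if_pos (by omega)])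
      rw [hstep1]
      have hBRY := BRY hm1 hmd hq hq0 hrely hBrg hBhankel (r1 := σ) (r2 := τ - (d+1))
        (c1 := 0) (c2 := d + 1) (by omega) (by omega) (by omega) (by omega)
      have hbv := bval_eq hBhankel hστ ⟨(σ, τ - (d+1)), by omega⟩ ⟨(0, d + 1), by omega⟩
        (by simp only; omega) (by simp only; omega)
      rw [← hbv, hBRY]
      exact congrArg₂ (sqSum q (gOne d β B) (d+2)) (by omega) (by omega)

/-- `sfun` agrees with `gOne` on total degree at most 2d+1. -/
lemma sfun_eq_gOne (hn1 : 1 ≤ n) (hnd : n ≤ d) (hm1 : 1 ≤ m) (hmd : m ≤ d)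
    (hp : DegLE p (n - 1)) (hq : DegLE q m) (hq0 : q 0 m = 0)
    (hrg : RecursivelyGenerated d β)
    (hrelx : polyCol d β (monoC n 0 - p) = 0)
    (hrely : polyCol d β (monoC 0 m - q) = 0)
    (hBrg : AugRecGen d β B)
    (hBhankel : ∀ (r r' : Idx d) (c c' : Jdx (d + 1)),
      r.1.1 + r.1.2 = d → r'.1.1 + r'.1.2 = d →
      r.1.1 + c.1.1 = r'.1.1 + c'.1.1 → r.1.2 + c.1.2 = r'.1.2 + c'.1.2 →
      B r c = B r' c') :
    ∀ σ τ, σ + τ ≤ 2 * d + 1 → sfun n m β p q σ τ = gOne d β B σ τ := by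
  intro σ τ h
  by_cases h' : σ + τ ≤ 2 * d
  · rw [sfun_eq_beta hn1 hnd hm1 hmd hp hq hq0 hrg hrelx hrely _ _ h']
    unfold gOne
    rw [if_pos h']
  · rw [sfun_eq_bval hn1 hnd hm1 hmd hp hq hq0 hrg hrelx hrely hBrg hBhankel τ σ (by omega)]
    unfold gOne
    rw [if_neg h']

/-- `sfun` reproduces the entries of `B`. -/
lemma sfun_eq_B (hd : 1 ≤ d) (hn1 : 1 ≤ n) (hnd : n ≤ d) (hm1 : 1 ≤ m) (hmd : m ≤ d)
    (hp : DegLE p (n - 1)) (hq : DegLE q m) (hq0 : q 0 m = 0)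
    (hrg : RecursivelyGenerated d β)
    (hrelx : polyCol d β (monoC n 0 - p) = 0)
    (hrely : polyCol d β (monoC 0 m - q) = 0)
    (hBrg : AugRecGen d β B)
    (hBold : ∀ (r : Idx d) (c : Jdx (d + 1)), r.1.1 + r.1.2 ≤ d - 1 →
      B r c = β (r.1.1 + c.1.1) (r.1.2 + c.1.2))
    (hBhankel : ∀ (r r' : Idx d) (c c' : Jdx (d + 1)),
      r.1.1 + r.1.2 = d → r'.1.1 + r'.1.2 = d →
      r.1.1 + c.1.1 = r'.1.1 + c'.1.1 → r.1.2 + c.1.2 = r'.1.2 + c'.1.2 →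
      B r c = B r' c') :
    ∀ (r : Idx d) (c : Jdx (d + 1)),
      sfun n m β p q (r.1.1 + c.1.1) (r.1.2 + c.1.2) = B r c := by
  intro r c
  have hr := r.2
  have hc := c.2
  rcases lt_or_ge (r.1.1 + r.1.2) d with hrd | hrd
  · rw [sfun_eq_beta hn1 hnd hm1 hmd hp hq hq0 hrg hrelx hrely _ _ (by omega)]
    exact (hBold r c (by omega)).symm
  · have hrdeg : r.1.1 + r.1.2 = d := by omega
    rw [sfun_eq_bval hn1 hnd hm1 hmd hp hq hq0 hrg hrelx hrely hBrg hBhankel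
      (r.1.2 + c.1.2) (r.1.1 + c.1.1) (by omega)]
    exact (bval_eq hBhankel (by omega) r c rfl rfl).symm

end SfunBval

section LinearHelpers

lemma lamB_congr_support (g₁ g₂ f : ℕ → ℕ → ℝ) (A : ℕ)
    (h : ∀ k l, k < A → l < A → f k l ≠ 0 → g₁ k l = g₂ k l) :
    lamB g₁ f A = lamB g₂ f A := by
  unfold lamB
  refine Finset.sum_congr rfl fun k hk => Finset.sum_congr rfl fun l hl => ?_
  simp only [Finset.mem_range] at hk hl
  by_cases hf : f k l = 0
  · rw [hf, zero_mul, zero_mul]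
  · rw [h k l hk hl hf]

/-- Extension of a coefficient vector to a coefficient function. -/
def extC (d : ℕ) (v : Idx d → ℝ) : ℕ → ℕ → ℝ :=
  fun k l => if h : k + l ≤ d then v ⟨(k, l), h⟩ else 0

lemma extC_coeffVec {d : ℕ} {w : ℕ → ℕ → ℝ} (hw : DegLE w d) :
    extC d (coeffVec d w) = w := by
  funext k l
  unfold extC coeffVec
  by_cases h : k + l ≤ d
  · rw [dif_pos h]
  · rw [dif_neg h, hw k l (by omega)]

lemma extC_add {d : ℕ} (v w : Idx d → ℝ) : extC d (v + w) = extC d v + extC d w := by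
  funext k l
  unfold extC
  by_cases h : k + l ≤ d <;> simp [h]

lemma extC_smul {d : ℕ} (c : ℝ) (v : Idx d → ℝ) : extC d (c • v) = c • extC d v := by
  funext k l
  unfold extC
  by_cases h : k + l ≤ d <;> simp [h]

lemma extC_zero {d : ℕ} : extC d (0 : Idx d → ℝ) = 0 := by
  funext k l
  unfold extC
  by_cases h : k + l ≤ d <;> simp [h]

lemma extC_degle {d : ℕ} (v : Idx d → ℝ) : DegLE (extC d v) d := by
  intro k l h
  unfold extC
  rw [dif_neg (by omega)]

lemma coeffVec_add {D : ℕ} (f g : ℕ → ℕ → ℝ) :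
    coeffVec D (f + g) = coeffVec D f + coeffVec D g := rfl

lemma coeffVec_smul {D : ℕ} (c : ℝ) (f : ℕ → ℕ → ℝ) :
    coeffVec D (c • f) = c • coeffVec D f := rfl

lemma coeffVec_zero {D : ℕ} : coeffVec D (0 : ℕ → ℕ → ℝ) = 0 := rfl

lemma polyCol_add {D : ℕ} (g f₁ f₂ : ℕ → ℕ → ℝ) :
    polyCol D g (f₁ + f₂) = polyCol D g f₁ + polyCol D g f₂ := by
  unfold polyCol
  rw [coeffVec_add, Matrix.mulVec_add]

lemma polyCol_smul {D : ℕ} (g f : ℕ → ℕ → ℝ) (c : ℝ) :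
    polyCol D g (c • f) = c • polyCol D g f := by
  unfold polyCol
  rw [coeffVec_smul, Matrix.mulVec_smul]

lemma polyCol_zero {D : ℕ} (g : ℕ → ℕ → ℝ) : polyCol D g 0 = 0 := by
  unfold polyCol
  rw [coeffVec_zero, Matrix.mulVec_zero]

lemma cMul_add_left (f₁ f₂ h : ℕ → ℕ → ℝ) :
    cMul (f₁ + f₂) h = cMul f₁ h + cMul f₂ h := by
  funext K L
  unfold cMul
  simp [add_mul, Finset.sum_add_distrib]

lemma cMul_smul_left (c : ℝ) (f h : ℕ → ℕ → ℝ) :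
    cMul (c • f) h = c • cMul f h := by
  funext K L
  unfold cMul
  simp [Finset.mul_sum, mul_assoc]

lemma cMul_zero_left (h : ℕ → ℕ → ℝ) : cMul 0 h = 0 := by
  funext K L
  unfold cMul
  simp

end LinearHelpers

section RowKill

variable {d n m : ℕ} {β p q : ℕ → ℕ → ℝ}

lemma rowkill_x (hp : DegLE p (n - 1)) (hn1 : 1 ≤ n)
    (U V u v : ℕ) (huv : u + v + n ≤ d + 1) :
    lamB (fun a b => sfun n m β p q (U + a) (V + b))
      (shiftC u v (monoC n 0 - p)) (d + 2) = 0 := by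
  rw [lamB_shift _ _ (fun k l hkl => by
    have := genx_support hp hn1 k l hkl
    constructor <;> omega)]
  rw [lamB_genx _ (show n < d + 2 by omega)]
  have hE := sfun_E1 (m := m) (β := β) (q := q) hp hn1 (show n ≤ d + 2 by omega) (U + u) (V + v)
  rw [sqSum_eq_lamB] at hE
  have e1 : U + (u + n) = U + u + n := by omega
  have e2 : V + (v + 0) = V + v := by omega
  rw [e1, e2, hE, sub_eq_zero]
  exact lamB_congr _ _ _ _ (fun k l _ _ =>
    congrArg₂ (sfun n m β p q) (by omega) (by omega))

lemma rowkill_y (hp : DegLE p (n - 1)) (hq : DegLE q m) (hq0 : q 0 m = 0)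
    (hn1 : 1 ≤ n) (hm1 : 1 ≤ m) (hnd : n ≤ d)
    (U V u v : ℕ) (huv : u + v + m ≤ d + 1) :
    lamB (fun a b => sfun n m β p q (U + a) (V + b))
      (shiftC u v (monoC 0 m - q)) (d + 2) = 0 := by
  rw [lamB_shift _ _ (fun k l hkl => by
    have := geny_support hq hm1 k l hkl
    constructor <;> omega)]
  rw [lamB_geny _ (show m < d + 2 by omega)]
  have hE := sfun_E2 (β := β) hp hq hq0 hn1 hm1 (show n ≤ d + 2 by omega)
    (show m + 1 ≤ d + 2 by omega) (U + u) (V + v)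
  rw [sqSum_eq_lamB] at hE
  have e1 : U + (u + 0) = U + u := by omega
  have e2 : V + (v + m) = V + v + m := by omega
  rw [e1, e2, hE, sub_eq_zero]
  exact lamB_congr _ _ _ _ (fun k l _ _ =>
    congrArg₂ (sfun n m β p q) (by omega) (by omega))

lemma polyCol_sfun_shift_genx (hp : DegLE p (n - 1)) (hn1 : 1 ≤ n)
    (u v : ℕ) (huv : u + v + n ≤ d + 1) :
    polyCol (d + 1) (sfun n m β p q) (shiftC u v (monoC n 0 - p)) = 0 := by
  funext r
  obtain ⟨⟨K, L⟩, hKL⟩ := r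
  simp only [Pi.zero_apply]
  rw [polyCol_row (d + 1) _ _ (fun k l hkl =>
    degle_shiftC (degle_of_support (genx_support hp hn1)) u v k l (by omega)) K L hKL]
  exact rowkill_x hp hn1 K L u v huv

lemma polyCol_sfun_shift_geny (hp : DegLE p (n - 1)) (hq : DegLE q m) (hq0 : q 0 m = 0)
    (hn1 : 1 ≤ n) (hm1 : 1 ≤ m) (hnd : n ≤ d)
    (u v : ℕ) (huv : u + v + m ≤ d + 1) :
    polyCol (d + 1) (sfun n m β p q) (shiftC u v (monoC 0 m - q)) = 0 := by
  funext r
  obtain ⟨⟨K, L⟩, hKL⟩ := r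
  simp only [Pi.zero_apply]
  rw [polyCol_row (d + 1) _ _ (fun k l hkl =>
    degle_shiftC (degle_of_support (geny_support hq hm1)) u v k l (by omega)) K L hKL]
  exact rowkill_y hp hq hq0 hn1 hm1 hnd K L u v huv

end RowKill

section Extension

variable {d n m : ℕ} {β p q : ℕ → ℕ → ℝ}

/-- Condition ③ of RGExtension for the canonical extension. -/
lemma relations_extend (hn1 : 1 ≤ n) (hnd : n ≤ d) (hm1 : 1 ≤ m) (hmd : m ≤ d)
    (hp : DegLE p (n - 1)) (hq : DegLE q m) (hq0 : q 0 m = 0)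
    (hker : ∀ v : Idx d → ℝ,
      momentMatrix d β *ᵥ v = 0 ↔
        v ∈ Submodule.span ℝ
          {w : Idx d → ℝ |
            (∃ i j : ℕ, n + i + j ≤ d ∧ w = coeffVec d (shiftC i j (monoC n 0 - p))) ∨
            (∃ k l : ℕ, m + k + l ≤ d ∧ w = coeffVec d (shiftC k l (monoC 0 m - q)))}) :
    ∀ a : ℕ → ℕ → ℝ, DegLE a d → polyCol d β a = 0 →
      polyCol (d + 1) (sfun n m β p q) a = 0 := by
  intro a hdeg hcol
  have hmem := (hker (coeffVec d a)).mp hcol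
  rw [← extC_coeffVec hdeg]
  refine Submodule.span_induction
    (p := fun v _ => polyCol (d + 1) (sfun n m β p q) (extC d v) = 0)
    ?_ ?_ ?_ ?_ hmem
  · intro x hx
    simp only [Set.mem_setOf_eq] at hx
    rcases hx with ⟨i, j, hij, rfl⟩ | ⟨k, l, hkl, rfl⟩
    · rw [extC_coeffVec (fun k l h =>
        degle_shiftC (degle_of_support (genx_support hp hn1)) i j k l (by omega))]
      exact polyCol_sfun_shift_genx hp hn1 i j (by omega)
    · rw [extC_coeffVec (fun k' l' h =>
        degle_shiftC (degle_of_support (geny_support hq hm1)) k l k' l' (by omega))]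
      exact polyCol_sfun_shift_geny hp hq hq0 hn1 hm1 hnd k l (by omega)
  · show polyCol (d + 1) (sfun n m β p q) (extC d 0) = 0
    rw [extC_zero, polyCol_zero]
  · intro x y _ _ ihx ihy
    show polyCol (d + 1) (sfun n m β p q) (extC d (x + y)) = 0
    rw [extC_add, polyCol_add]
    rw [show polyCol (d + 1) (sfun n m β p q) (extC d x) = 0 from ihx,
      show polyCol (d + 1) (sfun n m β p q) (extC d y) = 0 from ihy, add_zero]
  · intro c x _ ih
    show polyCol (d + 1) (sfun n m β p q) (extC d (c • x)) = 0
    rw [extC_smul, polyCol_smul,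
      show polyCol (d + 1) (sfun n m β p q) (extC d x) = 0 from ih, smul_zero]

open Classical in
/-- If a product of two polynomials of degree ≤ d+1 has degree ≤ d+1 and the second factor
is not constant, the first factor has degree ≤ d. -/
lemma degle_top {a b : ℕ → ℕ → ℝ} (hdega : DegLE a (d + 1)) (hdegb : DegLE b (d + 1))
    (hdegab : DegLE (cMul a b) (d + 1))
    {k₀ l₀ : ℕ} (hk₀ : 1 ≤ k₀ + l₀) (hb₀ : b k₀ l₀ ≠ 0) : DegLE a d := by
  by_contra hc
  unfold DegLE at hc
  push_neg at hc
  obtain ⟨K, L, hKL, haKL⟩ := hc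
  have hKL1 : K + L = d + 1 := by
    have h1 : ¬ (d + 1 < K + L) := fun h => haKL (hdega K L h)
    omega
  set Pb : ℕ → Prop := fun e => ∃ k, k ≤ e ∧ b k (e - k) ≠ 0 with hPb
  set eb := Nat.findGreatest Pb (d + 1) with heb
  have hbk : k₀ + l₀ ≤ d + 1 := by
    by_contra hcc
    exact hb₀ (hdegb _ _ (by omega))
  have hPb0 : Pb (k₀ + l₀) := ⟨k₀, by omega, by rw [show k₀ + l₀ - k₀ = l₀ by omega]; exact hb₀⟩
  have heb1 : 1 ≤ eb := le_trans hk₀ (Nat.le_findGreatest hbk hPb0)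
  have hebP : Pb eb := Nat.findGreatest_spec hbk hPb0
  obtain ⟨kb', hkb', hbkb⟩ := hebP
  have hebd : eb ≤ d + 1 := Nat.findGreatest_le _
  have hbsupp : ∀ k l, b k l ≠ 0 → k + l ≤ eb := by
    intro k l h0
    by_contra hcc
    have hle : k + l ≤ d + 1 := by
      by_contra h2
      exact h0 (hdegb _ _ (by omega))
    refine (Nat.findGreatest_is_greatest (P := Pb) (by omega) hle) ?_
    exact ⟨k, by omega, by rw [show k + l - k = l by omega]; exact h0⟩
  set Pa : ℕ → Prop := fun k => a k (d + 1 - k) ≠ 0 with hPa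
  set ka := Nat.findGreatest Pa (d + 1) with hka
  have hPaK : Pa K := by
    rw [hPa]
    simp only [ne_eq]
    rw [show d + 1 - K = L by omega]
    exact haKL
  have hkaP : Pa ka := Nat.findGreatest_spec (by omega) hPaK
  have hkad : ka ≤ d + 1 := Nat.findGreatest_le _
  have hkamax : ∀ k, Pa k → k ≤ d + 1 → k ≤ ka := by
    intro k h hk
    by_contra hcc
    exact (Nat.findGreatest_is_greatest (P := Pa) (by omega) hk) h
  set Qb : ℕ → Prop := fun k => b k (eb - k) ≠ 0 with hQb
  set kb := Nat.findGreatest Qb eb with hkb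
  have hQbP : Qb kb := Nat.findGreatest_spec hkb' hbkb
  have hkbeb : kb ≤ eb := Nat.findGreatest_le _
  have hkbmax : ∀ k, Qb k → k ≤ eb → k ≤ kb := by
    intro k h hk
    by_contra hcc
    exact (Nat.findGreatest_is_greatest (P := Qb) (by omega) hk) h
  have hmain : cMul a b (ka + kb) ((d + 1 - ka) + (eb - kb)) ≠ 0 := by
    unfold cMul
    rw [← Finset.sum_product']
    rw [Finset.sum_eq_single (ka, d + 1 - ka)]
    · rw [show ka + kb - ka = kb by omega,
        show (d + 1 - ka) + (eb - kb) - (d + 1 - ka) = eb - kb by omega]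
      exact mul_ne_zero hkaP hQbP
    · rintro ⟨x1, x2⟩ hx hne
      simp only [Finset.mem_product, Finset.mem_range] at hx
      by_cases ha0 : a x1 x2 = 0
      · rw [ha0, zero_mul]
      · by_cases hb0 : b (ka + kb - x1) ((d + 1 - ka) + (eb - kb) - x2) = 0
        · rw [hb0, mul_zero]
        · exfalso
          have h1 : x1 + x2 ≤ d + 1 := by
            by_contra h2
            exact ha0 (hdega _ _ (by omega))
          have h2 := hbsupp _ _ hb0
          have hx1 : x1 ≤ ka + kb := by omega
          have hx2 : x2 ≤ (d + 1 - ka) + (eb - kb) := by omega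
          have hsum : x1 + x2 = d + 1 := by omega
          have hx1ka : x1 ≤ ka := hkamax x1 (by
            rw [hPa]
            simp only [ne_eq]
            rw [show d + 1 - x1 = x2 by omega]
            exact ha0) (by omega)
          have hkb1 : ka + kb - x1 ≤ kb := hkbmax _ (by
            rw [hQb]
            simp only [ne_eq]
            rw [show eb - (ka + kb - x1) = (d + 1 - ka) + (eb - kb) - x2 by omega]
            exact hb0) (by omega)
          have : x1 = ka := by omega
          exact hne (by simp only [Prod.mk.injEq]; omega)
    · intro hx
      exact absurd (by simp only [Finset.mem_product, Finset.mem_range]; omega) hx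
  exact hmain (hdegab _ _ (by omega))

/-- Restriction: a kernel element of M_{d+1}(sfun) of degree ≤ d is in the kernel of M_d(β). -/
lemma polyCol_restrict (hn1 : 1 ≤ n) (hnd : n ≤ d) (hm1 : 1 ≤ m) (hmd : m ≤ d)
    (hp : DegLE p (n - 1)) (hq : DegLE q m) (hq0 : q 0 m = 0)
    (hrg : RecursivelyGenerated d β)
    (hrelx : polyCol d β (monoC n 0 - p) = 0)
    (hrely : polyCol d β (monoC 0 m - q) = 0)
    (a : ℕ → ℕ → ℝ) (hdeg : DegLE a d)
    (hcol : polyCol (d + 1) (sfun n m β p q) a = 0) :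
    polyCol d β a = 0 := by
  funext r
  obtain ⟨⟨K, L⟩, hKL⟩ := r
  have h0 := congrFun hcol ⟨(K, L), by omega⟩
  simp only [Pi.zero_apply] at h0 ⊢
  rw [polyCol_row (d + 1) _ a (fun k l h => hdeg k l (by omega)) K L (by omega)] at h0
  rw [polyCol_row d β a hdeg K L hKL]
  have hsupp : ∀ k l : ℕ, a k l ≠ 0 → k < d + 1 ∧ l < d + 1 := by
    intro k l h
    have : k + l ≤ d := by
      by_contra hc
      exact h (hdeg k l (by omega))
    constructor <;> omega
  rw [← lamB_window (g := fun a b => β (K + a) (L + b)) (f := a) hsupp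
    (show d + 1 ≤ d + 2 by omega)]
  rw [← h0]
  exact lamB_congr_support _ _ _ _ (fun k l _ _ hf => by
    have hkl : k + l ≤ d := by
      by_contra hc
      exact hf (hdeg k l (by omega))
    exact (sfun_eq_beta hn1 hnd hm1 hmd hp hq hq0 hrg hrelx hrely _ _ (by omega)).symm)

end Extension

section RecGen

variable {d n m : ℕ} {β p q : ℕ → ℕ → ℝ}

/-- Condition ④: the canonical extension is recursively generated. -/
lemma sfun_recgen (hn1 : 1 ≤ n) (hnd : n ≤ d) (hm1 : 1 ≤ m) (hmd : m ≤ d)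
    (hp : DegLE p (n - 1)) (hq : DegLE q m) (hq0 : q 0 m = 0)
    (hrg : RecursivelyGenerated d β)
    (hrelx : polyCol d β (monoC n 0 - p) = 0)
    (hrely : polyCol d β (monoC 0 m - q) = 0)
    (hker : ∀ v : Idx d → ℝ,
      momentMatrix d β *ᵥ v = 0 ↔
        v ∈ Submodule.span ℝ
          {w : Idx d → ℝ |
            (∃ i j : ℕ, n + i + j ≤ d ∧ w = coeffVec d (shiftC i j (monoC n 0 - p))) ∨
            (∃ k l : ℕ, m + k + l ≤ d ∧ w = coeffVec d (shiftC k l (monoC 0 m - q)))}) :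
    RecursivelyGenerated (d + 1) (sfun n m β p q) := by
  intro a b hdega hdegb hdegab hcol
  by_cases hbc : ∀ k l, 1 ≤ k + l → b k l = 0
  · rw [cMul_const a b hbc]
    have heq : (fun K L => a K L * b 0 0) = (b 0 0) • a := by
      funext K L
      simp [mul_comm]
    rw [heq, polyCol_smul, hcol, smul_zero]
  · push_neg at hbc
    obtain ⟨k₀, l₀, hk₀, hb₀⟩ := hbc
    have hdega' : DegLE a d := degle_top hdega hdegb hdegab hk₀ hb₀
    have hcold : polyCol d β a = 0 :=
      polyCol_restrict hn1 hnd hm1 hmd hp hq hq0 hrg hrelx hrely a hdega' hcol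
    have hmem := (hker (coeffVec d a)).mp hcold
    have hbsupp : ∀ k l, b k l ≠ 0 → k < d + 2 ∧ l < d + 2 := by
      intro k l h
      have : k + l ≤ d + 1 := by
        by_contra hc
        exact h (hdegb k l (by omega))
      constructor <;> omega
    have key : ∀ K L : ℕ, K + L ≤ d + 1 →
        lamB (fun s t => sfun n m β p q (K + s) (L + t))
          (cMul (extC d (coeffVec d a)) b) (2 * (d + 2)) = 0 := by
      refine Submodule.span_induction
        (p := fun v _ => ∀ K L : ℕ, K + L ≤ d + 1 →
          lamB (fun s t => sfun n m β p q (K + s) (L + t))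
            (cMul (extC d v) b) (2 * (d + 2)) = 0)
        ?_ ?_ ?_ ?_ hmem
      · intro x hx K L hKL
        simp only [Set.mem_setOf_eq] at hx
        rcases hx with ⟨i, j, hij, rfl⟩ | ⟨k, l, hkl, rfl⟩
        · rw [extC_coeffVec (fun k l h =>
            degle_shiftC (degle_of_support (genx_support hp hn1)) i j k l (by omega))]
          have hfsupp : ∀ k l, shiftC i j (monoC n 0 - p) k l ≠ 0 → k < d + 2 ∧ l < d + 2 := by
            intro k l h
            have h2 : k + l ≤ i + j + n := by
              by_contra hc
              exact h (degle_shiftC (degle_of_support (genx_support hp hn1)) i j k l (by omega))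
            constructor <;> omega
          rw [lamB_cMul _ _ _ (A := d + 2) hfsupp hbsupp]
          refine Finset.sum_eq_zero fun k _ => Finset.sum_eq_zero fun l _ => ?_
          have hinner : lamB (fun s t => sfun n m β p q (K + (k + s)) (L + (l + t)))
              (shiftC i j (monoC n 0 - p)) (d + 2) = 0 := by
            rw [lamB_congr _ (fun s t => sfun n m β p q (K + k + s) (L + l + t)) _ _
              (fun s t _ _ => congrArg₂ (sfun n m β p q) (by omega) (by omega))]
            exact rowkill_x hp hn1 (K + k) (L + l) i j (by omega)
          rw [hinner, mul_zero]
        · rw [extC_coeffVec (fun k' l' h =>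
            degle_shiftC (degle_of_support (geny_support hq hm1)) k l k' l' (by omega))]
          have hfsupp : ∀ k' l', shiftC k l (monoC 0 m - q) k' l' ≠ 0 → k' < d + 2 ∧ l' < d + 2 := by
            intro k' l' h
            have h2 : k' + l' ≤ k + l + m := by
              by_contra hc
              exact h (degle_shiftC (degle_of_support (geny_support hq hm1)) k l k' l' (by omega))
            constructor <;> omega
          rw [lamB_cMul _ _ _ (A := d + 2) hfsupp hbsupp]
          refine Finset.sum_eq_zero fun k' _ => Finset.sum_eq_zero fun l' _ => ?_
          have hinner : lamB (fun s t => sfun n m β p q (K + (k' + s)) (L + (l' + t)))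
              (shiftC k l (monoC 0 m - q)) (d + 2) = 0 := by
            rw [lamB_congr _ (fun s t => sfun n m β p q (K + k' + s) (L + l' + t)) _ _
              (fun s t _ _ => congrArg₂ (sfun n m β p q) (by omega) (by omega))]
            exact rowkill_y hp hq hq0 hn1 hm1 hnd (K + k') (L + l') k l (by omega)
          rw [hinner, mul_zero]
      · intro K L _
        show lamB _ (cMul (extC d (0 : Idx d → ℝ)) b) _ = 0
        rw [extC_zero, cMul_zero_left, lamB_zero]
      · intro x y _ _ ihx ihy K L hKL
        show lamB _ (cMul (extC d (x + y)) b) _ = 0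
        rw [extC_add, cMul_add_left, lamB_add, ihx K L hKL, ihy K L hKL, add_zero]
      · intro c x _ ih K L hKL
        show lamB _ (cMul (extC d (c • x)) b) _ = 0
        rw [extC_smul, cMul_smul_left, lamB_smul, ih K L hKL, mul_zero]
    funext r
    obtain ⟨⟨K, L⟩, hKL⟩ := r
    simp only [Pi.zero_apply]
    rw [polyCol_row (d + 1) _ _ hdegab K L hKL]
    have hw : ∀ k l, (cMul a b) k l ≠ 0 → k < d + 2 ∧ l < d + 2 := by
      intro k l h
      have : k + l ≤ d + 1 := by
        by_contra hc
        exact h (hdegab k l (by omega))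
      constructor <;> omega
    rw [← lamB_window (g := fun s t => sfun n m β p q (K + s) (L + t)) (f := cMul a b) hw
      (show d + 2 ≤ 2 * (d + 2) by omega)]
    have hfin := key K L hKL
    rwa [extC_coeffVec hdega'] at hfin

end RecGen

section Uniqueness

variable {d n m : ℕ} {β p q : ℕ → ℕ → ℝ} {B : Matrix (Idx d) (Jdx (d + 1)) ℝ}

/-- Any RG extension matching B agrees with `sfun` up to total degree 2d+1. -/
lemma betaPP_low (hn1 : 1 ≤ n) (hnd : n ≤ d) (hm1 : 1 ≤ m) (hmd : m ≤ d)
    (hp : DegLE p (n - 1)) (hq : DegLE q m) (hq0 : q 0 m = 0)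
    (hrg : RecursivelyGenerated d β)
    (hrelx : polyCol d β (monoC n 0 - p) = 0)
    (hrely : polyCol d β (monoC 0 m - q) = 0)
    (hBrg : AugRecGen d β B)
    (hBhankel : ∀ (r r' : Idx d) (c c' : Jdx (d + 1)),
      r.1.1 + r.1.2 = d → r'.1.1 + r'.1.2 = d →
      r.1.1 + c.1.1 = r'.1.1 + c'.1.1 → r.1.2 + c.1.2 = r'.1.2 + c'.1.2 →
      B r c = B r' c')
    (β'' : ℕ → ℕ → ℝ)
    (hβB : ∀ (r : Idx d) (c : Jdx (d + 1)),
      β'' (r.1.1 + c.1.1) (r.1.2 + c.1.2) = B r c)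
    (hlow : ∀ i j : ℕ, i + j ≤ 2 * d → β'' i j = β i j) :
    ∀ σ τ : ℕ, σ + τ ≤ 2 * d + 1 → β'' σ τ = sfun n m β p q σ τ := by
  intro σ τ h
  by_cases h' : σ + τ ≤ 2 * d
  · rw [hlow σ τ h', sfun_eq_beta hn1 hnd hm1 hmd hp hq hq0 hrg hrelx hrely _ _ h']
  · have hστ : σ + τ = 2 * d + 1 := by omega
    have h1 := hβB ⟨(min σ d, d - min σ d), by omega⟩
      ⟨(σ - min σ d, τ - (d - min σ d)), by omega⟩
    simp only at h1
    calc β'' σ τ = β'' (min σ d + (σ - min σ d)) (d - min σ d + (τ - (d - min σ d))) :=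
          congrArg₂ β'' (by omega) (by omega)
      _ = B ⟨(min σ d, d - min σ d), by omega⟩ ⟨(σ - min σ d, τ - (d - min σ d)), by omega⟩ := h1
      _ = bval d B σ τ := bval_eq hBhankel hστ _ _ (by simp only; omega) (by simp only; omega)
      _ = sfun n m β p q σ τ :=
          (sfun_eq_bval hn1 hnd hm1 hmd hp hq hq0 hrg hrelx hrely hBrg hBhankel τ σ hστ).symm

/-- Any RG extension matching B agrees with `sfun` at total degree 2d+2. -/
lemma betaPP_eq (hn1 : 1 ≤ n) (hnd : n ≤ d) (hm1 : 1 ≤ m) (hmd : m ≤ d)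
    (hp : DegLE p (n - 1)) (hq : DegLE q m) (hq0 : q 0 m = 0)
    (hrg : RecursivelyGenerated d β)
    (hrelx : polyCol d β (monoC n 0 - p) = 0)
    (hrely : polyCol d β (monoC 0 m - q) = 0)
    (hBrg : AugRecGen d β B)
    (hBhankel : ∀ (r r' : Idx d) (c c' : Jdx (d + 1)),
      r.1.1 + r.1.2 = d → r'.1.1 + r'.1.2 = d →
      r.1.1 + c.1.1 = r'.1.1 + c'.1.1 → r.1.2 + c.1.2 = r'.1.2 + c'.1.2 →
      B r c = B r' c')
    (β'' : ℕ → ℕ → ℝ)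
    (hβB : ∀ (r : Idx d) (c : Jdx (d + 1)),
      β'' (r.1.1 + c.1.1) (r.1.2 + c.1.2) = B r c)
    (hRG : RGExtension d β β'') :
    ∀ τ σ : ℕ, σ + τ = 2 * d + 2 → β'' σ τ = sfun n m β p q σ τ := by
  obtain ⟨hlow, _, hext, hrec⟩ := hRG
  have hU12 := betaPP_low hn1 hnd hm1 hmd hp hq hq0 hrg hrelx hrely hBrg hBhankel β'' hβB hlow
  intro τ
  induction τ using Nat.strong_induction_on with
  | _ τ IH =>
    intro σ hστ
    have hgx := genx_support hp hn1
    have hgy := geny_support hq hm1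
    rcases le_or_gt τ d with hτ | hτ
    · -- x-relation at row (σ - (d+1), τ)
      have hσ : d + 2 ≤ σ := by omega
      have hrelx'' : polyCol (d + 1) β'' (monoC n 0 - p) = 0 :=
        hext (monoC n 0 - p)
          (degle_of_support (fun k l hk => le_trans (hgx k l hk) hnd)) hrelx
      have hshift'' : polyCol (d + 1) β'' (shiftC (d + 1 - n) 0 (monoC n 0 - p)) = 0 := by
        have := hrec (monoC n 0 - p) (monoC (d + 1 - n) 0)
          (degle_of_support (fun k l hk => by have := hgx k l hk; omega))
          (degle_monoC (by omega))
          (by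
            rw [cMul_monoC_right]
            exact fun k l hkl => degle_shiftC (degle_of_support hgx) (d + 1 - n) 0 k l (by omega))
          hrelx''
        rwa [cMul_monoC_right] at this
      have hrow := congrFun hshift'' ⟨(σ - (d + 1), τ), by omega⟩
      simp only [Pi.zero_apply] at hrow
      rw [polyCol_row (d + 1) β'' _ (fun k l hkl =>
        degle_shiftC (degle_of_support hgx) (d + 1 - n) 0 k l (by omega))
        (σ - (d + 1)) τ (by omega)] at hrow
      rw [lamB_shift _ _ (fun k l hkl => by
        have := hgx k l hkl
        constructor <;> omega)] at hrow
      rw [lamB_genx _ (show n < d + 2 by omega)] at hrow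
      have hβσ : β'' (σ - (d + 1) + (d + 1 - n + n)) (τ + (0 + 0)) = β'' σ τ :=
        congrArg₂ β'' (by omega) (by omega)
      rw [hβσ] at hrow
      have hlamq : lamB (fun k l => β'' (σ - (d + 1) + (d + 1 - n + k)) (τ + (0 + l))) p (d + 2)
          = sqSum p (sfun n m β p q) (d + 2) (σ - n) τ := by
        rw [sqSum_eq_lamB]
        refine lamB_congr_support _ _ _ _ (fun k l _ _ hp0 => ?_)
        have hab := p_support hp k l hp0
        rw [show σ - (d + 1) + (d + 1 - n + k) = σ - n + k by omega]
        rw [hU12 (σ - n + k) (τ + (0 + l)) (by omega)]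
        exact congrArg₂ (sfun n m β p q) (by omega) (by omega)
      rw [hlamq] at hrow
      have hE := sfun_E1 (m := m) (β := β) (q := q) hp hn1 (show n ≤ d + 2 by omega) (σ - n) τ
      rw [show σ - n + n = σ by omega] at hE
      rw [← hE] at hrow
      linarith [hrow]
    · -- y-relation at row (σ, τ - (d+1))
      have hrely'' : polyCol (d + 1) β'' (monoC 0 m - q) = 0 :=
        hext (monoC 0 m - q)
          (degle_of_support (fun k l hk => le_trans (hgy k l hk) hmd)) hrely
      have hshift'' : polyCol (d + 1) β'' (shiftC 0 (d + 1 - m) (monoC 0 m - q)) = 0 := by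
        have := hrec (monoC 0 m - q) (monoC 0 (d + 1 - m))
          (degle_of_support (fun k l hk => by have := hgy k l hk; omega))
          (degle_monoC (by omega))
          (by
            rw [cMul_monoC_right]
            exact fun k l hkl => degle_shiftC (degle_of_support hgy) 0 (d + 1 - m) k l (by omega))
          hrely''
        rwa [cMul_monoC_right] at this
      have hrow := congrFun hshift'' ⟨(σ, τ - (d + 1)), by omega⟩
      simp only [Pi.zero_apply] at hrow
      rw [polyCol_row (d + 1) β'' _ (fun k l hkl =>
        degle_shiftC (degle_of_support hgy) 0 (d + 1 - m) k l (by omega))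
        σ (τ - (d + 1)) (by omega)] at hrow
      rw [lamB_shift _ _ (fun k l hkl => by
        have := hgy k l hkl
        constructor <;> omega)] at hrow
      rw [lamB_geny _ (show m < d + 2 by omega)] at hrow
      have hβσ : β'' (σ + (0 + 0)) (τ - (d + 1) + (d + 1 - m + m)) = β'' σ τ :=
        congrArg₂ β'' (by omega) (by omega)
      rw [hβσ] at hrow
      have hlamq : lamB (fun k l => β'' (σ + (0 + k)) (τ - (d + 1) + (d + 1 - m + l))) q (d + 2)
          = sqSum q (sfun n m β p q) (d + 2) σ (τ - m) := by
        rw [sqSum_eq_lamB]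
        refine lamB_congr_support _ _ _ _ (fun k l _ _ hq' => ?_)
        have hab := q_support' hq hq0 k l hq'
        by_cases hdm : k + l = m
        · rw [show τ - (d + 1) + (d + 1 - m + l) = τ - m + l by omega]
          rw [IH (τ - m + l) (by omega) (σ + (0 + k)) (by omega)]
          exact congrArg₂ (sfun n m β p q) (by omega) (by omega)
        · rw [hU12 (σ + (0 + k)) (τ - (d + 1) + (d + 1 - m + l)) (by omega)]
          exact congrArg₂ (sfun n m β p q) (by omega) (by omega)
      rw [hlamq] at hrow
      have hE := sfun_E2 (β := β) hp hq hq0 hn1 hm1 (show n ≤ d + 2 by omega)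
        (show m + 1 ≤ d + 2 by omega) σ (τ - m)
      rw [show τ - m + m = τ by omega] at hE
      rw [← hE] at hrow
      linarith [hrow]

end Uniqueness

/-- Under the hypotheses of Theorem rdext, given the unique block
`B(d+1)` making `(M_d  B(d+1))` a recursively generated moment-matrix block with column
space contained in that of `M_d`, there is a unique symmetric Hankel block `C(d+1)` such
that `[[M_d, B],[Bᵀ, C]]` is the moment matrix `M_{d+1}(β')` of an extension `β'` of `β`
and is an RG extension of `M_d(β)`. -/
theorem statement2 (d n m : ℕ) (hd : 1 ≤ d) (β p q : ℕ → ℕ → ℝ)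
    (hpsd : (momentMatrix d β).PosSemidef)
    (hrg : RecursivelyGenerated d β)
    (hgen : GeneratedBy d n m β p q)
    (B : Matrix (Idx d) (Jdx (d + 1)) ℝ)
    (hBold : ∀ (r : Idx d) (c : Jdx (d + 1)), r.1.1 + r.1.2 ≤ d - 1 →
      B r c = β (r.1.1 + c.1.1) (r.1.2 + c.1.2))
    (hBhankel : ∀ (r r' : Idx d) (c c' : Jdx (d + 1)),
      r.1.1 + r.1.2 = d → r'.1.1 + r'.1.2 = d →
      r.1.1 + c.1.1 = r'.1.1 + c'.1.1 → r.1.2 + c.1.2 = r'.1.2 + c'.1.2 →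
      B r c = B r' c')
    (hBrg : AugRecGen d β B)
    (hBran : ∀ c : Jdx (d + 1), ∃ v : Idx d → ℝ,
      (fun r : Idx d => B r c) = momentMatrix d β *ᵥ v) :
    ∃! C : Matrix (Jdx (d + 1)) (Jdx (d + 1)) ℝ,
      (∀ c c' : Jdx (d + 1), C c c' = C c' c) ∧
      (∀ c c' e e' : Jdx (d + 1),
        c.1.1 + c'.1.1 = e.1.1 + e'.1.1 → c.1.2 + c'.1.2 = e.1.2 + e'.1.2 →
        C c c' = C e e') ∧
      ∃ β' : ℕ → ℕ → ℝ,
        (∀ (r : Idx d) (c : Jdx (d + 1)), β' (r.1.1 + c.1.1) (r.1.2 + c.1.2) = B r c) ∧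
        (∀ c c' : Jdx (d + 1), β' (c.1.1 + c'.1.1) (c.1.2 + c'.1.2) = C c c') ∧
        RGExtension d β β' := by
  obtain ⟨hn1, hnd, hm1, hmd, hp, hq, hq0, hrelx, hrely, hker⟩ := hgen
  refine ⟨fun c c' => sfun n m β p q (c.1.1 + c'.1.1) (c.1.2 + c'.1.2),
    ⟨?_, ?_, sfun n m β p q, ?_, fun c c' => rfl, ?_, ?_, ?_, ?_⟩, ?_⟩
  · intro c c'
    exact congrArg₂ (sfun n m β p q) (by omega) (by omega)
  · intro c c' e e' h1 h2
    exact congrArg₂ (sfun n m β p q) h1 h2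
  · exact sfun_eq_B hd hn1 hnd hm1 hmd hp hq hq0 hrg hrelx hrely hBrg hBold hBhankel
  · exact fun i j h => sfun_eq_beta hn1 hnd hm1 hmd hp hq hq0 hrg hrelx hrely i j h
  · intro c
    obtain ⟨v, hv⟩ := hBran c
    refine ⟨v, ?_⟩
    rw [← hv]
    funext r
    exact sfun_eq_B hd hn1 hnd hm1 hmd hp hq hq0 hrg hrelx hrely hBrg hBold hBhankel r c
  · exact relations_extend hn1 hnd hm1 hmd hp hq hq0 hker
  · exact sfun_recgen hn1 hnd hm1 hmd hp hq hq0 hrg hrelx hrely hker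
  · rintro C' ⟨hsym', hhank', β'', hβB'', hβC'', hRG''⟩
    funext c c'
    rw [← hβC'' c c']
    exact betaPP_eq hn1 hnd hm1 hmd hp hq hq0 hrg hrelx hrely hBrg hBhankel β'' hβB'' hRG''
      (c.1.2 + c'.1.2) (c.1.1 + c'.1.1) (by
        have := c.2
        have := c'.2
        omega)
end
end

section
/- For every d ≥ 1 there exists a real multisequence β = (β_{ij})_{i+j ≤ 2d} such that: M_d(β) is positive semidefinite and its column relations are generated entirely by relations X^d = p(X,Y) and Y^d = q(X,Y) (p, q of degree ≤ d−1) via recursiveness and linearity; M_d(β) admits successive positive semidefinite, recursively generated moment matrix extensions M_{d+1}, …, M_{2d−1}, each of which again has all of its column relations generated entirely by two such relations via recursiveness and linearity; and rank M_{d+k} = rank M_{d+k−1} + (d − k − 1) for 1 ≤ k ≤ d − 1, so that the first flat extension in this sequence occurs at M_{2d−1} (rank M_{2d−1} = rank M_{2d−2}, while rank M_{d+k} > rank M_{d+k−1} for 1 ≤ k ≤ d − 2). -/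
open Finset Matrix

noncomputable section

namespace S5

def fpoly (d : ℕ) : Polynomial ℝ := ∏ t ∈ Finset.range d, (Polynomial.X - Polynomial.C (t:ℝ))

lemma fpoly_monic (d : ℕ) : (fpoly d).Monic :=
  Polynomial.monic_prod_of_monic _ _ fun _ _ => Polynomial.monic_X_sub_C _

lemma fpoly_natDegree (d : ℕ) : (fpoly d).natDegree = d := by
  rw [fpoly, Polynomial.natDegree_prod]
  · simp only [Polynomial.natDegree_X_sub_C]
    simp
  · intro t _; exact (Polynomial.monic_X_sub_C (t:ℝ)).ne_zero

lemma fpoly_eval (d : ℕ) (s : ℕ) (hs : s < d) : (fpoly d).eval (s:ℝ) = 0 := by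
  rw [fpoly, Polynomial.eval_prod]
  exact Finset.prod_eq_zero (Finset.mem_range.2 hs) (by simp)

def hmom (d : ℕ) : ℕ → ℝ := fun a => ∑ t ∈ Finset.range d, (t:ℝ)^a

def βd (d : ℕ) : ℕ → ℕ → ℝ := fun a b => hmom d a * hmom d b

/-- evaluation matrix: rows = grid points, columns = monomials. -/
def Emat (d D : ℕ) : Matrix (Fin d × Fin d) (Idx D) ℝ :=
  Matrix.of fun st c => ((st.1 : ℕ) : ℝ)^c.1.1 * ((st.2 : ℕ) : ℝ)^c.1.2

lemma M_eq (d D : ℕ) : momentMatrix D (βd d) = (Emat d D)ᵀ * (Emat d D) := by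
  ext r c
  simp only [momentMatrix, Matrix.of_apply, Matrix.mul_apply, Matrix.transpose_apply, Emat, βd,
    hmom, Fintype.sum_prod_type, Fin.sum_univ_eq_sum_range]
  have key : ∀ x y : Fin d, ((x:ℕ):ℝ)^((r:ℕ×ℕ).1) * ((y:ℕ):ℝ)^((r:ℕ×ℕ).2) *
      (((x:ℕ):ℝ)^((c:ℕ×ℕ).1) * ((y:ℕ):ℝ)^((c:ℕ×ℕ).2))
      = ((x:ℕ):ℝ)^((r:ℕ×ℕ).1+(c:ℕ×ℕ).1) * ((y:ℕ):ℝ)^((r:ℕ×ℕ).2+(c:ℕ×ℕ).2) := by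
    intro x y; rw [pow_add, pow_add]; ring
  simp_rw [key]
  rw [← Finset.sum_mul_sum]
  rw [Fin.sum_univ_eq_sum_range (fun s => (s:ℝ)^((r:ℕ×ℕ).1+(c:ℕ×ℕ).1)),
    Fin.sum_univ_eq_sum_range (fun t => (t:ℝ)^((r:ℕ×ℕ).2+(c:ℕ×ℕ).2))]

/-- evaluation of a vector (polynomial of degree ≤ D) at a point. -/
def ev (D : ℕ) (v : Idx D → ℝ) (s t : ℝ) : ℝ := ∑ c : Idx D, v c * s^c.1.1 * t^c.1.2

lemma Emat_mulVec (d D : ℕ) (v : Idx D → ℝ) (st : Fin d × Fin d) :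
    (Emat d D *ᵥ v) st = ev D v ((st.1 : ℕ) : ℝ) ((st.2 : ℕ) : ℝ) := by
  simp only [Matrix.mulVec, dotProduct, Emat, ev, Matrix.of_apply]
  exact Finset.sum_congr rfl fun c _ => by ring

lemma posSemidef (d D : ℕ) : (momentMatrix D (βd d)).PosSemidef := by
  rw [M_eq d D]
  have := Matrix.posSemidef_conjTranspose_mul_self (Emat d D)
  rwa [Matrix.conjTranspose] at this
  -- over ℝ, star = id

lemma ker_iff (d D : ℕ) (v : Idx D → ℝ) :
    momentMatrix D (βd d) *ᵥ v = 0 ↔ ∀ s t : ℕ, s < d → t < d → ev D v s t = 0 := by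
  rw [M_eq d D]
  constructor
  · intro h s t hs ht
    have hq : v ⬝ᵥ (((Emat d D)ᵀ * Emat d D) *ᵥ v) = (Emat d D *ᵥ v) ⬝ᵥ (Emat d D *ᵥ v) := by
      rw [← Matrix.mulVec_mulVec, Matrix.dotProduct_mulVec, Matrix.vecMul_transpose]
    rw [h, dotProduct_zero] at hq
    have hz : ∀ st : Fin d × Fin d, (Emat d D *ᵥ v) st = 0 := by
      intro st
      have h0 : (0:ℝ) = ∑ st : Fin d × Fin d, (Emat d D *ᵥ v) st * (Emat d D *ᵥ v) st := hq
      have := (Finset.sum_eq_zero_iff_of_nonneg (fun i _ => mul_self_nonneg _)).1 h0.symm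
        st (Finset.mem_univ st)
      exact mul_self_eq_zero.1 this
    have := hz (⟨s, hs⟩, ⟨t, ht⟩)
    rwa [Emat_mulVec] at this
  · intro h
    rw [← Matrix.mulVec_mulVec]
    have : Emat d D *ᵥ v = 0 := by
      funext st
      rw [Emat_mulVec]
      exact h st.1 st.2 st.1.2 st.2.2
    rw [this, Matrix.mulVec_zero]

def evC (a : ℕ → ℕ → ℝ) (N : ℕ) (s t : ℝ) : ℝ :=
  ∑ k ∈ Finset.range N, ∑ l ∈ Finset.range N, a k l * s^k * t^l

lemma ev_coeffVec (D : ℕ) (a : ℕ → ℕ → ℝ) (ha : DegLE a D) (s t : ℝ) :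
    ev D (coeffVec D a) s t = evC a (D+1) s t := by
  rw [ev, evC]
  have h := Finset.sum_subtype (p := fun ij : ℕ × ℕ => ij.1 + ij.2 ≤ D)
    (F := (inferInstance : Fintype (Idx D)))
    ((Finset.range (D + 1) ×ˢ Finset.range (D + 1)).filter fun ij => ij.1 + ij.2 ≤ D)
    (by rintro ⟨x, y⟩; simp only [Finset.mem_filter, Finset.mem_product, Finset.mem_range]; omega)
    (fun x : ℕ × ℕ => a x.1 x.2 * s ^ x.1 * t ^ x.2)
  simp only [coeffVec]
  rw [← h, Finset.sum_filter, Finset.sum_product]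
  refine Finset.sum_congr rfl fun k hk => ?_
  refine Finset.sum_congr rfl fun l hl => ?_
  by_cases hkl : k + l ≤ D
  · simp [hkl]
  · simp only [hkl, if_false]
    rw [ha k l (by omega), zero_mul, zero_mul]

lemma evC_shrink (a : ℕ → ℕ → ℝ) (Da N : ℕ) (ha : DegLE a Da) (hN : Da < N) (s t : ℝ) :
    evC a N s t = evC a (Da+1) s t := by
  rw [evC, evC]
  rw [← Finset.sum_subset (Finset.range_subset_range.2 hN)]
  · refine Finset.sum_congr rfl fun k hk => ?_
    refine (Finset.sum_subset (Finset.range_subset_range.2 hN) ?_).symm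
    intro l _ hl
    rw [ha k l (by simp only [Finset.mem_range] at hl ⊢; omega), zero_mul, zero_mul]
  · intro k _ hk
    refine Finset.sum_eq_zero fun l _ => ?_
    rw [ha k l (by simp only [Finset.mem_range] at hk ⊢; omega), zero_mul, zero_mul]

lemma evC_swap (a : ℕ → ℕ → ℝ) (N : ℕ) (s t : ℝ) :
    evC a N s t = ∑ l ∈ Finset.range N, (∑ k ∈ Finset.range N, a k l * s^k) * t^l := by
  rw [evC, Finset.sum_comm]
  exact Finset.sum_congr rfl fun l _ => (Finset.sum_mul _ _ _).symm

lemma cauchy1 (A B : ℕ → ℝ) (N M : ℕ) (hN : 0 < N) (hM : 0 < M)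
    (hA : ∀ i, N ≤ i → A i = 0) (hB : ∀ j, M ≤ j → B j = 0) (s : ℝ) :
    ∑ k ∈ Finset.range (N+M), (∑ i ∈ Finset.range (k+1), A i * B (k-i)) * s^k
      = (∑ i ∈ Finset.range N, A i * s^i) * (∑ j ∈ Finset.range M, B j * s^j) := by
  set pA : Polynomial ℝ := ∑ i ∈ Finset.range N, Polynomial.monomial i (A i) with hpA
  set pB : Polynomial ℝ := ∑ j ∈ Finset.range M, Polynomial.monomial j (B j) with hpB
  have cA : ∀ k, pA.coeff k = A k := by
    intro k
    rw [hpA, Polynomial.finset_sum_coeff]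
    simp only [Polynomial.coeff_monomial]
    rw [Finset.sum_ite_eq' (Finset.range N) k A]
    by_cases h : k ∈ Finset.range N
    · simp [h]
    · simp only [h, if_false]
      exact (hA k (by simpa using h)).symm
  have cB : ∀ k, pB.coeff k = B k := by
    intro k
    rw [hpB, Polynomial.finset_sum_coeff]
    simp only [Polynomial.coeff_monomial]
    rw [Finset.sum_ite_eq' (Finset.range M) k B]
    by_cases h : k ∈ Finset.range M
    · simp [h]
    · simp only [h, if_false]
      exact (hB k (by simpa using h)).symm
  have dA : pA.natDegree ≤ N - 1 :=
    Polynomial.natDegree_sum_le_of_forall_le _ _ fun i hi =>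
      le_trans (Polynomial.natDegree_monomial_le _) (by simp only [Finset.mem_range] at hi; omega)
  have dB : pB.natDegree ≤ M - 1 :=
    Polynomial.natDegree_sum_le_of_forall_le _ _ fun i hi =>
      le_trans (Polynomial.natDegree_monomial_le _) (by simp only [Finset.mem_range] at hi; omega)
  have dAB : (pA * pB).natDegree < N + M :=
    lt_of_le_of_lt (Polynomial.natDegree_mul_le) (by omega)
  have evalA : pA.eval s = ∑ i ∈ Finset.range N, A i * s^i := by
    rw [hpA, Polynomial.eval_finset_sum]
    exact Finset.sum_congr rfl fun i _ => by rw [Polynomial.eval_monomial]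
  have evalB : pB.eval s = ∑ j ∈ Finset.range M, B j * s^j := by
    rw [hpB, Polynomial.eval_finset_sum]
    exact Finset.sum_congr rfl fun i _ => by rw [Polynomial.eval_monomial]
  have evalAB := Polynomial.eval_eq_sum_range' dAB s
  rw [Polynomial.eval_mul, evalA, evalB] at evalAB
  rw [evalAB]
  refine Finset.sum_congr rfl fun k _ => ?_
  congr 1
  rw [Polynomial.coeff_mul, Finset.Nat.sum_antidiagonal_eq_sum_range_succ_mk]
  exact (Finset.sum_congr rfl fun i _ => by rw [cA, cB]).symm

lemma cauchy2 (a b : ℕ → ℕ → ℝ) (Da Db : ℕ) (ha : DegLE a Da) (hb : DegLE b Db) (s t : ℝ) :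
    evC (cMul a b) (Da+Db+2) s t = evC a (Da+1) s t * evC b (Db+1) s t := by
  set φ : ℕ → ℝ := fun j => ∑ i ∈ Finset.range (Da+1), a i j * s^i with hφ
  set ψ : ℕ → ℝ := fun j => ∑ i ∈ Finset.range (Db+1), b i j * s^i with hψ
  have hφ0 : ∀ j, Da + 1 ≤ j → φ j = 0 := by
    intro j hj
    exact Finset.sum_eq_zero fun i _ => by rw [ha i j (by omega), zero_mul]
  have hψ0 : ∀ j, Db + 1 ≤ j → ψ j = 0 := by
    intro j hj
    exact Finset.sum_eq_zero fun i _ => by rw [hb i j (by omega), zero_mul]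
  have step1 : ∀ l, ∑ k ∈ Finset.range (Da+Db+2), cMul a b k l * s^k
      = ∑ j ∈ Finset.range (l+1), φ j * ψ (l-j) := by
    intro l
    have : ∀ k, cMul a b k l * s^k
        = ∑ j ∈ Finset.range (l+1), (∑ i ∈ Finset.range (k+1), a i j * b (k-i) (l-j)) * s^k := by
      intro k
      rw [cMul, Finset.sum_comm, Finset.sum_mul]
    simp_rw [this]
    rw [Finset.sum_comm]
    refine Finset.sum_congr rfl fun j hj => ?_
    have e : Da + Db + 2 = (Da+1) + (Db+1) := by omega
    rw [e]
    exact cauchy1 (fun i => a i j) (fun i => b i (l-j)) (Da+1) (Db+1) (by omega) (by omega)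
      (fun i hi => ha i j (by omega)) (fun i hi => hb i (l-j) (by omega)) s
  rw [evC_swap]
  simp_rw [step1]
  have e : Da + Db + 2 = (Da+1) + (Db+1) := by omega
  rw [e]
  have := cauchy1 φ ψ (Da+1) (Db+1) (by omega) (by omega) hφ0 hψ0 t
  rw [this]
  rw [evC_swap a (Da+1) s t, evC_swap b (Db+1) s t]


-- ===== stage 3a =====
lemma DegLE_mono (a : ℕ → ℕ → ℝ) (D E : ℕ) (h : DegLE a D) (hDE : D ≤ E) : DegLE a E :=
  fun k l hkl => h k l (by omega)

lemma DegLE_shift (a : ℕ → ℕ → ℝ) (Da u v : ℕ) (ha : DegLE a Da) :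
    DegLE (shiftC u v a) (Da + u + v) := by
  intro k l hkl
  rw [shiftC]
  split
  · next h => exact ha _ _ (by omega)
  · rfl

def Fc (d : ℕ) : ℕ → ℕ → ℝ := fun k l => if l = 0 then (fpoly d).coeff k else 0
def Gc (d : ℕ) : ℕ → ℕ → ℝ := fun k l => if k = 0 then (fpoly d).coeff l else 0
def pc (d : ℕ) : ℕ → ℕ → ℝ := fun k l => if l = 0 ∧ k < d then -((fpoly d).coeff k) else 0
def qc (d : ℕ) : ℕ → ℕ → ℝ := fun k l => if k = 0 ∧ l < d then -((fpoly d).coeff l) else 0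

lemma fpoly_coeff_d (d : ℕ) : (fpoly d).coeff d = 1 := by
  have := (fpoly_monic d).coeff_natDegree
  rwa [fpoly_natDegree] at this

lemma fpoly_coeff_gt (d k : ℕ) (h : d < k) : (fpoly d).coeff k = 0 :=
  Polynomial.coeff_eq_zero_of_natDegree_lt (by rw [fpoly_natDegree]; omega)

lemma F_eq (d : ℕ) : (monoC d 0 - pc d) = Fc d := by
  funext k l
  simp only [Pi.sub_apply, monoC, pc, Fc]
  by_cases hl : l = 0
  · subst hl
    by_cases hk : k = d
    · subst hk
      simp [fpoly_coeff_d, lt_irrefl]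
    · by_cases hk2 : k < d
      · simp [hk, hk2]
      · simp only [hk, and_true, and_false, if_false, true_and, if_true]
        rw [fpoly_coeff_gt d k (by omega)]
        simp [hk2]
  · simp [hl]

lemma G_eq (d : ℕ) : (monoC 0 d - qc d) = Gc d := by
  funext k l
  simp only [Pi.sub_apply, monoC, qc, Gc]
  by_cases hk : k = 0
  · subst hk
    by_cases hl : l = d
    · subst hl
      simp [fpoly_coeff_d, lt_irrefl]
    · by_cases hl2 : l < d
      · simp [hl, hl2]
      · simp only [hl, and_true, true_and, and_false, if_false, if_true]
        rw [fpoly_coeff_gt d l (by omega)]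
        simp [hl2]
  · simp [hk]

lemma DegLE_F (d : ℕ) : DegLE (Fc d) d := by
  intro k l hkl
  rw [Fc]
  split
  · next h => exact fpoly_coeff_gt d k (by omega)
  · rfl

lemma DegLE_G (d : ℕ) : DegLE (Gc d) d := by
  intro k l hkl
  rw [Gc]
  split
  · next h => exact fpoly_coeff_gt d l (by omega)
  · rfl

lemma DegLE_pc (d : ℕ) (hd : 1 ≤ d) : DegLE (pc d) (d - 1) := by
  intro k l hkl
  rw [pc]
  split
  · next h => omega
  · rfl

lemma DegLE_qc (d : ℕ) (hd : 1 ≤ d) : DegLE (qc d) (d - 1) := by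
  intro k l hkl
  rw [qc]
  split
  · next h => omega
  · rfl

lemma evC_F (d N : ℕ) (hN : d < N) (s t : ℝ) : evC (Fc d) N s t = (fpoly d).eval s := by
  rw [evC]
  have inner : ∀ k, ∑ l ∈ Finset.range N, Fc d k l * s^k * t^l
      = (fpoly d).coeff k * s^k := by
    intro k
    have : ∀ l, Fc d k l * s^k * t^l = if l = 0 then (fpoly d).coeff k * s^k else 0 := by
      intro l
      rw [Fc]
      by_cases hl : l = 0
      · subst hl; simp
      · simp [hl]
    simp_rw [this]
    rw [Finset.sum_ite_eq' (Finset.range N) 0 (fun _ => (fpoly d).coeff k * s^k)]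
    rw [if_pos (Finset.mem_range.2 (by omega))]
  simp_rw [inner]
  rw [Polynomial.eval_eq_sum_range' (by rw [fpoly_natDegree]; exact hN) s]

lemma evC_G (d N : ℕ) (hN : d < N) (s t : ℝ) : evC (Gc d) N s t = (fpoly d).eval t := by
  rw [evC, Finset.sum_comm]
  have inner : ∀ l, ∑ k ∈ Finset.range N, Gc d k l * s^k * t^l
      = (fpoly d).coeff l * t^l := by
    intro l
    have : ∀ k, Gc d k l * s^k * t^l = if k = 0 then (fpoly d).coeff l * t^l else 0 := by
      intro k
      rw [Gc]
      by_cases hk : k = 0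
      · subst hk; simp
      · simp [hk]
    simp_rw [this]
    rw [Finset.sum_ite_eq' (Finset.range N) 0 (fun _ => (fpoly d).coeff l * t^l)]
    rw [if_pos (Finset.mem_range.2 (by omega))]
  simp_rw [inner]
  rw [Polynomial.eval_eq_sum_range' (by rw [fpoly_natDegree]; exact hN) t]

lemma shift_sum1 (g : ℕ → ℝ) (u N : ℕ) (hg : ∀ k, N ≤ u + k → g k = 0) (x : ℝ) :
    ∑ k ∈ Finset.range N, (if u ≤ k then g (k - u) else 0) * x^k
      = x^u * ∑ k ∈ Finset.range N, g k * x^k := by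
  rw [← Finset.sum_subset (show Finset.Ico u N ⊆ Finset.range N by
      intro k hk; simp only [Finset.mem_Ico] at hk; exact Finset.mem_range.2 hk.2)
    (by
      intro k hk hk2
      simp only [Finset.mem_range] at hk
      simp only [Finset.mem_Ico] at hk2
      have : ¬ u ≤ k := by omega
      simp [this])]
  rw [Finset.sum_Ico_eq_sum_range]
  have e1 : ∀ j, (if u ≤ u + j then g (u + j - u) else 0) * x^(u+j) = x^u * (g j * x^j) := by
    intro j
    have h1 : u ≤ u + j := Nat.le_add_right u j
    rw [if_pos h1, Nat.add_sub_cancel_left, pow_add]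
    ring
  simp_rw [e1]
  rw [← Finset.mul_sum]
  congr 1
  refine Finset.sum_subset (by intro k hk; simp only [Finset.mem_range] at hk ⊢; omega) ?_
  intro k hk hk2
  simp only [Finset.mem_range] at hk hk2
  rw [hg k (by omega), zero_mul]

lemma evC_shift (a : ℕ → ℕ → ℝ) (Da u v N : ℕ) (ha : DegLE a Da) (hN : Da + u + v < N)
    (s t : ℝ) : evC (shiftC u v a) N s t = s^u * t^v * evC a N s t := by
  rw [evC, evC]
  have inner : ∀ k, ∑ l ∈ Finset.range N, shiftC u v a k l * s^k * t^l
      = (if u ≤ k then (t^v * ∑ l ∈ Finset.range N, a (k-u) l * t^l) * s^k else 0) := by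
    intro k
    by_cases hk : u ≤ k
    · rw [if_pos hk]
      have e : ∀ l, shiftC u v a k l * s^k * t^l
          = ((if v ≤ l then (a (k-u) (l-v) * s^k) else 0) * t^l) := by
        intro l
        rw [shiftC]
        by_cases hl : v ≤ l
        · rw [if_pos ⟨hk, hl⟩, if_pos hl]
        · rw [if_neg (fun h => hl h.2), if_neg hl]
          simp
      simp_rw [e]
      rw [shift_sum1 (fun l => a (k-u) l * s^k) v N
        (fun l hl => by
          show a (k-u) l * s^k = 0
          rw [ha (k-u) l (by omega), zero_mul]) t]
      have e2 : ∀ l, a (k-u) l * s^k * t^l = a (k-u) l * t^l * s^k := fun l => by ring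
      simp_rw [e2]
      rw [← Finset.sum_mul]
      ring
    · rw [if_neg hk]
      refine Finset.sum_eq_zero fun l _ => ?_
      rw [shiftC, if_neg (fun h => hk h.1)]
      simp
  simp_rw [inner]
  rw [← Finset.sum_subset (show Finset.Ico u N ⊆ Finset.range N by
      intro k hk; simp only [Finset.mem_Ico] at hk; exact Finset.mem_range.2 hk.2)
    (by
      intro k hk hk2
      simp only [Finset.mem_range] at hk
      simp only [Finset.mem_Ico] at hk2
      have : ¬ u ≤ k := by omega
      simp [this])]
  rw [Finset.sum_Ico_eq_sum_range]
  have e1 : ∀ j, (if u ≤ u + j then (t^v * ∑ l ∈ Finset.range N, a (u+j-u) l * t^l) * s^(u+j) else 0)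
      = s^u * t^v * ((∑ l ∈ Finset.range N, a j l * t^l) * s^j) := by
    intro j
    rw [if_pos (Nat.le_add_right u j), Nat.add_sub_cancel_left, pow_add]
    ring
  simp_rw [e1]
  rw [← Finset.mul_sum]
  congr 1
  have e2 : ∀ k, ∑ l ∈ Finset.range N, a k l * s^k * t^l
      = (∑ l ∈ Finset.range N, a k l * t^l) * s^k := by
    intro k
    rw [Finset.sum_mul]
    exact Finset.sum_congr rfl fun l _ => by ring
  simp_rw [e2]
  refine Finset.sum_subset (by intro k hk; simp only [Finset.mem_range] at hk ⊢; omega) ?_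
  intro k hk hk2
  simp only [Finset.mem_range] at hk hk2
  rw [Finset.sum_eq_zero (fun l _ => by rw [ha k l (by omega), zero_mul]), zero_mul]

-- ===== stage 3b =====

def SpanSet (d D : ℕ) : Set (Idx D → ℝ) :=
  {w : Idx D → ℝ |
    (∃ i j : ℕ, d + i + j ≤ D ∧ w = coeffVec D (shiftC i j (monoC d 0 - pc d))) ∨
    (∃ k l : ℕ, d + k + l ≤ D ∧ w = coeffVec D (shiftC k l (monoC 0 d - qc d)))}

lemma ev_gen_zeroX (d D i j : ℕ) (hij : d + i + j ≤ D) (s t : ℕ) (hs : s < d) :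
    ev D (coeffVec D (shiftC i j (Fc d))) (s:ℝ) (t:ℝ) = 0 := by
  rw [ev_coeffVec D _ (DegLE_mono _ _ _ (DegLE_shift _ d i j (DegLE_F d)) (by omega))]
  rw [evC_shift _ d i j (D+1) (DegLE_F d) (by omega)]
  rw [evC_F d (D+1) (by omega), fpoly_eval d s hs, mul_zero]

lemma ev_gen_zeroY (d D k l : ℕ) (hkl : d + k + l ≤ D) (s t : ℕ) (ht : t < d) :
    ev D (coeffVec D (shiftC k l (Gc d))) (s:ℝ) (t:ℝ) = 0 := by
  rw [ev_coeffVec D _ (DegLE_mono _ _ _ (DegLE_shift _ d k l (DegLE_G d)) (by omega))]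
  rw [evC_shift _ d k l (D+1) (DegLE_G d) (by omega)]
  rw [evC_G d (D+1) (by omega), fpoly_eval d t ht, mul_zero]

lemma ev_sub_smul (D : ℕ) (v g : Idx D → ℝ) (r : ℝ) (s t : ℝ) :
    ev D (v - r • g) s t = ev D v s t - r * ev D g s t := by
  rw [ev, ev, ev]
  rw [Finset.mul_sum, ← Finset.sum_sub_distrib]
  refine Finset.sum_congr rfl fun c _ => ?_
  simp only [Pi.sub_apply, Pi.smul_apply, smul_eq_mul]
  ring

def truncFin (d D : ℕ) (v : Idx D → ℝ) : Fin d × Fin d → ℝ :=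
  fun ab => if h : (ab.1:ℕ) + (ab.2:ℕ) ≤ D then v ⟨((ab.1:ℕ),(ab.2:ℕ)), h⟩ else 0

lemma vanish_eq_zero (d D : ℕ) (hd : 1 ≤ d) (hD2 : D < 2*d) (v : Idx D → ℝ)
    (hgood : ∀ c : Idx D, (d ≤ c.1.1 ∨ d ≤ c.1.2) → v c = 0)
    (hv : ∀ s t : ℕ, s < d → t < d → ev D v (s:ℝ) (t:ℝ) = 0) : v = 0 := by
  classical
  set W : Matrix (Fin d) (Fin d) ℝ := Matrix.vandermonde (fun i : Fin d => ((i:ℕ):ℝ)) with hW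
  set V : Matrix (Fin d × Fin d) (Fin d × Fin d) ℝ := Matrix.kroneckerMap (· * ·) W W with hV
  have hdetW : W.det ≠ 0 := by
    rw [hW, Matrix.det_vandermonde]
    rw [Finset.prod_ne_zero_iff]
    intro i _
    rw [Finset.prod_ne_zero_iff]
    intro j hj
    have hij : i < j := Finset.mem_Ioi.1 hj
    have hij2 : (i:ℕ) < (j:ℕ) := hij
    have hij3 : ((i:ℕ):ℝ) < ((j:ℕ):ℝ) := by exact_mod_cast hij2
    intro h0
    linarith
  have hdetV : V.det ≠ 0 := by
    rw [hV, Matrix.det_kronecker]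
    exact mul_ne_zero (pow_ne_zero _ hdetW) (pow_ne_zero _ hdetW)
  set u := truncFin d D v with hu
  have hVu : V *ᵥ u = 0 := by
    funext st
    have key : (V *ᵥ u) st = ev D v ((st.1:ℕ):ℝ) ((st.2:ℕ):ℝ) := by
      rw [Matrix.mulVec, dotProduct, ev]
      rw [← Finset.sum_subset
        (Finset.filter_subset (fun ab : Fin d × Fin d => (ab.1:ℕ) + (ab.2:ℕ) ≤ D) Finset.univ)
        (by
          intro ab _ hab
          simp only [Finset.mem_filter, Finset.mem_univ, true_and] at hab
          rw [hu, truncFin, dif_neg hab, mul_zero])]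
      rw [← Finset.sum_subset
        (Finset.filter_subset (fun c : Idx D => c.1.1 < d ∧ c.1.2 < d) Finset.univ)
        (by
          intro c _ hc
          simp only [Finset.mem_filter, Finset.mem_univ, true_and] at hc
          rw [hgood c (by omega), zero_mul, zero_mul])]
      refine Finset.sum_bij'
        (fun ab hab => (⟨((ab.1:ℕ), (ab.2:ℕ)),
          (Finset.mem_filter.1 hab).2⟩ : Idx D))
        (fun c hc => ((⟨c.1.1, (Finset.mem_filter.1 hc).2.1⟩ : Fin d),
          (⟨c.1.2, (Finset.mem_filter.1 hc).2.2⟩ : Fin d)))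
        ?_ ?_ ?_ ?_ ?_
      · intro ab hab
        simp only [Finset.mem_filter, Finset.mem_univ, true_and]
        exact ⟨(ab.1).2, (ab.2).2⟩
      · intro c hc
        simp only [Finset.mem_filter, Finset.mem_univ, true_and]
        exact c.2
      · intro ab hab
        rfl
      · intro c hc
        rfl
      · intro ab hab
        rw [hu, truncFin, dif_pos (Finset.mem_filter.1 hab).2]
        rw [hV]
        simp only [Matrix.kroneckerMap_apply, hW, Matrix.vandermonde]
        show ((st.1:ℕ):ℝ)^((ab.1:ℕ)) * ((st.2:ℕ):ℝ)^((ab.2:ℕ)) * _ = _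
        ring
    rw [key, hv st.1 st.2 st.1.2 st.2.2]
    rfl
  have hu0 : u = 0 := by
    have hunit : IsUnit V.det := isUnit_iff_ne_zero.2 hdetV
    calc u = (1 : Matrix (Fin d × Fin d) (Fin d × Fin d) ℝ) *ᵥ u := (Matrix.one_mulVec u).symm
    _ = (V⁻¹ * V) *ᵥ u := by rw [Matrix.nonsing_inv_mul V hunit]
    _ = V⁻¹ *ᵥ (V *ᵥ u) := by rw [Matrix.mulVec_mulVec]
    _ = 0 := by rw [hVu, Matrix.mulVec_zero]
  funext c
  by_cases hc : d ≤ c.1.1 ∨ d ≤ c.1.2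
  · exact hgood c hc
  · push_neg at hc
    have h1 : c.1.1 < d := hc.1
    have h2 : c.1.2 < d := hc.2
    have : u ((⟨c.1.1, h1⟩ : Fin d), (⟨c.1.2, h2⟩ : Fin d)) = v c := by
      rw [hu, truncFin]
      rw [dif_pos c.2]
    rw [← this, hu0]
    rfl

def gX (d D i j : ℕ) : Idx D → ℝ := coeffVec D (shiftC i j (Fc d))
def gY (d D k l : ℕ) : Idx D → ℝ := coeffVec D (shiftC k l (Gc d))

lemma gX_apply (d D i j : ℕ) (c : Idx D) :
    gX d D i j c = if i ≤ c.1.1 ∧ c.1.2 = j then (fpoly d).coeff (c.1.1 - i) else 0 := by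
  rw [gX, coeffVec, shiftC, Fc]
  by_cases h1 : i ≤ c.1.1
  · by_cases h2 : c.1.2 = j
    · rw [if_pos ⟨h1, by omega⟩, if_pos (by omega), if_pos ⟨h1, h2⟩]
    · by_cases h3 : j ≤ c.1.2
      · rw [if_pos ⟨h1, h3⟩, if_neg (by omega), if_neg (by tauto)]
      · rw [if_neg (by tauto), if_neg (by tauto)]
  · rw [if_neg (by tauto), if_neg (by tauto)]

lemma gY_apply (d D k l : ℕ) (c : Idx D) :
    gY d D k l c = if c.1.1 = k ∧ l ≤ c.1.2 then (fpoly d).coeff (c.1.2 - l) else 0 := by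
  rw [gY, coeffVec, shiftC, Gc]
  by_cases h1 : l ≤ c.1.2
  · by_cases h2 : c.1.1 = k
    · rw [if_pos ⟨by omega, h1⟩, if_pos (by omega), if_pos ⟨h2, h1⟩]
    · by_cases h3 : k ≤ c.1.1
      · rw [if_pos ⟨h3, h1⟩, if_neg (by omega), if_neg (by tauto)]
      · rw [if_neg (by tauto), if_neg (by tauto)]
  · rw [if_neg (by tauto), if_neg (by tauto)]

open Classical in
def badSet (d D : ℕ) (v : Idx D → ℝ) : Finset (Idx D) :=
  Finset.univ.filter (fun c => v c ≠ 0 ∧ (d ≤ c.1.1 ∨ d ≤ c.1.2))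

lemma mem_badSet {d D : ℕ} {v : Idx D → ℝ} {c : Idx D} :
    c ∈ badSet d D v ↔ (v c ≠ 0 ∧ (d ≤ c.1.1 ∨ d ≤ c.1.2)) := by
  classical
  rw [badSet]
  simp

def phi (d D : ℕ) (v : Idx D → ℝ) : ℕ := ∑ c ∈ badSet d D v, (d+1)^(max c.1.1 c.1.2)

lemma geom_lt (d : ℕ) (hd : 1 ≤ d) : ∀ a : ℕ, ∑ k ∈ Finset.range a, (d+1)^k < (d+1)^a := by
  intro a
  induction a with
  | zero => simp
  | succ a ih =>
    rw [Finset.sum_range_succ, pow_succ]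
    calc (∑ k ∈ Finset.range a, (d+1)^k) + (d+1)^a < (d+1)^a + (d+1)^a := Nat.add_lt_add_right ih _
    _ = (d+1)^a * 2 := by ring
    _ ≤ (d+1)^a * (d+1) := by
      have h2 : 2 ≤ d + 1 := by omega
      exact Nat.mul_le_mul_left _ h2

lemma sum_union_le' {α : Type*} [DecidableEq α] (A B : Finset α) (f : α → ℕ) :
    ∑ x ∈ A ∪ B, f x ≤ ∑ x ∈ A, f x + ∑ x ∈ B, f x := by
  have := Finset.sum_union_inter (s₁ := A) (s₂ := B) (f := f)
  omega

lemma gX_mem_SpanSet (d D i j : ℕ) (hij : d + i + j ≤ D) : gX d D i j ∈ SpanSet d D := by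
  refine Or.inl ⟨i, j, hij, ?_⟩
  rw [gX, F_eq]

lemma gY_mem_SpanSet (d D k l : ℕ) (hkl : d + k + l ≤ D) : gY d D k l ∈ SpanSet d D := by
  refine Or.inr ⟨k, l, hkl, ?_⟩
  rw [gY, G_eq]

lemma ev_gX_zero (d D i j : ℕ) (hij : d + i + j ≤ D) (s t : ℕ) (hs : s < d) :
    ev D (gX d D i j) (s:ℝ) (t:ℝ) = 0 := ev_gen_zeroX d D i j hij s t hs

lemma ev_gY_zero (d D k l : ℕ) (hkl : d + k + l ≤ D) (s t : ℕ) (ht : t < d) :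
    ev D (gY d D k l) (s:ℝ) (t:ℝ) = 0 := ev_gen_zeroY d D k l hkl s t ht

lemma vanish_mem_span (d D : ℕ) (hd : 1 ≤ d) (hDl : d ≤ D) (hD2 : D < 2*d)
    (v : Idx D → ℝ) (hv : ∀ s t : ℕ, s < d → t < d → ev D v (s:ℝ) (t:ℝ) = 0) :
    v ∈ Submodule.span ℝ (SpanSet d D) := by
  classical
  suffices H : ∀ n : ℕ, ∀ w : Idx D → ℝ, phi d D w = n →
      (∀ s t : ℕ, s < d → t < d → ev D w (s:ℝ) (t:ℝ) = 0) →
      w ∈ Submodule.span ℝ (SpanSet d D) from H _ v rfl hv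
  intro n
  induction n using Nat.strong_induction_on with
  | _ n IH =>
  intro w hphi hw
  by_cases hB : badSet d D w = ∅
  · have hgood : ∀ c : Idx D, (d ≤ c.1.1 ∨ d ≤ c.1.2) → w c = 0 := by
      intro c hc
      by_contra hne
      have : c ∈ badSet d D w := mem_badSet.2 ⟨hne, hc⟩
      rw [hB] at this
      exact absurd this (Finset.notMem_empty c)
    rw [vanish_eq_zero d D hd hD2 w hgood hw]
    exact Submodule.zero_mem _
  · obtain ⟨c₀, hc₀⟩ := Finset.nonempty_of_ne_empty hB
    obtain ⟨hw0, hbad⟩ := mem_badSet.1 hc₀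
    have hab : c₀.1.1 + c₀.1.2 ≤ D := c₀.2
    rcases hbad with hda | hdb
    · -- X case : d ≤ c₀.1.1
      have hbd : c₀.1.2 < d := by omega
      set g := gX d D (c₀.1.1 - d) c₀.1.2 with hgdef
      have hmem : g ∈ SpanSet d D := gX_mem_SpanSet d D _ _ (by omega)
      have hgc : ∀ c : Idx D, g c = if c₀.1.1 - d ≤ c.1.1 ∧ c.1.2 = c₀.1.2
          then (fpoly d).coeff (c.1.1 - (c₀.1.1 - d)) else 0 := fun c => gX_apply d D _ _ c
      have hgc₀ : g c₀ = 1 := by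
        rw [hgc c₀, if_pos ⟨by omega, rfl⟩]
        have e : c₀.1.1 - (c₀.1.1 - d) = d := by omega
        rw [e, fpoly_coeff_d]
      set w' := w - w c₀ • g with hw'def
      have hw'v : ∀ s t : ℕ, s < d → t < d → ev D w' (s:ℝ) (t:ℝ) = 0 := by
        intro s t hs ht
        rw [hw'def, ev_sub_smul, hw s t hs ht, hgdef]
        rw [ev_gX_zero d D (c₀.1.1 - d) c₀.1.2 (by omega) s t hs, mul_zero, sub_zero]
      have hw'c₀ : w' c₀ = 0 := by
        rw [hw'def]
        simp only [Pi.sub_apply, Pi.smul_apply, smul_eq_mul]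
        rw [hgc₀, mul_one, sub_self]
      set T : Finset (Idx D) := Finset.univ.filter
        (fun c => c.1.2 = c₀.1.2 ∧ d ≤ c.1.1 ∧ c.1.1 < c₀.1.1) with hT
      have hsub : badSet d D w' ⊆ ((badSet d D w).erase c₀) ∪ T := by
        intro c hc
        obtain ⟨hne, hbadc⟩ := mem_badSet.1 hc
        have hcne : c ≠ c₀ := fun h => hne (h ▸ hw'c₀)
        by_cases hvc : w c = 0
        · have hgcne : g c ≠ 0 := by
            intro h0
            apply hne
            rw [hw'def]
            simp only [Pi.sub_apply, Pi.smul_apply, smul_eq_mul]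
            rw [hvc, h0, mul_zero, sub_zero]
          have hcond : c₀.1.1 - d ≤ c.1.1 ∧ c.1.2 = c₀.1.2 := by
            by_contra hcd
            rw [hgc c, if_neg hcd] at hgcne
            exact hgcne rfl
          have hle : c.1.1 ≤ c₀.1.1 := by
            by_contra hgt
            apply hgcne
            rw [hgc c, if_pos hcond, fpoly_coeff_gt d _ (by omega)]
          have hlt : c.1.1 < c₀.1.1 := by
            rcases Nat.lt_or_ge c.1.1 c₀.1.1 with h | h
            · exact h
            · exfalso
              apply hcne
              apply Subtype.ext
              apply Prod.ext
              · omega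
              · exact hcond.2
          have hdc : d ≤ c.1.1 := by
            rcases hbadc with h | h
            · exact h
            · omega
          exact Finset.mem_union_right _ (Finset.mem_filter.2
            ⟨Finset.mem_univ c, hcond.2, hdc, hlt⟩)
        · exact Finset.mem_union_left _
            (Finset.mem_erase.2 ⟨hcne, mem_badSet.2 ⟨hvc, hbadc⟩⟩)
      have h1 : phi d D w' ≤ (∑ c ∈ (badSet d D w).erase c₀, (d+1)^(max c.1.1 c.1.2))
          + ∑ c ∈ T, (d+1)^(max c.1.1 c.1.2) :=
        le_trans (Finset.sum_le_sum_of_subset hsub) (sum_union_le' _ _ _)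
      have h2 : (∑ c ∈ (badSet d D w).erase c₀, (d+1)^(max c.1.1 c.1.2))
          + (d+1)^(c₀.1.1) = phi d D w := by
        have h := Finset.add_sum_erase _ (fun c : Idx D => (d+1)^(max c.1.1 c.1.2)) hc₀
        rw [phi, ← h, max_eq_left (by omega : c₀.1.2 ≤ c₀.1.1)]
        omega
      have h3 : (∑ c ∈ T, (d+1)^(max c.1.1 c.1.2)) < (d+1)^(c₀.1.1) := by
        have e1 : ∑ c ∈ T, (d+1)^(max c.1.1 c.1.2) = ∑ c ∈ T, (d+1)^(c.1.1) := by
          refine Finset.sum_congr rfl fun c hc => ?_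
          obtain ⟨-, h⟩ := Finset.mem_filter.1 hc
          rw [max_eq_left (by omega : c.1.2 ≤ c.1.1)]
        have hinj : Set.InjOn (fun c : Idx D => c.1.1) T := by
          intro x hx y hy hxy
          obtain ⟨-, hx2⟩ := Finset.mem_filter.1 hx
          obtain ⟨-, hy2⟩ := Finset.mem_filter.1 hy
          apply Subtype.ext
          apply Prod.ext
          · exact hxy
          · rw [hx2.1, hy2.1]
        have e2 : ∑ c ∈ T, (d+1)^(c.1.1)
            = ∑ k ∈ T.image (fun c : Idx D => c.1.1), (d+1)^k := by
          rw [Finset.sum_image (fun x hx y hy h => hinj hx hy h)]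
        have e3 : T.image (fun c : Idx D => c.1.1) ⊆ Finset.range c₀.1.1 := by
          intro k hk
          obtain ⟨c, hc, rfl⟩ := Finset.mem_image.1 hk
          obtain ⟨-, h⟩ := Finset.mem_filter.1 hc
          exact Finset.mem_range.2 h.2.2
        calc ∑ c ∈ T, (d+1)^(max c.1.1 c.1.2) = ∑ c ∈ T, (d+1)^(c.1.1) := e1
        _ = ∑ k ∈ T.image (fun c : Idx D => c.1.1), (d+1)^k := e2
        _ ≤ ∑ k ∈ Finset.range c₀.1.1, (d+1)^k := Finset.sum_le_sum_of_subset e3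
        _ < (d+1)^(c₀.1.1) := geom_lt d hd _
      have hlt : phi d D w' < n := by omega
      have hw'span := IH _ hlt w' rfl hw'v
      have : w = w' + w c₀ • g := by
        rw [hw'def]
        abel
      rw [this]
      exact Submodule.add_mem _ hw'span
        (Submodule.smul_mem _ _ (Submodule.subset_span hmem))
    · -- Y case : d ≤ c₀.1.2
      have hbd : c₀.1.1 < d := by omega
      set g := gY d D c₀.1.1 (c₀.1.2 - d) with hgdef
      have hmem : g ∈ SpanSet d D := gY_mem_SpanSet d D _ _ (by omega)
      have hgc : ∀ c : Idx D, g c = if c.1.1 = c₀.1.1 ∧ c₀.1.2 - d ≤ c.1.2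
          then (fpoly d).coeff (c.1.2 - (c₀.1.2 - d)) else 0 := fun c => gY_apply d D _ _ c
      have hgc₀ : g c₀ = 1 := by
        rw [hgc c₀, if_pos ⟨rfl, by omega⟩]
        have e : c₀.1.2 - (c₀.1.2 - d) = d := by omega
        rw [e, fpoly_coeff_d]
      set w' := w - w c₀ • g with hw'def
      have hw'v : ∀ s t : ℕ, s < d → t < d → ev D w' (s:ℝ) (t:ℝ) = 0 := by
        intro s t hs ht
        rw [hw'def, ev_sub_smul, hw s t hs ht, hgdef]
        rw [ev_gY_zero d D c₀.1.1 (c₀.1.2 - d) (by omega) s t ht, mul_zero, sub_zero]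
      have hw'c₀ : w' c₀ = 0 := by
        rw [hw'def]
        simp only [Pi.sub_apply, Pi.smul_apply, smul_eq_mul]
        rw [hgc₀, mul_one, sub_self]
      set T : Finset (Idx D) := Finset.univ.filter
        (fun c => c.1.1 = c₀.1.1 ∧ d ≤ c.1.2 ∧ c.1.2 < c₀.1.2) with hT
      have hsub : badSet d D w' ⊆ ((badSet d D w).erase c₀) ∪ T := by
        intro c hc
        obtain ⟨hne, hbadc⟩ := mem_badSet.1 hc
        have hcne : c ≠ c₀ := fun h => hne (h ▸ hw'c₀)
        by_cases hvc : w c = 0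
        · have hgcne : g c ≠ 0 := by
            intro h0
            apply hne
            rw [hw'def]
            simp only [Pi.sub_apply, Pi.smul_apply, smul_eq_mul]
            rw [hvc, h0, mul_zero, sub_zero]
          have hcond : c.1.1 = c₀.1.1 ∧ c₀.1.2 - d ≤ c.1.2 := by
            by_contra hcd
            rw [hgc c, if_neg hcd] at hgcne
            exact hgcne rfl
          have hle : c.1.2 ≤ c₀.1.2 := by
            by_contra hgt
            apply hgcne
            rw [hgc c, if_pos hcond, fpoly_coeff_gt d _ (by omega)]
          have hlt : c.1.2 < c₀.1.2 := by
            rcases Nat.lt_or_ge c.1.2 c₀.1.2 with h | h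
            · exact h
            · exfalso
              apply hcne
              apply Subtype.ext
              apply Prod.ext
              · exact hcond.1
              · omega
          have hdc : d ≤ c.1.2 := by
            rcases hbadc with h | h
            · omega
            · exact h
          exact Finset.mem_union_right _ (Finset.mem_filter.2
            ⟨Finset.mem_univ c, hcond.1, hdc, hlt⟩)
        · exact Finset.mem_union_left _
            (Finset.mem_erase.2 ⟨hcne, mem_badSet.2 ⟨hvc, hbadc⟩⟩)
      have h1 : phi d D w' ≤ (∑ c ∈ (badSet d D w).erase c₀, (d+1)^(max c.1.1 c.1.2))
          + ∑ c ∈ T, (d+1)^(max c.1.1 c.1.2) :=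
        le_trans (Finset.sum_le_sum_of_subset hsub) (sum_union_le' _ _ _)
      have h2 : (∑ c ∈ (badSet d D w).erase c₀, (d+1)^(max c.1.1 c.1.2))
          + (d+1)^(c₀.1.2) = phi d D w := by
        have h := Finset.add_sum_erase _ (fun c : Idx D => (d+1)^(max c.1.1 c.1.2)) hc₀
        rw [phi, ← h, max_eq_right (by omega : c₀.1.1 ≤ c₀.1.2)]
        omega
      have h3 : (∑ c ∈ T, (d+1)^(max c.1.1 c.1.2)) < (d+1)^(c₀.1.2) := by
        have e1 : ∑ c ∈ T, (d+1)^(max c.1.1 c.1.2) = ∑ c ∈ T, (d+1)^(c.1.2) := by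
          refine Finset.sum_congr rfl fun c hc => ?_
          obtain ⟨-, h⟩ := Finset.mem_filter.1 hc
          rw [max_eq_right (by omega : c.1.1 ≤ c.1.2)]
        have hinj : Set.InjOn (fun c : Idx D => c.1.2) T := by
          intro x hx y hy hxy
          obtain ⟨-, hx2⟩ := Finset.mem_filter.1 hx
          obtain ⟨-, hy2⟩ := Finset.mem_filter.1 hy
          apply Subtype.ext
          apply Prod.ext
          · rw [hx2.1, hy2.1]
          · exact hxy
        have e2 : ∑ c ∈ T, (d+1)^(c.1.2)
            = ∑ k ∈ T.image (fun c : Idx D => c.1.2), (d+1)^k := by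
          rw [Finset.sum_image (fun x hx y hy h => hinj hx hy h)]
        have e3 : T.image (fun c : Idx D => c.1.2) ⊆ Finset.range c₀.1.2 := by
          intro k hk
          obtain ⟨c, hc, rfl⟩ := Finset.mem_image.1 hk
          obtain ⟨-, h⟩ := Finset.mem_filter.1 hc
          exact Finset.mem_range.2 h.2.2
        calc ∑ c ∈ T, (d+1)^(max c.1.1 c.1.2) = ∑ c ∈ T, (d+1)^(c.1.2) := e1
        _ = ∑ k ∈ T.image (fun c : Idx D => c.1.2), (d+1)^k := e2
        _ ≤ ∑ k ∈ Finset.range c₀.1.2, (d+1)^k := Finset.sum_le_sum_of_subset e3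
        _ < (d+1)^(c₀.1.2) := geom_lt d hd _
      have hlt : phi d D w' < n := by omega
      have hw'span := IH _ hlt w' rfl hw'v
      have : w = w' + w c₀ • g := by
        rw [hw'def]
        abel
      rw [this]
      exact Submodule.add_mem _ hw'span
        (Submodule.smul_mem _ _ (Submodule.subset_span hmem))

lemma ker_iff_span (d D : ℕ) (hd : 1 ≤ d) (hDl : d ≤ D) (hD2 : D < 2*d) (v : Idx D → ℝ) :
    momentMatrix D (βd d) *ᵥ v = 0 ↔ v ∈ Submodule.span ℝ (SpanSet d D) := by
  constructor
  · intro h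
    exact vanish_mem_span d D hd hDl hD2 v ((ker_iff d D v).1 h)
  · intro h
    have hsub : SpanSet d D ⊆ (LinearMap.ker (momentMatrix D (βd d)).mulVecLin : Set _) := by
      rintro x (⟨i, j, hij, rfl⟩ | ⟨k, l, hkl, rfl⟩)
      · rw [SetLike.mem_coe, LinearMap.mem_ker, Matrix.mulVecLin_apply, ker_iff]
        intro s t hs ht
        rw [F_eq]
        exact ev_gen_zeroX d D i j hij s t hs
      · rw [SetLike.mem_coe, LinearMap.mem_ker, Matrix.mulVecLin_apply, ker_iff]
        intro s t hs ht
        rw [G_eq]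
        exact ev_gen_zeroY d D k l hkl s t ht
    have hker := Submodule.span_le.2 hsub h
    rw [LinearMap.mem_ker, Matrix.mulVecLin_apply] at hker
    exact hker

-- ===== stage 4 : rank =====

def Ngood (d D : ℕ) : ℕ :=
  ((Finset.range d ×ˢ Finset.range d).filter (fun ab => ab.1 + ab.2 ≤ D)).card

def colE (d D : ℕ) : Idx D → (Fin d × Fin d → ℝ) := fun c => (Emat d D)ᵀ c

def GoodIdx (d D : ℕ) : Finset (Idx D) :=
  Finset.univ.filter (fun c => c.1.1 < d ∧ c.1.2 < d)

lemma card_GoodIdx (d D : ℕ) : (GoodIdx d D).card = Ngood d D := by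
  classical
  refine Finset.card_bij (fun c _ => (c.1.1, c.1.2)) ?_ ?_ ?_
  · intro c hc
    obtain ⟨-, h1, h2⟩ := Finset.mem_filter.1 hc
    simp only [Finset.mem_filter, Finset.mem_product, Finset.mem_range]
    exact ⟨⟨h1, h2⟩, c.2⟩
  · intro c1 h1 c2 h2 h
    apply Subtype.ext
    apply Prod.ext
    · exact congrArg Prod.fst h
    · exact congrArg Prod.snd h
  · intro b hb
    simp only [Finset.mem_filter, Finset.mem_product, Finset.mem_range] at hb
    exact ⟨⟨(b.1, b.2), hb.2⟩, Finset.mem_filter.2 ⟨Finset.mem_univ _, hb.1.1, hb.1.2⟩, rfl⟩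

lemma vmatrix_isUnit (d : ℕ) :
    IsUnit (Matrix.kroneckerMap (· * ·) (Matrix.vandermonde (fun i : Fin d => ((i:ℕ):ℝ)))
      (Matrix.vandermonde (fun i : Fin d => ((i:ℕ):ℝ)))) := by
  rw [Matrix.isUnit_iff_isUnit_det, isUnit_iff_ne_zero, Matrix.det_kronecker]
  have hdetW : (Matrix.vandermonde (fun i : Fin d => ((i:ℕ):ℝ))).det ≠ 0 := by
    rw [Matrix.det_vandermonde, Finset.prod_ne_zero_iff]
    intro i _
    rw [Finset.prod_ne_zero_iff]
    intro j hj
    have hij : i < j := Finset.mem_Ioi.1 hj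
    have hij2 : (i:ℕ) < (j:ℕ) := hij
    have hij3 : ((i:ℕ):ℝ) < ((j:ℕ):ℝ) := by exact_mod_cast hij2
    intro h0
    linarith
  exact mul_ne_zero (pow_ne_zero _ hdetW) (pow_ne_zero _ hdetW)

lemma colE_good_indep (d D : ℕ) :
    LinearIndependent ℝ (fun g : {x // x ∈ GoodIdx d D} => colE d D g.1) := by
  classical
  set V := Matrix.kroneckerMap (· * ·) (Matrix.vandermonde (fun i : Fin d => ((i:ℕ):ℝ)))
    (Matrix.vandermonde (fun i : Fin d => ((i:ℕ):ℝ))) with hV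
  have hindep : LinearIndependent ℝ (fun ab => Vᵀ ab) :=
    Matrix.linearIndependent_cols_iff_isUnit.2 (vmatrix_isUnit d)
  have hmap : ∀ g : {x // x ∈ GoodIdx d D}, colE d D g.1
      = Vᵀ ((⟨g.1.1.1, (Finset.mem_filter.1 g.2).2.1⟩ : Fin d),
            (⟨g.1.1.2, (Finset.mem_filter.1 g.2).2.2⟩ : Fin d)) := by
    intro g
    funext st
    rw [colE]
    show (Emat d D) st g.1 = _
    rw [Emat, hV]
    simp only [Matrix.transpose_apply, Matrix.kroneckerMap_apply, Matrix.vandermonde,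
      Matrix.of_apply]
  have hinj : Function.Injective (fun g : {x // x ∈ GoodIdx d D} =>
      ((⟨g.1.1.1, (Finset.mem_filter.1 g.2).2.1⟩ : Fin d),
       (⟨g.1.1.2, (Finset.mem_filter.1 g.2).2.2⟩ : Fin d))) := by
    intro x y h
    have h1 : x.1.1.1 = y.1.1.1 := congrArg (fun p => (p.1 : ℕ)) h
    have h2 : x.1.1.2 = y.1.1.2 := congrArg (fun p => (p.2 : ℕ)) h
    exact Subtype.ext (Subtype.ext (Prod.ext h1 h2))
  have := hindep.comp _ hinj
  have e : (fun g : {x // x ∈ GoodIdx d D} => colE d D g.1)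
      = (fun ab => Vᵀ ab) ∘ (fun g : {x // x ∈ GoodIdx d D} =>
      ((⟨g.1.1.1, (Finset.mem_filter.1 g.2).2.1⟩ : Fin d),
       (⟨g.1.1.2, (Finset.mem_filter.1 g.2).2.2⟩ : Fin d))) := by
    funext g
    exact hmap g
  rw [e]
  exact this

lemma colE_bad_mem_span (d D : ℕ) (hd : 1 ≤ d) (hDl : d ≤ D) (hD2 : D < 2*d) (c : Idx D) :
    colE d D c ∈ Submodule.span ℝ (colE d D '' (GoodIdx d D : Set (Idx D))) := by
  classical
  by_cases hgood : c.1.1 < d ∧ c.1.2 < d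
  · exact Submodule.subset_span ⟨c, Finset.mem_filter.2 ⟨Finset.mem_univ _, hgood⟩, rfl⟩
  · have hfne : fpoly d ≠ 1 := by
      intro h
      have := fpoly_natDegree d
      rw [h] at this
      simp at this
      omega
    have hab : c.1.1 + c.1.2 ≤ D := c.2
    rcases Nat.lt_or_ge c.1.1 d with h1 | h1
    · -- then d ≤ c.1.2
      have h2 : d ≤ c.1.2 := by
        rcases Nat.lt_or_ge c.1.2 d with h | h
        · exact absurd ⟨h1, h⟩ hgood
        · exact h
      set r := (Polynomial.X : Polynomial ℝ)^(c.1.2) %ₘ fpoly d with hr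
      have hrdeg : r.natDegree < d := by
        have := Polynomial.natDegree_modByMonic_lt ((Polynomial.X : Polynomial ℝ)^(c.1.2))
          (fpoly_monic d) hfne
        rwa [fpoly_natDegree] at this
      have hreval : ∀ t : Fin d, ((t:ℕ):ℝ)^(c.1.2) = r.eval ((t:ℕ):ℝ) := by
        intro t
        have hdiv := Polynomial.modByMonic_add_div ((Polynomial.X : Polynomial ℝ)^(c.1.2))
          (fpoly d)
        have := congrArg (Polynomial.eval ((t:ℕ):ℝ)) hdiv
        simp only [Polynomial.eval_add, Polynomial.eval_mul, Polynomial.eval_pow,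
          Polynomial.eval_X] at this
        rw [fpoly_eval d t t.2, zero_mul, add_zero] at this
        exact this.symm
      have hmemb : ∀ b' : Fin d, c.1.1 + (b':ℕ) ≤ D := fun b' => by
        have := b'.2
        omega
      have hcol : colE d D c = ∑ b' : Fin d,
          r.coeff (b':ℕ) • colE d D ⟨(c.1.1, (b':ℕ)), hmemb b'⟩ := by
        funext st
        have rhs : (∑ b' : Fin d, r.coeff (b':ℕ) • colE d D ⟨(c.1.1, (b':ℕ)), hmemb b'⟩) st
            = ∑ b' ∈ Finset.range d,
              r.coeff b' * (((st.1:ℕ):ℝ)^(c.1.1) * ((st.2:ℕ):ℝ)^b') := by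
          rw [Finset.sum_apply]
          rw [← Fin.sum_univ_eq_sum_range
            (fun n => r.coeff n * (((st.1:ℕ):ℝ)^(c.1.1) * ((st.2:ℕ):ℝ)^n)) d]
          refine Finset.sum_congr rfl fun b' _ => ?_
          simp only [Pi.smul_apply, smul_eq_mul, colE, Matrix.transpose_apply, Emat,
            Matrix.of_apply]
        rw [rhs]
        show (Emat d D) st c = _
        rw [Emat]
        simp only [Matrix.of_apply]
        rw [hreval st.2, Polynomial.eval_eq_sum_range' (by omega : r.natDegree < d)]
        rw [Finset.mul_sum]
        refine Finset.sum_congr rfl fun b' _ => by ring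
      rw [hcol]
      refine Submodule.sum_mem _ fun b' _ => Submodule.smul_mem _ _ ?_
      refine Submodule.subset_span ⟨⟨(c.1.1, (b':ℕ)), hmemb b'⟩, ?_, rfl⟩
      exact Finset.mem_filter.2 ⟨Finset.mem_univ _, h1, b'.2⟩
    · -- d ≤ c.1.1, so c.1.2 < d
      have h2 : c.1.2 < d := by omega
      set r := (Polynomial.X : Polynomial ℝ)^(c.1.1) %ₘ fpoly d with hr
      have hrdeg : r.natDegree < d := by
        have := Polynomial.natDegree_modByMonic_lt ((Polynomial.X : Polynomial ℝ)^(c.1.1))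
          (fpoly_monic d) hfne
        rwa [fpoly_natDegree] at this
      have hreval : ∀ t : Fin d, ((t:ℕ):ℝ)^(c.1.1) = r.eval ((t:ℕ):ℝ) := by
        intro t
        have hdiv := Polynomial.modByMonic_add_div ((Polynomial.X : Polynomial ℝ)^(c.1.1))
          (fpoly d)
        have := congrArg (Polynomial.eval ((t:ℕ):ℝ)) hdiv
        simp only [Polynomial.eval_add, Polynomial.eval_mul, Polynomial.eval_pow,
          Polynomial.eval_X] at this
        rw [fpoly_eval d t t.2, zero_mul, add_zero] at this
        exact this.symm
      have hmema : ∀ a' : Fin d, (a':ℕ) + c.1.2 ≤ D := fun a' => by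
        have := a'.2
        omega
      have hcol : colE d D c = ∑ a' : Fin d,
          r.coeff (a':ℕ) • colE d D ⟨((a':ℕ), c.1.2), hmema a'⟩ := by
        funext st
        have rhs : (∑ a' : Fin d, r.coeff (a':ℕ) • colE d D ⟨((a':ℕ), c.1.2), hmema a'⟩) st
            = ∑ a' ∈ Finset.range d,
              r.coeff a' * (((st.1:ℕ):ℝ)^a' * ((st.2:ℕ):ℝ)^(c.1.2)) := by
          rw [Finset.sum_apply]
          rw [← Fin.sum_univ_eq_sum_range
            (fun n => r.coeff n * (((st.1:ℕ):ℝ)^n * ((st.2:ℕ):ℝ)^(c.1.2))) d]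
          refine Finset.sum_congr rfl fun a' _ => ?_
          simp only [Pi.smul_apply, smul_eq_mul, colE, Matrix.transpose_apply, Emat,
            Matrix.of_apply]
        rw [rhs]
        show (Emat d D) st c = _
        rw [Emat]
        simp only [Matrix.of_apply]
        rw [hreval st.1, Polynomial.eval_eq_sum_range' (by omega : r.natDegree < d)]
        rw [Finset.sum_mul]
        refine Finset.sum_congr rfl fun a' _ => by ring
      rw [hcol]
      refine Submodule.sum_mem _ fun a' _ => Submodule.smul_mem _ _ ?_
      refine Submodule.subset_span ⟨⟨((a':ℕ), c.1.2), hmema a'⟩, ?_, rfl⟩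
      exact Finset.mem_filter.2 ⟨Finset.mem_univ _, a'.2, h2⟩

lemma rank_M (d D : ℕ) (hd : 1 ≤ d) (hDl : d ≤ D) (hD2 : D < 2*d) :
    (momentMatrix D (βd d)).rank = Ngood d D := by
  classical
  rw [M_eq, Matrix.rank_transpose_mul_self, Matrix.rank_eq_finrank_span_cols]
  have hspan : Submodule.span ℝ (Set.range (Emat d D).col)
      = Submodule.span ℝ (colE d D '' (GoodIdx d D : Set (Idx D))) := by
    apply le_antisymm
    · rw [Submodule.span_le]
      rintro x ⟨c, rfl⟩
      exact colE_bad_mem_span d D hd hDl hD2 c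
    · apply Submodule.span_mono
      rintro x ⟨c, _, rfl⟩
      exact ⟨c, rfl⟩
  have himg : colE d D '' (GoodIdx d D : Set (Idx D))
      = Set.range (fun g : {x // x ∈ GoodIdx d D} => colE d D g.1) := by
    ext x
    constructor
    · rintro ⟨c, hc, rfl⟩
      exact ⟨⟨c, Finset.mem_coe.1 hc⟩, rfl⟩
    · rintro ⟨g, rfl⟩
      exact ⟨g.1, Finset.mem_coe.2 g.2, rfl⟩
  rw [hspan, himg]
  rw [finrank_span_eq_card (colE_good_indep d D)]
  rw [Fintype.card_coe]
  exact card_GoodIdx d D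

lemma Ngood_succ (d k : ℕ) (hd : 1 ≤ d) (hk1 : 1 ≤ k) (hk2 : k ≤ d - 1) :
    Ngood d (d + k) = Ngood d (d + k - 1) + (d - k - 1) := by
  classical
  rw [Ngood, Ngood]
  have hcong : Finset.filter (fun ab : ℕ × ℕ => ab.1 + ab.2 ≤ d + k)
      (Finset.range d ×ˢ Finset.range d)
      = Finset.filter (fun ab : ℕ × ℕ => ab.1 + ab.2 ≤ d + k - 1 ∨ ab.1 + ab.2 = d + k)
        (Finset.range d ×ˢ Finset.range d) := by
    refine Finset.filter_congr fun ab _ => ?_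
    constructor
    · intro h; omega
    · intro h; omega
  rw [hcong, Finset.filter_or, Finset.card_union_of_disjoint]
  · congr 1
    have himg : Finset.filter (fun ab : ℕ × ℕ => ab.1 + ab.2 = d + k)
        (Finset.range d ×ˢ Finset.range d)
        = Finset.image (fun a => (a, d + k - a)) (Finset.Ico (k+1) d) := by
      ext ab
      simp only [Finset.mem_filter, Finset.mem_product, Finset.mem_range, Finset.mem_image,
        Finset.mem_Ico]
      constructor
      · rintro ⟨⟨h1, h2⟩, h3⟩
        exact ⟨ab.1, ⟨by omega, h1⟩, by
          have : d + k - ab.1 = ab.2 := by omega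
          rw [this]⟩
      · rintro ⟨a, ⟨ha1, ha2⟩, rfl⟩
        constructor
        · constructor
          · omega
          · omega
        · omega
    rw [himg, Finset.card_image_of_injOn (fun x _ y _ h => congrArg Prod.fst h),
      Nat.card_Ico]
    omega
  · rw [Finset.disjoint_filter]
    intro ab _ h1 h2
    omega


lemma qc_d_zero (d : ℕ) : qc d 0 d = 0 := by simp [qc]

lemma shiftC_zero (a : ℕ → ℕ → ℝ) : shiftC 0 0 a = a := by
  funext k l
  simp [shiftC]

lemma polyCol_X_zero (d D : ℕ) (hd : 1 ≤ d) (hDl : d ≤ D) (hD2 : D < 2*d) :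
    polyCol D (βd d) (monoC d 0 - pc d) = 0 := by
  show momentMatrix D (βd d) *ᵥ coeffVec D (monoC d 0 - pc d) = 0
  rw [ker_iff_span d D hd hDl hD2]
  exact Submodule.subset_span (Or.inl ⟨0, 0, by omega, by rw [shiftC_zero]⟩)

lemma polyCol_Y_zero (d D : ℕ) (hd : 1 ≤ d) (hDl : d ≤ D) (hD2 : D < 2*d) :
    polyCol D (βd d) (monoC 0 d - qc d) = 0 := by
  show momentMatrix D (βd d) *ᵥ coeffVec D (monoC 0 d - qc d) = 0
  rw [ker_iff_span d D hd hDl hD2]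
  exact Submodule.subset_span (Or.inr ⟨0, 0, by omega, by rw [shiftC_zero]⟩)

lemma generatedBy_main (d D : ℕ) (hd : 1 ≤ d) (hDl : d ≤ D) (hD2 : D < 2*d) :
    GeneratedBy D d d (βd d) (pc d) (qc d) := by
  refine ⟨hd, hDl, hd, hDl, DegLE_pc d hd,
    DegLE_mono _ _ _ (DegLE_qc d hd) (by omega), qc_d_zero d,
    polyCol_X_zero d D hd hDl hD2, polyCol_Y_zero d D hd hDl hD2, ?_⟩
  intro v
  exact ker_iff_span d D hd hDl hD2 v

lemma recGen (d D : ℕ) (hd : 1 ≤ d) (hDl : d ≤ D) (hD2 : D < 2*d) :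
    RecursivelyGenerated D (βd d) := by
  intro a b ha hb hab h0
  have h0' : ∀ s t : ℕ, s < d → t < d → evC a (D+1) (s:ℝ) (t:ℝ) = 0 := by
    intro s t hs ht
    have := (ker_iff d D (coeffVec D a)).1 h0 s t hs ht
    rwa [ev_coeffVec D a ha] at this
  show momentMatrix D (βd d) *ᵥ coeffVec D (cMul a b) = 0
  rw [ker_iff d D]
  intro s t hs ht
  rw [ev_coeffVec D _ hab]
  have e1 : evC (cMul a b) (D+1) (s:ℝ) (t:ℝ) = evC (cMul a b) (D+D+2) (s:ℝ) (t:ℝ) := by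
    rw [evC_shrink _ D (D+1) hab (by omega), evC_shrink _ D (D+D+2) hab (by omega)]
  have e2 := cauchy2 a b D D ha hb (s:ℝ) (t:ℝ)
  rw [e1, e2, h0' s t hs ht, zero_mul]

end S5

/-- For every `d ≥ 1` there is a multisequence `β = γ 0` of degree `2d`
with `M_d(β)` positive semidefinite and column relations generated entirely by
`X^d = p(X,Y)` and `Y^d = q(X,Y)` (with `p, q` of degree ≤ d-1), admitting successive
positive semidefinite, recursively generated extensions `M_{d+1}, …, M_{2d-1}` (the
moment matrices of `γ 1, …, γ (d-1)`), each again with column relations generated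
entirely by two such relations, and with
`rank M_{d+k} = rank M_{d+k-1} + (d - k - 1)` for `1 ≤ k ≤ d - 1`; so the first flat
extension occurs at `M_{2d-1}`. -/

theorem statement5 (d : ℕ) (hd : 1 ≤ d) :
    ∃ γ : ℕ → (ℕ → ℕ → ℝ),
      (∃ p q : ℕ → ℕ → ℝ, DegLE p (d - 1) ∧ DegLE q (d - 1) ∧
        GeneratedBy d d d (γ 0) p q) ∧
      (momentMatrix d (γ 0)).PosSemidef ∧
      (∀ k : ℕ, k ≤ d - 1 →
        (momentMatrix (d + k) (γ k)).PosSemidef ∧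
        RecursivelyGenerated (d + k) (γ k) ∧
        ∃ (n m : ℕ) (p q : ℕ → ℕ → ℝ), GeneratedBy (d + k) n m (γ k) p q) ∧
      (∀ k : ℕ, k + 1 ≤ d - 1 →
        ∀ i j : ℕ, i + j ≤ 2 * (d + k) → γ (k + 1) i j = γ k i j) ∧
      (∀ k : ℕ, 1 ≤ k → k ≤ d - 1 →
        (momentMatrix (d + k) (γ k)).rank
          = (momentMatrix (d + k - 1) (γ (k - 1))).rank + (d - k - 1)) ∧
      (1 ≤ d - 1 →
        (momentMatrix (2 * d - 1) (γ (d - 1))).rank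
          = (momentMatrix (2 * d - 2) (γ (d - 2))).rank) ∧
      (∀ k : ℕ, 1 ≤ k → k ≤ d - 2 →
        (momentMatrix (d + k - 1) (γ (k - 1))).rank
          < (momentMatrix (d + k) (γ k)).rank) := by
  refine ⟨fun _ => S5.βd d, ⟨S5.pc d, S5.qc d, S5.DegLE_pc d hd, S5.DegLE_qc d hd,
    S5.generatedBy_main d d hd le_rfl (by omega)⟩, S5.posSemidef d d, ?_, ?_, ?_, ?_, ?_⟩
  · intro k hk
    have h1 : d ≤ d + k := by omega
    have h2 : d + k < 2*d := by omega
    exact ⟨S5.posSemidef d (d+k), S5.recGen d (d+k) hd h1 h2,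
      d, d, S5.pc d, S5.qc d, S5.generatedBy_main d (d+k) hd h1 h2⟩
  · intro k _ i j _
    rfl
  · intro k hk1 hk2
    rw [S5.rank_M d (d+k) hd (by omega) (by omega),
      S5.rank_M d (d+k-1) hd (by omega) (by omega)]
    exact S5.Ngood_succ d k hd hk1 hk2
  · intro hd1
    rw [S5.rank_M d (2*d-1) hd (by omega) (by omega),
      S5.rank_M d (2*d-2) hd (by omega) (by omega)]
    have h := S5.Ngood_succ d (d-1) hd (by omega) (by omega)
    have e1 : 2*d-1 = d + (d-1) := by omega
    have e2 : 2*d-2 = d + (d-1) - 1 := by omega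
    rw [e1, e2, h]
    have e3 : d - (d-1) - 1 = 0 := by omega
    rw [e3, add_zero]
  · intro k hk1 hk2
    rw [S5.rank_M d (d+k-1) hd (by omega) (by omega),
      S5.rank_M d (d+k) hd (by omega) (by omega)]
    have h := S5.Ngood_succ d k hd hk1 (by omega)
    omega
end
end

section
/- Let d ≥ 1, let x_1, …, x_d be distinct reals and y_1, …, y_d be distinct reals, let G = {(x_i, y_j) : 1 ≤ i, j ≤ d} ⊂ ℝ², let μ be a finitely atomic positive measure on ℝ² whose support is exactly G, and let P(x,y) = ∏_{i=1}^d (x − x_i) and Q(x,y) = ∏_{j=1}^d (y − y_j). Then for every k ≥ 0 and every polynomial r ∈ ℝ[x,y] with deg r ≤ d + k, the coefficient vector of r lies in the kernel of M_{d+k}[μ] if and only if there exist u, v ∈ ℝ[x,y] with deg u ≤ k and deg v ≤ k such that r = uP + vQ. -/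
open Finset Matrix

noncomputable section

open MeasureTheory

/-- The moment multisequence of a measure `μ` on `ℝ²`. -/
def momentsOf (μ : Measure (ℝ × ℝ)) : ℕ → ℕ → ℝ :=
  fun i j => ∫ z : ℝ × ℝ, z.1 ^ i * z.2 ^ j ∂μ

/-- The coefficient vector, truncated to degree ≤ D, of a bivariate polynomial. -/
def mvCoeffVec (D : ℕ) (r : MvPolynomial (Fin 2) ℝ) : Idx D → ℝ :=
  fun c => MvPolynomial.coeff (Finsupp.single 0 c.1.1 + Finsupp.single 1 c.1.2) r

namespace S6Aux

open Polynomial MvPolynomial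

abbrev Amv : Type := MvPolynomial (Fin 1) ℝ

/-- weighted (total) degree bound for an element of `(ℝ[y])[x]` -/
def Dwt (D : ℕ) (p : Polynomial Amv) : Prop :=
  ∀ i, p.coeff i ≠ 0 → (p.coeff i).totalDegree + i ≤ D

lemma Dwt.mono {D E : ℕ} (h : D ≤ E) {p : Polynomial Amv} (hp : Dwt D p) : Dwt E p :=
  fun i hi => (hp i hi).trans h

lemma dwt_zero (D : ℕ) : Dwt D 0 := by intro i hi; simp at hi

lemma dwt_add {D : ℕ} {p q : Polynomial Amv} (hp : Dwt D p) (hq : Dwt D q) :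
    Dwt D (p + q) := by
  intro i hi
  rw [Polynomial.coeff_add] at hi ⊢
  by_cases h1 : p.coeff i = 0
  · rw [h1, zero_add] at hi ⊢
    exact hq i hi
  by_cases h2 : q.coeff i = 0
  · rw [h2, add_zero] at hi ⊢
    exact hp i hi
  have h3 := MvPolynomial.totalDegree_add (p.coeff i) (q.coeff i)
  have h4 := hp i h1
  have h5 := hq i h2
  omega

lemma dwt_sub {D : ℕ} {p q : Polynomial Amv} (hp : Dwt D p) (hq : Dwt D q) :
    Dwt D (p - q) := by
  intro i hi
  rw [Polynomial.coeff_sub] at hi ⊢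
  by_cases h1 : p.coeff i = 0
  · rw [h1, zero_sub] at hi ⊢
    have h2 : q.coeff i ≠ 0 := fun h => hi (by rw [h, neg_zero])
    have := hq i h2
    have h3 : (-(q.coeff i)).totalDegree = (q.coeff i).totalDegree := by
      rw [MvPolynomial.totalDegree_neg]
    omega
  by_cases h2 : q.coeff i = 0
  · rw [h2, sub_zero] at hi ⊢
    exact hp i h1
  have h3 := MvPolynomial.totalDegree_sub (p.coeff i) (q.coeff i)
  have h4 := hp i h1
  have h5 := hq i h2
  omega

lemma dwt_monomial {D e : ℕ} {c : Amv} (h : c.totalDegree + e ≤ D) :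
    Dwt D (Polynomial.monomial e c) := by
  intro i hi
  rw [Polynomial.coeff_monomial] at hi ⊢
  by_cases he : e = i
  · rw [if_pos he] at hi ⊢
    omega
  · rw [if_neg he] at hi
    exact absurd rfl hi

lemma dwt_mul_P {E dd : ℕ} {q Pc : Polynomial Amv}
    (hq : Dwt E q) (hP0 : ∀ b, (Pc.coeff b).totalDegree = 0) (hPd : Pc.natDegree ≤ dd) :
    Dwt (E + dd) (q * Pc) := by
  intro i hi
  have hqne : q ≠ 0 := by rintro rfl; simp at hi
  have hqdeg : q.natDegree ≤ E := by
    have := hq q.natDegree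
      (by rw [Polynomial.coeff_natDegree]; exact Polynomial.leadingCoeff_ne_zero.2 hqne)
    omega
  have hile : i ≤ E + dd :=
    le_trans (Polynomial.le_natDegree_of_ne_zero hi)
      (le_trans Polynomial.natDegree_mul_le (by omega))
  have hbound : ((q * Pc).coeff i).totalDegree ≤ E + dd - i := by
    rw [Polynomial.coeff_mul]
    refine le_trans (MvPolynomial.totalDegree_finset_sum _ _) (Finset.sup_le ?_)
    rintro ⟨a, b⟩ hab
    rw [Finset.HasAntidiagonal.mem_antidiagonal] at hab
    dsimp only
    by_cases h1 : q.coeff a = 0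
    · simp [h1]
    by_cases h2 : Pc.coeff b = 0
    · simp [h2]
    have h3 := hq a h1
    have h4 : b ≤ dd := le_trans (Polynomial.le_natDegree_of_ne_zero h2) hPd
    have h5 := MvPolynomial.totalDegree_mul (q.coeff a) (Pc.coeff b)
    have h6 := hP0 b
    omega
  omega

lemma div_P {d D : ℕ} (hd : 0 < d) {Pc : Polynomial Amv} (hm : Pc.Monic)
    (hdeg : Pc.natDegree = d) (hP0 : ∀ b, (Pc.coeff b).totalDegree = 0) :
    ∀ n, ∀ p : Polynomial Amv, p.natDegree < n → Dwt D p →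
      ∃ u s, p = u * Pc + s ∧ s.natDegree < d ∧ Dwt (D - d) u ∧ Dwt D s := by
  intro n
  induction n with
  | zero => intro p h; exact absurd h (Nat.not_lt_zero _)
  | succ n ih =>
    intro p hpn hp
    by_cases hpd : p.natDegree < d
    · exact ⟨0, p, by rw [zero_mul, zero_add], hpd, dwt_zero _, hp⟩
    push_neg at hpd
    have hp0 : p ≠ 0 := by rintro rfl; rw [Polynomial.natDegree_zero] at hpd; omega
    have hlc : p.leadingCoeff ≠ 0 := Polynomial.leadingCoeff_ne_zero.2 hp0
    set e := p.natDegree - d with he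
    set q : Polynomial Amv := Polynomial.monomial e p.leadingCoeff with hq
    have hqne : q ≠ 0 := by
      rw [hq, Ne, Polynomial.monomial_eq_zero_iff]
      exact hlc
    have hqdeg : q.natDegree = e := by rw [hq, Polynomial.natDegree_monomial, if_neg hlc]
    have hqPne : q * Pc ≠ 0 := mul_ne_zero hqne hm.ne_zero
    have hqPdeg : (q * Pc).natDegree = p.natDegree := by
      rw [mul_comm, hm.natDegree_mul' hqne, hqdeg, hdeg]
      omega
    have hlcq : q.leadingCoeff = p.leadingCoeff := by
      rw [hq, Polynomial.leadingCoeff_monomial]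
    have hqPlc : (q * Pc).leadingCoeff = p.leadingCoeff := by
      rw [mul_comm, Polynomial.leadingCoeff_mul'
        (by rw [hm.leadingCoeff, one_mul, hlcq]; exact hlc), hm.leadingCoeff, one_mul, hlcq]
    have hlcwt := hp p.natDegree (by rw [Polynomial.coeff_natDegree]; exact hlc)
    rw [Polynomial.coeff_natDegree] at hlcwt
    have hqDwt : Dwt (D - d) q := by
      rw [hq]
      exact dwt_monomial (by omega)
    set p' := p - q * Pc with hp'
    by_cases hz : p' = 0
    · refine ⟨q, 0, ?_, hd, hqDwt, dwt_zero _⟩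
      have h1 : p = q * Pc := by
        have := sub_eq_zero.mp hz
        exact this
      rw [h1, add_zero]
    · have hdlt : p'.natDegree < p.natDegree := by
        have hdeglt : p'.degree < p.degree := by
          refine Polynomial.degree_sub_lt ?_ hp0 hqPlc.symm
          rw [Polynomial.degree_eq_natDegree hp0, Polynomial.degree_eq_natDegree hqPne, hqPdeg]
        exact Polynomial.natDegree_lt_natDegree hz hdeglt
      have hp'Dwt : Dwt D p' :=
        dwt_sub hp ((dwt_mul_P hqDwt hP0 (le_of_eq hdeg)).mono (by omega))
      obtain ⟨u, s, h1, h2, h3, h4⟩ := ih p' (by omega) hp'Dwt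
      refine ⟨u + q, s, ?_, h2, dwt_add h3 hqDwt, h4⟩
      have h1' : p - q * Pc = u * Pc + s := h1
      linear_combination h1'

def toUni : Amv →+* Polynomial ℝ := MvPolynomial.eval₂Hom Polynomial.C (fun _ => Polynomial.X)

def fromUni : Polynomial ℝ →+* Amv := Polynomial.eval₂RingHom MvPolynomial.C (MvPolynomial.X 0)

lemma fromUni_toUni (c : Amv) : fromUni (toUni c) = c := by
  have h : fromUni.comp toUni = RingHom.id Amv := by
    apply MvPolynomial.ringHom_ext
    · intro r
      simp [toUni, fromUni]
    · intro i
      have hi : i = 0 := Subsingleton.elim _ _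
      subst hi
      simp [toUni, fromUni]
  exact RingHom.congr_fun h c

lemma toUni_eval (t : ℝ) (c : Amv) :
    (toUni c).eval t = MvPolynomial.eval (fun _ : Fin 1 => t) c := by
  have h : (Polynomial.evalRingHom t).comp toUni
      = (MvPolynomial.eval (fun _ : Fin 1 => t) : Amv →+* ℝ) := by
    apply MvPolynomial.ringHom_ext
    · intro r
      simp [toUni]
    · intro i
      simp [toUni]
  exact RingHom.congr_fun h c

lemma sum_single_fin1 (m : Fin 1 →₀ ℕ) : (m.sum fun _ e => e) = m 0 := by
  rw [Finsupp.sum_fintype _ _ (fun _ => rfl), Fin.sum_univ_one]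

lemma natDegree_toUni_le (c : Amv) : (toUni c).natDegree ≤ c.totalDegree := by
  rw [toUni, MvPolynomial.coe_eval₂Hom, MvPolynomial.eval₂_eq]
  refine Polynomial.natDegree_sum_le_of_forall_le _ _ fun m hm => ?_
  have h1 : m 0 ≤ c.totalDegree := by
    have := MvPolynomial.le_totalDegree hm
    have h2 := sum_single_fin1 m
    omega
  refine le_trans (Polynomial.natDegree_mul_le) ?_
  rw [Polynomial.natDegree_C, zero_add]
  refine le_trans (Polynomial.natDegree_prod_le _ _) ?_
  have h2 : ∑ i ∈ m.support, ((Polynomial.X : Polynomial ℝ) ^ m i).natDegree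
      = ∑ i ∈ m.support, m i := Finset.sum_congr rfl fun i _ => Polynomial.natDegree_X_pow _
  have h3 : ∑ i ∈ m.support, m i = m 0 := by
    have := sum_single_fin1 m
    simpa [Finsupp.sum] using this
  omega

lemma totalDegree_fromUni_le (w : Polynomial ℝ) : (fromUni w).totalDegree ≤ w.natDegree := by
  rw [fromUni, Polynomial.coe_eval₂RingHom, Polynomial.eval₂_eq_sum, Polynomial.sum_def]
  refine le_trans (MvPolynomial.totalDegree_finset_sum _ _) (Finset.sup_le fun n hn => ?_)
  have h1 := MvPolynomial.totalDegree_mul (MvPolynomial.C (w.coeff n) : Amv)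
    ((MvPolynomial.X 0 : Amv) ^ n)
  have h2 : ((MvPolynomial.X (0 : Fin 1) : Amv) ^ n).totalDegree ≤ n := by
    refine le_trans (MvPolynomial.totalDegree_pow _ _) ?_
    simp [MvPolynomial.totalDegree_X]
  have h3 : n ≤ w.natDegree := Polynomial.le_natDegree_of_ne_zero (Polynomial.mem_support_iff.mp hn)
  have h4 := MvPolynomial.totalDegree_C (σ := Fin 1) (w.coeff n)
  omega

lemma coeff_divide {d : ℕ} {y : Fin d → ℝ} (hy : Function.Injective y) (c : Amv)
    (hvan : ∀ j, MvPolynomial.eval (fun _ : Fin 1 => y j) c = 0) :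
    ∃ w : Amv, c = (∏ j, (MvPolynomial.X 0 - MvPolynomial.C (y j))) * w ∧
      (c ≠ 0 → w.totalDegree + d ≤ c.totalDegree) := by
  by_cases hc : c = 0
  · exact ⟨0, by rw [hc, mul_zero], fun h => absurd hc h⟩
  have hc' : toUni c ≠ 0 := fun h => hc (by rw [← fromUni_toUni c, h, _root_.map_zero])
  have hroots : ∀ j, (toUni c).eval (y j) = 0 := fun j => by rw [toUni_eval]; exact hvan j
  set s : Multiset ℝ := Finset.univ.val.map y with hs
  have hnodup : s.Nodup := Multiset.Nodup.map hy Finset.univ.nodup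
  have hle : s ≤ (toUni c).roots := by
    rw [Multiset.le_iff_count]
    intro a
    by_cases ha : a ∈ s
    · have h1 : s.count a ≤ 1 := Multiset.nodup_iff_count_le_one.mp hnodup a
      obtain ⟨j, _, rfl⟩ := Multiset.mem_map.mp ha
      have h2 : 1 ≤ (toUni c).roots.count (y j) := by
        rw [Polynomial.count_roots]
        exact (Polynomial.rootMultiplicity_pos hc').2 (hroots j)
      omega
    · rw [Multiset.count_eq_zero_of_notMem ha]
      exact Nat.zero_le _
  have hdvd : (s.map fun a => Polynomial.X - Polynomial.C a).prod ∣ toUni c :=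
    (Multiset.prod_X_sub_C_dvd_iff_le_roots hc' s).2 hle
  set Qr : Polynomial ℝ := ∏ j, (Polynomial.X - Polynomial.C (y j)) with hQr
  have hQreq : (s.map fun a => Polynomial.X - Polynomial.C a).prod = Qr := by
    rw [hs, Multiset.map_map, hQr, Finset.prod_eq_multiset_prod]
    rfl
  rw [hQreq] at hdvd
  obtain ⟨w', hw'⟩ := hdvd
  have hQm : Qr.Monic := Polynomial.monic_prod_of_monic _ _ fun j _ => Polynomial.monic_X_sub_C _
  have hQd : Qr.natDegree = d := by
    rw [hQr, Polynomial.natDegree_prod _ _ fun j _ => Polynomial.X_sub_C_ne_zero _]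
    simp
  have hw'ne : w' ≠ 0 := by rintro rfl; rw [mul_zero] at hw'; exact hc' hw'
  have hdeg : (toUni c).natDegree = d + w'.natDegree := by
    rw [hw', hQm.natDegree_mul' hw'ne, hQd]
  refine ⟨fromUni w', ?_, fun _ => ?_⟩
  · have h1 : fromUni Qr = ∏ j, (MvPolynomial.X 0 - MvPolynomial.C (y j)) := by
      rw [hQr, _root_.map_prod]
      refine Finset.prod_congr rfl fun j _ => ?_
      simp [fromUni]
    calc c = fromUni (toUni c) := (fromUni_toUni c).symm
    _ = fromUni Qr * fromUni w' := by rw [hw', _root_.map_mul]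
    _ = _ := by rw [h1]
  · have h2 := totalDegree_fromUni_le w'
    have h3 := natDegree_toUni_le c
    omega

lemma dwt_of_totalDegree_le {D : ℕ} {f : MvPolynomial (Fin 2) ℝ} (h : f.totalDegree ≤ D) :
    Dwt D (MvPolynomial.finSuccEquiv ℝ 1 f) :=
  fun i hi => le_trans (MvPolynomial.totalDegree_coeff_finSuccEquiv_add_le f i hi) h

lemma totalDegree_le_of_dwt {D : ℕ} {f : MvPolynomial (Fin 2) ℝ}
    (h : Dwt D (MvPolynomial.finSuccEquiv ℝ 1 f)) : f.totalDegree ≤ D := by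
  rw [MvPolynomial.totalDegree]
  apply Finset.sup_le
  intro m hm
  have hfne : MvPolynomial.coeff m f ≠ 0 := MvPolynomial.mem_support_iff.mp hm
  have hco : MvPolynomial.coeff (Finsupp.tail m)
      ((MvPolynomial.finSuccEquiv ℝ 1 f).coeff (m 0)) = MvPolynomial.coeff m f := by
    rw [MvPolynomial.finSuccEquiv_coeff_coeff, Finsupp.cons_tail]
  have hne : ((MvPolynomial.finSuccEquiv ℝ 1 f).coeff (m 0)) ≠ 0 := by
    intro h0
    apply hfne
    rw [← hco, h0, MvPolynomial.coeff_zero]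
  have h1 := h (m 0) hne
  have h2 : ((Finsupp.tail m).sum fun _ e => e) ≤
      ((MvPolynomial.finSuccEquiv ℝ 1 f).coeff (m 0)).totalDegree :=
    MvPolynomial.le_totalDegree (MvPolynomial.mem_support_iff.mpr (by rw [hco]; exact hfne))
  have h3 : (m.sum fun _ e => e) = m 0 + ((Finsupp.tail m).sum fun _ e => e) := by
    conv_lhs => rw [← Finsupp.cons_tail m]
    rw [Finsupp.sum_cons]
  omega

lemma single_decomp (m : Fin 2 →₀ ℕ) :
    Finsupp.single 0 (m 0) + Finsupp.single 1 (m 1) = m := by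
  ext i
  fin_cases i <;> simp [Finsupp.single_apply]

lemma sum_idx_eq_eval {D : ℕ} {r : MvPolynomial (Fin 2) ℝ} (hr : r.totalDegree ≤ D) (a b : ℝ) :
    ∑ c : Idx D, mvCoeffVec D r c * (a ^ (c.1.1) * b ^ (c.1.2)) =
      MvPolynomial.eval (Fin.cons a fun _ => b) r := by
  classical
  set ι : Idx D → (Fin 2 →₀ ℕ) :=
    fun c => Finsupp.single 0 c.1.1 + Finsupp.single 1 c.1.2 with hι
  have hι0 : ∀ c, (ι c) 0 = c.1.1 := by intro c; simp [hι, Finsupp.single_apply]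
  have hι1 : ∀ c, (ι c) 1 = c.1.2 := by intro c; simp [hι, Finsupp.single_apply]
  have hinj : ∀ c ∈ Finset.univ (α := Idx D), ∀ c' ∈ Finset.univ (α := Idx D),
      ι c = ι c' → c = c' := by
    intro c _ c' _ h
    have h0 : (ι c) 0 = (ι c') 0 := by rw [h]
    have h1 : (ι c) 1 = (ι c') 1 := by rw [h]
    rw [hι0, hι0] at h0
    rw [hι1, hι1] at h1
    exact Subtype.ext (Prod.ext h0 h1)
  have hLHS : (∑ c : Idx D, mvCoeffVec D r c * (a ^ (c.1.1) * b ^ (c.1.2)))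
      = ∑ m ∈ Finset.univ.image ι, MvPolynomial.coeff m r * (a ^ (m 0) * b ^ (m 1)) := by
    rw [Finset.sum_image hinj]
    refine Finset.sum_congr rfl fun c _ => ?_
    rw [hι0, hι1]
    rfl
  rw [hLHS, MvPolynomial.eval_eq]
  have hterm : ∀ m : Fin 2 →₀ ℕ,
      (∏ i ∈ m.support, (Fin.cons a fun _ => b : Fin 2 → ℝ) i ^ m i)
        = a ^ (m 0) * b ^ (m 1) := by
    intro m
    rw [Finset.prod_subset (Finset.subset_univ m.support)
      (fun i _ hi => by rw [Finsupp.notMem_support_iff.mp hi, pow_zero])]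
    rw [Fin.prod_univ_two]
    rfl
  rw [Finset.sum_congr rfl fun m (_ : m ∈ r.support) => by rw [hterm m]]
  refine (Finset.sum_subset ?_ ?_).symm
  · intro m hm
    have hle : m 0 + m 1 ≤ D := by
      have := MvPolynomial.le_totalDegree hm
      have h2 : (m.sum fun _ e => e) = m 0 + m 1 := by
        rw [Finsupp.sum_fintype _ _ (fun _ => rfl), Fin.sum_univ_two]
      omega
    refine Finset.mem_image.2 ⟨⟨(m 0, m 1), hle⟩, Finset.mem_univ _, ?_⟩
    exact single_decomp m
  · intro m _ hm
    rw [MvPolynomial.notMem_support_iff.mp hm, zero_mul]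

end S6Aux

namespace S6Aux

open MeasureTheory

lemma integrable_dirac_cont (f : ℝ × ℝ → ℝ) (hf : Continuous f) (z : ℝ × ℝ) :
    Integrable f (Measure.dirac z) := by
  refine ⟨hf.aestronglyMeasurable, ?_⟩
  rw [HasFiniteIntegral, MeasureTheory.lintegral_dirac]
  exact ENNReal.coe_lt_top

lemma momentsOf_eq {d : ℕ} (x y : Fin d → ℝ) (ρ : Fin d → Fin d → ℝ)
    (hρ : ∀ i j, 0 ≤ ρ i j) (a b : ℕ) :
    momentsOf (∑ i : Fin d, ∑ j : Fin d,
        ENNReal.ofReal (ρ i j) • Measure.dirac ((x i, y j) : ℝ × ℝ)) a b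
      = ∑ i, ∑ j, ρ i j * ((x i) ^ a * (y j) ^ b) := by
  have hf : Continuous fun z : ℝ × ℝ => z.1 ^ a * z.2 ^ b := by fun_prop
  have hint : ∀ (i j : Fin d), Integrable (fun z : ℝ × ℝ => z.1 ^ a * z.2 ^ b)
      (ENNReal.ofReal (ρ i j) • Measure.dirac ((x i, y j) : ℝ × ℝ)) :=
    fun i j => (integrable_dirac_cont _ hf _).smul_measure ENNReal.ofReal_ne_top
  simp only [momentsOf]
  rw [MeasureTheory.integral_finset_sum_measure (fun i _ =>
    MeasureTheory.integrable_finset_sum_measure.2 fun j _ => hint i j)]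
  refine Finset.sum_congr rfl fun i _ => ?_
  rw [MeasureTheory.integral_finset_sum_measure (fun j _ => hint i j)]
  refine Finset.sum_congr rfl fun j _ => ?_
  rw [MeasureTheory.integral_smul_measure, MeasureTheory.integral_dirac,
    ENNReal.toReal_ofReal (hρ i j), smul_eq_mul]

end S6Aux

/-- For the finitely atomic measure `μ` with support exactly the grid
`{(x_i, y_j)}`, and `P = ∏ (x - x_i)`, `Q = ∏ (y - y_j)`: for every `k ≥ 0` and every
`r` of degree ≤ d+k, the coefficient vector of `r` lies in `ker M_{d+k}[μ]` iff
`r = uP + vQ` with `deg u, deg v ≤ k`. -/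
theorem statement6 (d : ℕ) (hd : 1 ≤ d) (x y : Fin d → ℝ)
    (hx : Function.Injective x) (hy : Function.Injective y)
    (ρ : Fin d → Fin d → ℝ) (hρ : ∀ i j, 0 < ρ i j)
    (μ : Measure (ℝ × ℝ))
    (hμ : μ = ∑ i : Fin d, ∑ j : Fin d,
      ENNReal.ofReal (ρ i j) • Measure.dirac ((x i, y j) : ℝ × ℝ))
    (P Q : MvPolynomial (Fin 2) ℝ)
    (hP : P = ∏ i : Fin d, (MvPolynomial.X 0 - MvPolynomial.C (x i)))
    (hQ : Q = ∏ j : Fin d, (MvPolynomial.X 1 - MvPolynomial.C (y j)))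
    (k : ℕ) (r : MvPolynomial (Fin 2) ℝ) (hr : r.totalDegree ≤ d + k) :
    momentMatrix (d + k) (momentsOf μ) *ᵥ mvCoeffVec (d + k) r = 0 ↔
      ∃ u v : MvPolynomial (Fin 2) ℝ,
        u.totalDegree ≤ k ∧ v.totalDegree ≤ k ∧ r = u * P + v * Q := by
  classical
  have hρ' : ∀ i j, (0:ℝ) ≤ ρ i j := fun i j => (hρ i j).le
  have hmom : ∀ a b : ℕ, momentsOf μ a b = ∑ i, ∑ j, ρ i j * ((x i) ^ a * (y j) ^ b) := by
    intro a b
    rw [hμ]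
    exact S6Aux.momentsOf_eq x y ρ hρ' a b
  have hA1 : ∀ a b : ℝ,
      (∑ c : Idx (d + k), mvCoeffVec (d + k) r c * (a ^ (c.1.1) * b ^ (c.1.2)))
        = MvPolynomial.eval (Fin.cons a fun _ => b) r :=
    fun a b => S6Aux.sum_idx_eq_eval hr a b
  have hentry : ∀ w : Idx (d + k),
      (momentMatrix (d + k) (momentsOf μ) *ᵥ mvCoeffVec (d + k) r) w
        = ∑ i, ∑ j, ρ i j * ((x i) ^ (w.1.1) * (y j) ^ (w.1.2)) *
            MvPolynomial.eval (Fin.cons (x i) fun _ => y j) r := by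
    intro w
    simp only [Matrix.mulVec, dotProduct, momentMatrix, Matrix.of_apply]
    calc (∑ c : Idx (d + k), momentsOf μ (w.1.1 + c.1.1) (w.1.2 + c.1.2) * mvCoeffVec (d + k) r c)
        = ∑ c : Idx (d + k), ∑ i, ∑ j, ρ i j * ((x i) ^ (w.1.1) * (y j) ^ (w.1.2)) *
            (mvCoeffVec (d + k) r c * ((x i) ^ (c.1.1) * (y j) ^ (c.1.2))) := by
          refine Finset.sum_congr rfl fun c _ => ?_
          rw [hmom, Finset.sum_mul]
          refine Finset.sum_congr rfl fun i _ => ?_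
          rw [Finset.sum_mul]
          refine Finset.sum_congr rfl fun j _ => ?_
          rw [pow_add, pow_add]
          ring
      _ = ∑ i, ∑ j, ∑ c : Idx (d + k), ρ i j * ((x i) ^ (w.1.1) * (y j) ^ (w.1.2)) *
            (mvCoeffVec (d + k) r c * ((x i) ^ (c.1.1) * (y j) ^ (c.1.2))) := by
          rw [Finset.sum_comm]
          exact Finset.sum_congr rfl fun i _ => Finset.sum_comm
      _ = _ := by
          refine Finset.sum_congr rfl fun i _ => Finset.sum_congr rfl fun j _ => ?_
          rw [← Finset.mul_sum, hA1 (x i) (y j)]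
  have hker : (momentMatrix (d + k) (momentsOf μ) *ᵥ mvCoeffVec (d + k) r = 0)
      ↔ ∀ i j, MvPolynomial.eval (Fin.cons (x i) fun _ => y j) r = 0 := by
    constructor
    · intro h i j
      have hT : ∑ w : Idx (d + k), mvCoeffVec (d + k) r w *
          ((momentMatrix (d + k) (momentsOf μ) *ᵥ mvCoeffVec (d + k) r) w) = 0 := by
        rw [h]
        simp
      have hTeq : ∑ w : Idx (d + k), mvCoeffVec (d + k) r w *
          ((momentMatrix (d + k) (momentsOf μ) *ᵥ mvCoeffVec (d + k) r) w)
            = ∑ i, ∑ j, ρ i j * (MvPolynomial.eval (Fin.cons (x i) fun _ => y j) r) ^ 2 := by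
        calc ∑ w : Idx (d + k), mvCoeffVec (d + k) r w *
            ((momentMatrix (d + k) (momentsOf μ) *ᵥ mvCoeffVec (d + k) r) w)
            = ∑ w : Idx (d + k), ∑ i, ∑ j, ρ i j *
                (MvPolynomial.eval (Fin.cons (x i) fun _ => y j) r) *
                (mvCoeffVec (d + k) r w * ((x i) ^ (w.1.1) * (y j) ^ (w.1.2))) := by
              refine Finset.sum_congr rfl fun w _ => ?_
              rw [hentry w, Finset.mul_sum]
              refine Finset.sum_congr rfl fun i _ => ?_
              rw [Finset.mul_sum]
              refine Finset.sum_congr rfl fun j _ => ?_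
              ring
          _ = ∑ i, ∑ j, ∑ w : Idx (d + k), ρ i j *
                (MvPolynomial.eval (Fin.cons (x i) fun _ => y j) r) *
                (mvCoeffVec (d + k) r w * ((x i) ^ (w.1.1) * (y j) ^ (w.1.2))) := by
              rw [Finset.sum_comm]
              exact Finset.sum_congr rfl fun i _ => Finset.sum_comm
          _ = _ := by
              refine Finset.sum_congr rfl fun i _ => Finset.sum_congr rfl fun j _ => ?_
              rw [← Finset.mul_sum, hA1 (x i) (y j)]
              ring
      rw [hTeq] at hT
      have hnn : ∀ i ∈ Finset.univ (α := Fin d), (0:ℝ) ≤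
          ∑ j, ρ i j * (MvPolynomial.eval (Fin.cons (x i) fun _ => y j) r) ^ 2 :=
        fun i _ => Finset.sum_nonneg fun j _ => mul_nonneg (hρ' i j) (sq_nonneg _)
      have h1 := (Finset.sum_eq_zero_iff_of_nonneg hnn).1 hT i (Finset.mem_univ i)
      have h2 := (Finset.sum_eq_zero_iff_of_nonneg
        (fun j _ => mul_nonneg (hρ' i j) (sq_nonneg _))).1 h1 j (Finset.mem_univ j)
      have h3 : (MvPolynomial.eval (Fin.cons (x i) fun _ => y j) r) ^ 2 = 0 := by
        rcases mul_eq_zero.mp h2 with h | h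
        · exact absurd h (ne_of_gt (hρ i j))
        · exact h
      exact (pow_eq_zero_iff (by norm_num : (2:ℕ) ≠ 0)).mp h3
    · intro h
      funext w
      rw [hentry w]
      rw [Pi.zero_apply]
      exact Finset.sum_eq_zero fun i _ => Finset.sum_eq_zero fun j _ => by
        rw [h i j, mul_zero]
  rw [hker]
  constructor
  · -- hard direction
    intro hvan
    set Pr : Polynomial ℝ := ∏ i, (Polynomial.X - Polynomial.C (x i)) with hPr
    set Pc : Polynomial S6Aux.Amv := Pr.map MvPolynomial.C with hPc
    have hPrm : Pr.Monic :=
      Polynomial.monic_prod_of_monic _ _ fun i _ => Polynomial.monic_X_sub_C _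
    have hPcm : Pc.Monic := hPrm.map _
    have hPrd : Pr.natDegree = d := by
      rw [hPr, Polynomial.natDegree_prod _ _ fun i _ => Polynomial.X_sub_C_ne_zero _]
      simp
    have hPcd : Pc.natDegree = d := by rw [hPc, hPrm.natDegree_map, hPrd]
    have hP0 : ∀ b, (Pc.coeff b).totalDegree = 0 := fun b => by
      rw [hPc, Polynomial.coeff_map]
      exact MvPolynomial.totalDegree_C _
    have hFP : MvPolynomial.finSuccEquiv ℝ 1 P = Pc := by
      rw [hP, _root_.map_prod, hPc, hPr, Polynomial.map_prod]
      refine Finset.prod_congr rfl fun i _ => ?_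
      rw [_root_.map_sub, MvPolynomial.finSuccEquiv_X_zero, Polynomial.map_sub,
        Polynomial.map_X, Polynomial.map_C]
      congr 1
      simp [MvPolynomial.finSuccEquiv_apply]
    set Qa : S6Aux.Amv := ∏ j, (MvPolynomial.X 0 - MvPolynomial.C (y j)) with hQa
    have hFQ : MvPolynomial.finSuccEquiv ℝ 1 Q = Polynomial.C Qa := by
      rw [hQ, _root_.map_prod, hQa, map_prod (Polynomial.C : S6Aux.Amv →+* _)]
      refine Finset.prod_congr rfl fun j _ => ?_
      rw [_root_.map_sub, _root_.map_sub]
      congr 1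
      · rw [show (1 : Fin 2) = Fin.succ 0 from (Fin.succ_zero_eq_one).symm,
          MvPolynomial.finSuccEquiv_X_succ]
      · simp [MvPolynomial.finSuccEquiv_apply]
    have hdwt : S6Aux.Dwt (d + k) (MvPolynomial.finSuccEquiv ℝ 1 r) :=
      S6Aux.dwt_of_totalDegree_le hr
    obtain ⟨u', s, hdecomp, hsd, hu', hs⟩ :=
      S6Aux.div_P (d := d) (D := d + k) hd hPcm hPcd hP0
        ((MvPolynomial.finSuccEquiv ℝ 1 r).natDegree + 1) _ (Nat.lt_succ_self _) hdwt
    have hDd : d + k - d = k := by omega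
    rw [hDd] at hu'
    have hsj : ∀ (j : Fin d) (a : ℕ),
        MvPolynomial.eval (fun _ : Fin 1 => y j) (s.coeff a) = 0 := by
      intro j
      have hmap : Polynomial.map (MvPolynomial.eval fun _ : Fin 1 => y j) s = 0 := by
        apply Polynomial.eq_zero_of_natDegree_lt_card_of_eval_eq_zero _ hx
        · intro i
          have hev := hvan i j
          rw [MvPolynomial.eval_eq_eval_mv_eval'] at hev
          rw [hdecomp, Polynomial.map_add, Polynomial.map_mul] at hev
          have hPr0 : Polynomial.map (MvPolynomial.eval fun _ : Fin 1 => y j) Pc = Pr := by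
            rw [hPc, Polynomial.map_map]
            have hcomp : (MvPolynomial.eval (fun _ : Fin 1 => y j) : S6Aux.Amv →+* ℝ).comp
                MvPolynomial.C = RingHom.id ℝ :=
              RingHom.ext fun z => MvPolynomial.eval_C z
            rw [hcomp, Polynomial.map_id]
          rw [hPr0] at hev
          have hPrz : Pr.eval (x i) = 0 := by
            rw [hPr, Polynomial.eval_prod]
            exact Finset.prod_eq_zero (Finset.mem_univ i) (by simp)
          rw [Polynomial.eval_add, Polynomial.eval_mul, hPrz, mul_zero, zero_add] at hev
          exact hev
        · refine lt_of_le_of_lt Polynomial.natDegree_map_le ?_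
          rw [Fintype.card_fin]
          exact hsd
      intro a
      have := congrArg (fun q => Polynomial.coeff q a) hmap
      simpa [Polynomial.coeff_map] using this
    choose w hw1 hw2 using fun a => S6Aux.coeff_divide hy (s.coeff a) (fun j => hsj j a)
    set v'' : Polynomial S6Aux.Amv := ∑ a ∈ Finset.range d, Polynomial.monomial a (w a)
      with hv''def
    have htQ : S6Aux.toUni Qa = ∏ j, (Polynomial.X - Polynomial.C (y j)) := by
      rw [hQa, _root_.map_prod]
      refine Finset.prod_congr rfl fun j _ => ?_
      simp [S6Aux.toUni]
    have hQane : Qa ≠ 0 := by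
      intro h0
      rw [h0, _root_.map_zero] at htQ
      exact (Polynomial.monic_prod_of_monic _ _
        fun j _ => Polynomial.monic_X_sub_C (y j)).ne_zero htQ.symm
    have hcoeffv : ∀ bb, v''.coeff bb = if bb < d then w bb else 0 := by
      intro bb
      rw [hv''def, Polynomial.finset_sum_coeff]
      simp only [Polynomial.coeff_monomial]
      rw [Finset.sum_ite_eq' (Finset.range d) bb w]
      by_cases h : bb < d
      · rw [if_pos (Finset.mem_range.mpr h), if_pos h]
      · rw [if_neg (fun hc => h (Finset.mem_range.mp hc)), if_neg h]
    have hsv : s = Polynomial.C Qa * v'' := by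
      ext bb : 1
      rw [Polynomial.coeff_C_mul, hcoeffv]
      by_cases hbb : bb < d
      · rw [if_pos hbb, ← hw1 bb]
      · rw [if_neg hbb, mul_zero, Polynomial.coeff_eq_zero_of_natDegree_lt (by omega)]
    have hv''dwt : S6Aux.Dwt k v'' := by
      intro bb hbb
      rw [hcoeffv] at hbb ⊢
      by_cases h1 : bb < d
      · rw [if_pos h1] at hbb ⊢
        have hsb : s.coeff bb ≠ 0 := by
          rw [hw1 bb]
          exact mul_ne_zero hQane hbb
        have h2 := hw2 bb hsb
        have h3 := hs bb hsb
        omega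
      · rw [if_neg h1] at hbb
        exact absurd rfl hbb
    refine ⟨(MvPolynomial.finSuccEquiv ℝ 1).symm u', (MvPolynomial.finSuccEquiv ℝ 1).symm v'',
      ?_, ?_, ?_⟩
    · apply S6Aux.totalDegree_le_of_dwt
      rw [AlgEquiv.apply_symm_apply]
      exact hu'
    · apply S6Aux.totalDegree_le_of_dwt
      rw [AlgEquiv.apply_symm_apply]
      exact hv''dwt
    · apply (MvPolynomial.finSuccEquiv ℝ 1).injective
      rw [_root_.map_add, _root_.map_mul, _root_.map_mul, AlgEquiv.apply_symm_apply, AlgEquiv.apply_symm_apply,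
        hFP, hFQ, hdecomp, hsv]
      ring
  · rintro ⟨u, v, hu, hv, rfl⟩ i j
    have hPz : MvPolynomial.eval (Fin.cons (x i) fun _ => y j) P = 0 := by
      rw [hP, _root_.map_prod]
      refine Finset.prod_eq_zero (Finset.mem_univ i) ?_
      rw [_root_.map_sub, MvPolynomial.eval_X, MvPolynomial.eval_C, Fin.cons_zero, sub_self]
    have hQz : MvPolynomial.eval (Fin.cons (x i) fun _ => y j) Q = 0 := by
      rw [hQ, _root_.map_prod]
      refine Finset.prod_eq_zero (Finset.mem_univ j) ?_
      rw [_root_.map_sub, MvPolynomial.eval_X, MvPolynomial.eval_C]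
      rw [show (1 : Fin 2) = Fin.succ 0 from (Fin.succ_zero_eq_one).symm, Fin.cons_succ,
        sub_self]
    rw [_root_.map_add, _root_.map_mul, _root_.map_mul, hPz, hQz, mul_zero, mul_zero, add_zero]
end
end
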